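/- arXiv:1007.1679 — 5 statements merged into one kernel-verified Lean document; each statement's English description precedes it below -/
import Mathlib

section
/- Let a < b be real numbers, n ≥ 1, H : ℝⁿ → ℝ be continuously differentiable with partial derivatives H'_1, …, H'_n, and for i = 1, …, n let f_i : [a,b] × ℝ × ℝ → ℝ, (t,y,v) ↦ f_i(t,y,v), be continuous with continuous partial derivatives f_{iy} and f_{iv} with respect to y and v. Suppose x̃ : [a,b] → ℝ is C¹ with x̃(a) = x_a and x̃(b) = x_b, that for each i the map t ↦ f_{iv}(t, x̃(t), x̃'(t)) is differentiable on [a,b], and that x̃ is a weak local extremizer of L[x] = H(F_1[x], …, F_n[x]) among admissible functions: there exists δ > 0 such that L[x̃] ≤ L[x] for every C¹ function x : [a,b] → ℝ with x(a) = x_a, x(b) = x_b and ‖x − x̃‖₁ < δ (or L[x̃] ≥ L[x] for all such x). Then the Euler–Lagrange equation ∑_{i=1}^{n} H'_i(F_1[x̃], …, F_n[x̃]) · ( f_{iy}(t, x̃(t), x̃'(t)) − (d/dt) f_{iv}(t, x̃(t), x̃'(t)) ) = 0 holds for all t ∈ [a,b]. -/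
/-- The C¹-norm ‖x‖₁ = sup_{t∈[a,b]} |x(t)| + sup_{t∈[a,b]} |x'(t)|. -/
noncomputable def C1Norm (a b : ℝ) (x : ℝ → ℝ) : ℝ :=
  (⨆ t : Set.Icc a b, |x t|) + (⨆ t : Set.Icc a b, |derivWithin x (Set.Icc a b) t|)


open Set Filter intervalIntegral MeasureTheory Topology


private lemma hasDerivAt_line {g gy gv : ℝ → ℝ → ℝ}
    (hy : ∀ y v, HasDerivAt (fun y' => g y' v) (gy y v) y)
    (hv : ∀ y v, HasDerivAt (fun v' => g y v') (gv y v) v)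
    (hgyc : Continuous fun p : ℝ × ℝ => gy p.1 p.2)
    (y0 v0 p q ε₀ : ℝ) :
    HasDerivAt (fun ε => g (y0 + ε * p) (v0 + ε * q))
      (p * gy (y0 + ε₀ * p) (v0 + ε₀ * q) + q * gv (y0 + ε₀ * p) (v0 + ε₀ * q)) ε₀ := by
  set Y := y0 + ε₀ * p with hY
  set V := v0 + ε₀ * q with hV
  have huder : ∀ ε u : ℝ, HasDerivAt (fun u' => g (y0 + u' * p) (v0 + ε * q))
      (p * gy (y0 + u * p) (v0 + ε * q)) u := by
    intro ε u
    have hl : HasDerivAt (fun u' : ℝ => y0 + u' * p) p u := by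
      simpa using ((hasDerivAt_id u).mul_const p).const_add y0
    simpa [mul_comm, Function.comp_def] using (hy (y0 + u * p) (v0 + ε * q)).comp u hl
  have h2d : HasDerivAt (fun ε => g Y (v0 + ε * q)) (q * gv Y V) ε₀ := by
    have hl : HasDerivAt (fun ε : ℝ => v0 + ε * q) q ε₀ := by
      simpa using ((hasDerivAt_id ε₀).mul_const q).const_add v0
    simpa [mul_comm, hV, Function.comp_def] using (hv Y V).comp ε₀ hl
  rw [hasDerivAt_iff_tendsto_slope]
  have h2slope : Tendsto (slope (fun ε => g Y (v0 + ε * q)) ε₀) (𝓝[≠] ε₀) (𝓝 (q * gv Y V)) :=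
    hasDerivAt_iff_tendsto_slope.1 h2d
  have h1 : Tendsto (fun ε => (g (y0 + ε * p) (v0 + ε * q) - g Y (v0 + ε * q)) / (ε - ε₀))
      (𝓝[≠] ε₀) (𝓝 (p * gy Y V)) := by
    rw [Metric.tendsto_nhdsWithin_nhds]
    intro e he
    obtain ⟨d1, hd1, hball⟩ :=
      Metric.continuousAt_iff.1 (hgyc.continuousAt (x := ((Y, V) : ℝ × ℝ)))
        (e / (|p| + 1)) (by positivity)
    refine ⟨d1 / (|p| + |q| + 1), by positivity, ?_⟩
    intro ε hne hd
    have hne' : ε ≠ ε₀ := hne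
    obtain ⟨ξ, hξmem, hξ⟩ : ∃ ξ, |ξ - ε₀| ≤ |ε - ε₀| ∧
        p * gy (y0 + ξ * p) (v0 + ε * q) =
          (g (y0 + ε * p) (v0 + ε * q) - g Y (v0 + ε * q)) / (ε - ε₀) := by
      rcases hne'.lt_or_gt with hlt | hgt
      · obtain ⟨ξ, hmem, heq⟩ := exists_hasDerivAt_eq_slope
          (fun u' => g (y0 + u' * p) (v0 + ε * q))
          (fun u' => p * gy (y0 + u' * p) (v0 + ε * q)) hlt
          (fun u _ => (huder ε u).continuousAt.continuousWithinAt)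
          (fun u _ => huder ε u)
        refine ⟨ξ, ?_, ?_⟩
        · rw [abs_sub_comm ξ ε₀, abs_sub_comm ε ε₀, abs_of_pos (by linarith [hmem.1, hmem.2]),
            abs_of_pos (by linarith [hmem.1, hmem.2])]
          linarith [hmem.1, hmem.2]
        · rw [heq, hY]
          rw [show (ε - ε₀ : ℝ) = -(ε₀ - ε) by ring, div_neg, ← neg_div, neg_sub]
      · obtain ⟨ξ, hmem, heq⟩ := exists_hasDerivAt_eq_slope
          (fun u' => g (y0 + u' * p) (v0 + ε * q))
          (fun u' => p * gy (y0 + u' * p) (v0 + ε * q)) hgt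
          (fun u _ => (huder ε u).continuousAt.continuousWithinAt)
          (fun u _ => huder ε u)
        refine ⟨ξ, ?_, ?_⟩
        · rw [abs_of_pos (by linarith [hmem.1, hmem.2]), abs_of_pos (by linarith [hmem.1, hmem.2])]
          linarith [hmem.1, hmem.2]
        · rw [heq, hY]
    rw [← hξ]
    have hdeps : |ε - ε₀| < d1 / (|p| + |q| + 1) := by
      simpa [Real.dist_eq] using hd
    have hmulkey : |ε - ε₀| * (|p| + |q| + 1) < d1 := by
      calc |ε - ε₀| * (|p| + |q| + 1)
          < (d1 / (|p| + |q| + 1)) * (|p| + |q| + 1) :=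
            mul_lt_mul_of_pos_right hdeps (by positivity)
        _ = d1 := by field_simp
    have hdist : dist ((y0 + ξ * p, v0 + ε * q) : ℝ × ℝ) ((Y, V) : ℝ × ℝ) < d1 := by
      rw [Prod.dist_eq]
      apply max_lt
      · have e1 : (y0 + ξ * p) - Y = (ξ - ε₀) * p := by rw [hY]; ring
        rw [Real.dist_eq, e1, abs_mul]
        have h1' : |ξ - ε₀| * |p| ≤ |ε - ε₀| * |p| :=
          mul_le_mul_of_nonneg_right hξmem (abs_nonneg p)
        have h2' : |ε - ε₀| * |p| ≤ |ε - ε₀| * (|p| + |q| + 1) :=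
          mul_le_mul_of_nonneg_left (by linarith [abs_nonneg q]) (abs_nonneg _)
        linarith
      · have e1 : (v0 + ε * q) - V = (ε - ε₀) * q := by rw [hV]; ring
        rw [Real.dist_eq, e1, abs_mul]
        have h2' : |ε - ε₀| * |q| ≤ |ε - ε₀| * (|p| + |q| + 1) :=
          mul_le_mul_of_nonneg_left (by linarith [abs_nonneg p]) (abs_nonneg _)
        linarith
    have hcl := hball hdist
    simp only [Real.dist_eq] at hcl ⊢
    rw [show p * gy (y0 + ξ * p) (v0 + ε * q) - p * gy Y V
        = p * (gy (y0 + ξ * p) (v0 + ε * q) - gy Y V) by ring, abs_mul]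
    calc |p| * |gy (y0 + ξ * p) (v0 + ε * q) - gy Y V|
        ≤ (|p| + 1) * |gy (y0 + ξ * p) (v0 + ε * q) - gy Y V| :=
          mul_le_mul_of_nonneg_right (by linarith [abs_nonneg p]) (abs_nonneg _)
      _ < (|p| + 1) * (e / (|p| + 1)) := mul_lt_mul_of_pos_left hcl (by positivity)
      _ = e := by field_simp
  refine Tendsto.congr' ?_ (h1.add h2slope)
  filter_upwards [self_mem_nhdsWithin] with ε (hε : ε ≠ ε₀)
  have hsub : ε - ε₀ ≠ 0 := sub_ne_zero.2 hε
  rw [slope_def_field, slope_def_field, ← add_div]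
  simp only [hY, hV]
  ring_nf


private lemma ftc_within {a b : ℝ} (hab : a ≤ b) {g : ℝ → ℝ}
    (hg : ContinuousOn g (Set.Icc a b)) {t : ℝ} (ht : t ∈ Set.Icc a b) :
    HasDerivWithinAt (fun u => ∫ s in a..u, g s) (g t) (Set.Icc a b) t := by
  haveI : Fact (t ∈ Set.Icc a b) := ⟨ht⟩
  have hint : IntervalIntegrable g MeasureTheory.volume a t := by
    apply ContinuousOn.intervalIntegrable
    rw [Set.uIcc_of_le ht.1]
    exact hg.mono (Set.Icc_subset_Icc le_rfl ht.2)
  exact intervalIntegral.integral_hasDerivWithinAt_right hint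
    (hg.stronglyMeasurableAtFilter_nhdsWithin measurableSet_Icc t)
    (hg t ht)

private lemma eq_zero_of_integral_nonneg_zero {a b : ℝ} (hab : a < b) {h : ℝ → ℝ}
    (hc : ContinuousOn h (Set.Icc a b)) (hnn : ∀ t ∈ Set.Icc a b, 0 ≤ h t)
    (hint : (∫ t in a..b, h t) = 0) : ∀ t ∈ Set.Icc a b, h t = 0 := by
  by_contra hcon
  push_neg at hcon
  obtain ⟨t0, ht0, ht0ne⟩ := hcon
  have ht0pos : 0 < h t0 := lt_of_le_of_ne (hnn t0 ht0) (Ne.symm ht0ne)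
  -- find an interior point where h is large
  have hne : t0 ∈ closure (Set.Ioo a b) := by
    rw [closure_Ioo hab.ne]; exact ht0
  haveI : (𝓝[Set.Ioo a b] t0).NeBot := mem_closure_iff_nhdsWithin_neBot.1 hne
  have hev : ∀ᶠ u in 𝓝[Set.Ioo a b] t0, h t0 / 2 < h u := by
    have : ∀ᶠ u in 𝓝[Set.Icc a b] t0, h t0 / 2 < h u :=
      (hc t0 ht0).eventually (eventually_gt_nhds (by linarith))
    exact this.filter_mono (nhdsWithin_mono _ Set.Ioo_subset_Icc_self)
  obtain ⟨t1, ht1big, ht1⟩ := (hev.and (eventually_mem_nhdsWithin)).exists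
  have ht1pos : 0 < h t1 := by linarith
  -- find an interval around t1 where h is positive
  have hev2 : {u | 0 < h u} ∩ Set.Ioo a b ∈ 𝓝 t1 := by
    have h1 : {u | 0 < h u} ∈ 𝓝 t1 := by
      have : ∀ᶠ u in 𝓝[Set.Icc a b] t1, 0 < h u :=
        (hc t1 (Set.Ioo_subset_Icc_self ht1)).eventually (eventually_gt_nhds ht1pos)
      rwa [nhdsWithin_eq_nhds.2 (Icc_mem_nhds ht1.1 ht1.2)] at this
    exact Filter.inter_mem h1 (Ioo_mem_nhds ht1.1 ht1.2)
  obtain ⟨l, u, hmem, hsub⟩ := mem_nhds_iff_exists_Ioo_subset.1 hev2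
  set c := max a l
  set d := min b u
  have hcd : c < d := lt_trans (max_lt ht1.1 hmem.1) (lt_min ht1.2 hmem.2)
  have hac : a ≤ c := le_max_left _ _
  have hdb : d ≤ b := min_le_left _ _
  have hcb : c ≤ b := le_trans hcd.le hdb
  have had : a ≤ d := le_trans hac hcd.le
  have hposIoo : ∀ x ∈ Set.Ioo c d, 0 < h x := fun x hx =>
    (hsub ⟨lt_of_le_of_lt (le_max_right a l) hx.1, lt_of_lt_of_le hx.2 (min_le_right b u)⟩).1
  have hii : ∀ {x y : ℝ}, a ≤ x → x ≤ y → y ≤ b → IntervalIntegrable h MeasureTheory.volume x y := by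
    intro x y h1 h2 h3
    apply ContinuousOn.intervalIntegrable
    rw [Set.uIcc_of_le h2]
    exact hc.mono (Set.Icc_subset_Icc h1 h3)
  have hint_ac := hii le_rfl hac hcb
  have hint_cd := hii hac hcd.le hdb
  have hint_db := hii had hdb le_rfl
  have hsplit : (∫ t in a..b, h t) = (∫ t in a..c, h t) + ((∫ t in c..d, h t) + ∫ t in d..b, h t) := by
    rw [intervalIntegral.integral_add_adjacent_intervals hint_cd hint_db,
      intervalIntegral.integral_add_adjacent_intervals hint_ac (hii hac hcb le_rfl)]
  have hpos : 0 < ∫ t in c..d, h t := intervalIntegral_pos_of_pos_on hint_cd hposIoo hcd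
  have hnn1 : 0 ≤ ∫ t in a..c, h t :=
    intervalIntegral.integral_nonneg hac (fun u hu => hnn u ⟨hu.1, le_trans hu.2 hcb⟩)
  have hnn2 : 0 ≤ ∫ t in d..b, h t :=
    intervalIntegral.integral_nonneg hdb (fun u hu => hnn u ⟨le_trans had hu.1, hu.2⟩)
  rw [hint] at hsplit
  linarith

/-- Euler–Lagrange equation for the composite functional
`L[x] = H(F₁[x], …, F_n[x])` with both endpoints fixed. -/
theorem composite_euler_lagrange
    (a b : ℝ) (hab : a < b) (n : ℕ) (hn : 1 ≤ n)
    (H : (Fin n → ℝ) → ℝ) (hH : ContDiff ℝ 1 H)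
    (f fy fv : Fin n → ℝ → ℝ → ℝ → ℝ)
    (hf_cont : ∀ i, ContinuousOn (fun p : ℝ × ℝ × ℝ => f i p.1 p.2.1 p.2.2)
      (Set.Icc a b ×ˢ (Set.univ : Set ℝ) ×ˢ (Set.univ : Set ℝ)))
    (hfy : ∀ i, ∀ t ∈ Set.Icc a b, ∀ y v : ℝ,
      HasDerivAt (fun y' => f i t y' v) (fy i t y v) y)
    (hfv : ∀ i, ∀ t ∈ Set.Icc a b, ∀ y v : ℝ,
      HasDerivAt (fun v' => f i t y v') (fv i t y v) v)
    (hfy_cont : ∀ i, ContinuousOn (fun p : ℝ × ℝ × ℝ => fy i p.1 p.2.1 p.2.2)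
      (Set.Icc a b ×ˢ (Set.univ : Set ℝ) ×ˢ (Set.univ : Set ℝ)))
    (hfv_cont : ∀ i, ContinuousOn (fun p : ℝ × ℝ × ℝ => fv i p.1 p.2.1 p.2.2)
      (Set.Icc a b ×ˢ (Set.univ : Set ℝ) ×ˢ (Set.univ : Set ℝ)))
    (xa xb : ℝ) (xE : ℝ → ℝ)
    (hxE : ContDiffOn ℝ 1 xE (Set.Icc a b))
    (hxEa : xE a = xa) (hxEb : xE b = xb)
    (hdiff : ∀ i, ∀ t ∈ Set.Icc a b,
      DifferentiableWithinAt ℝ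
        (fun s => fv i s (xE s) (derivWithin xE (Set.Icc a b) s)) (Set.Icc a b) t)
    (F : (ℝ → ℝ) → Fin n → ℝ)
    (hF : ∀ x i, F x i = ∫ t in a..b, f i t (x t) (derivWithin x (Set.Icc a b) t))
    (L : (ℝ → ℝ) → ℝ)
    (hL : ∀ x, L x = H (F x))
    (hext :
      (∃ δ > 0, ∀ x : ℝ → ℝ, ContDiffOn ℝ 1 x (Set.Icc a b) →
        x a = xa → x b = xb → C1Norm a b (fun t => x t - xE t) < δ → L xE ≤ L x) ∨
      (∃ δ > 0, ∀ x : ℝ → ℝ, ContDiffOn ℝ 1 x (Set.Icc a b) →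
        x a = xa → x b = xb → C1Norm a b (fun t => x t - xE t) < δ → L x ≤ L xE)) :
    ∀ t ∈ Set.Icc a b,
      ∑ i, fderiv ℝ H (F xE) (Pi.single i 1) *
        (fy i t (xE t) (derivWithin xE (Set.Icc a b) t) -
          derivWithin (fun s => fv i s (xE s) (derivWithin xE (Set.Icc a b) s))
            (Set.Icc a b) t) = 0 := by
  
  intro t₀ ht₀
  have hab' : a ≤ b := hab.le
  set I : Set ℝ := Set.Icc a b with hI
  have huniq : UniqueDiffOn ℝ I := uniqueDiffOn_Icc hab
  haveI : Nonempty I := Set.nonempty_Icc_subtype hab'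
  have haI : a ∈ I := Set.left_mem_Icc.2 hab'
  have hbI : b ∈ I := Set.right_mem_Icc.2 hab'
  set v : ℝ → ℝ := derivWithin xE I with hv
  have hxEc : ContinuousOn xE I := hxE.continuousOn
  have hxEd : DifferentiableOn ℝ xE I := hxE.differentiableOn one_ne_zero
  have hvc : ContinuousOn v I := hxE.continuousOn_derivWithin huniq le_rfl
  set c : Fin n → ℝ := fun i => fderiv ℝ H (F xE) (Pi.single i 1) with hc
  set P : Fin n → ℝ → ℝ := fun i t => fy i t (xE t) (v t) with hP
  set Q : Fin n → ℝ → ℝ := fun i t => fv i t (xE t) (v t) with hQ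
  have hΦ : ContinuousOn (fun t => ((t, xE t, v t) : ℝ × ℝ × ℝ)) I :=
    continuousOn_id.prodMk (hxEc.prodMk hvc)
  have hmapsΦ : Set.MapsTo (fun t => ((t, xE t, v t) : ℝ × ℝ × ℝ)) I
      (I ×ˢ (Set.univ : Set ℝ) ×ˢ (Set.univ : Set ℝ)) :=
    fun t ht => ⟨ht, trivial, trivial⟩
  have hPc : ∀ i, ContinuousOn (P i) I := fun i => (hfy_cont i).comp hΦ hmapsΦ
  have hQc : ∀ i, ContinuousOn (Q i) I := fun i => (hfv_cont i).comp hΦ hmapsΦ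
  set gy : ℝ → ℝ := fun t => ∑ i, c i * P i t with hgy
  set gv : ℝ → ℝ := fun t => ∑ i, c i * Q i t with hgv
  have hgyc : ContinuousOn gy I :=
    continuousOn_finset_sum _ (fun i _ => continuousOn_const.mul (hPc i))
  have hgvc : ContinuousOn gv I :=
    continuousOn_finset_sum _ (fun i _ => continuousOn_const.mul (hQc i))
  have hii : ∀ {h : ℝ → ℝ}, ContinuousOn h I → IntervalIntegrable h MeasureTheory.volume a b := by
    intro h hcont
    apply ContinuousOn.intervalIntegrable
    rwa [Set.uIcc_of_le hab', ← hI]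
  -- ### Step 1: first variation vanishes
  have key : ∀ η : ℝ → ℝ, ContDiffOn ℝ 1 η I → η a = 0 → η b = 0 →
      (∫ t in a..b, (gy t * η t + gv t * derivWithin η I t)) = 0 := by
    intro η hη hηa hηb
    set w : ℝ → ℝ := derivWithin η I with hw
    have hηc : ContinuousOn η I := hη.continuousOn
    have hηd : DifferentiableOn ℝ η I := hη.differentiableOn one_ne_zero
    have hwc : ContinuousOn w I := hη.continuousOn_derivWithin huniq le_rfl
    have hIc : IsCompact I := by rw [hI]; exact isCompact_Icc
    obtain ⟨Bη, hBη⟩ := hIc.exists_bound_of_continuousOn hηc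
    obtain ⟨Bw, hBw⟩ := hIc.exists_bound_of_continuousOn hwc
    have hBηnn : 0 ≤ Bη := le_trans (norm_nonneg (η a)) (hBη a haI)
    have hBwnn : 0 ≤ Bw := le_trans (norm_nonneg (w a)) (hBw a haI)
    have hXw : ∀ ε : ℝ, ∀ t ∈ I, HasDerivWithinAt (fun u => xE u + ε * η u) (v t + ε * w t) I t :=
      fun ε t ht => ((hxEd t ht).hasDerivWithinAt).add (((hηd t ht).hasDerivWithinAt).const_mul ε)
    have hXderiv : ∀ ε : ℝ, ∀ t ∈ I, derivWithin (fun u => xE u + ε * η u) I t = v t + ε * w t :=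
      fun ε t ht => (hXw ε t ht).derivWithin (huniq t ht)
    have hFX : ∀ (ε : ℝ) (i : Fin n), F (fun u => xE u + ε * η u) i
        = ∫ t in a..b, f i t (xE t + ε * η t) (v t + ε * w t) := by
      intro ε i
      rw [hF]
      apply intervalIntegral.integral_congr
      intro t ht
      rw [Set.uIcc_of_le hab', ← hI] at ht
      simp only [hXderiv ε t ht]
    have hΦε : ∀ ε : ℝ, ContinuousOn (fun t => ((t, xE t + ε * η t, v t + ε * w t) : ℝ × ℝ × ℝ)) I :=
      fun ε => continuousOn_id.prodMk ((hxEc.add (continuousOn_const.mul hηc)).prodMk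
        (hvc.add (continuousOn_const.mul hwc)))
    have hmapsε : ∀ ε : ℝ, Set.MapsTo (fun t => ((t, xE t + ε * η t, v t + ε * w t) : ℝ × ℝ × ℝ)) I
        (I ×ˢ (Set.univ : Set ℝ) ×ˢ (Set.univ : Set ℝ)) := fun ε t ht => ⟨ht, trivial, trivial⟩
    have hGc : ∀ (i : Fin n) (ε : ℝ),
        ContinuousOn (fun t => f i t (xE t + ε * η t) (v t + ε * w t)) I :=
      fun i ε => (hf_cont i).comp (hΦε ε) (hmapsε ε)
    have hG'c : ∀ (i : Fin n) (ε : ℝ), ContinuousOn (fun t =>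
        η t * fy i t (xE t + ε * η t) (v t + ε * w t)
          + w t * fv i t (xE t + ε * η t) (v t + ε * w t)) I :=
      fun i ε => (hηc.mul ((hfy_cont i).comp (hΦε ε) (hmapsε ε))).add
        (hwc.mul ((hfv_cont i).comp (hΦε ε) (hmapsε ε)))
    have hIoc : Set.Ioc a b ⊆ I := by rw [hI]; exact Set.Ioc_subset_Icc_self
    have hcomp : ∀ i : Fin n, HasDerivAt
        (fun ε => ∫ t in a..b, f i t (xE t + ε * η t) (v t + ε * w t))
        (∫ t in a..b, (η t * P i t + w t * Q i t)) 0 := by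
      intro i
      set Φ2 : ℝ × ℝ → ℝ × ℝ × ℝ :=
        fun q => (q.1, xE q.1 + q.2 * η q.1, v q.1 + q.2 * w q.1) with hΦ2def
      have hKc : IsCompact (I ×ˢ Set.Icc (-1 : ℝ) 1) := hIc.prod isCompact_Icc
      have hfst : ContinuousOn (fun q : ℝ × ℝ => q.1) (I ×ˢ Set.Icc (-1 : ℝ) 1) :=
        continuous_fst.continuousOn
      have hmapsfst : Set.MapsTo (fun q : ℝ × ℝ => q.1) (I ×ˢ Set.Icc (-1 : ℝ) 1) I :=
        fun q hq => hq.1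
      have hΦ2 : ContinuousOn Φ2 (I ×ˢ Set.Icc (-1 : ℝ) 1) := by
        apply ContinuousOn.prodMk hfst
        apply ContinuousOn.prodMk
        · exact (hxEc.comp hfst hmapsfst).add
            (continuous_snd.continuousOn.mul (hηc.comp hfst hmapsfst))
        · exact (hvc.comp hfst hmapsfst).add
            (continuous_snd.continuousOn.mul (hwc.comp hfst hmapsfst))
      have hmaps2 : Set.MapsTo Φ2 (I ×ˢ Set.Icc (-1 : ℝ) 1)
          (I ×ˢ (Set.univ : Set ℝ) ×ˢ (Set.univ : Set ℝ)) := fun q hq => ⟨hq.1, trivial, trivial⟩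
      obtain ⟨Cy, hCy⟩ := hKc.exists_bound_of_continuousOn ((hfy_cont i).comp hΦ2 hmaps2)
      obtain ⟨Cv, hCv⟩ := hKc.exists_bound_of_continuousOn ((hfv_cont i).comp hΦ2 hmaps2)
      have harg1 : ∀ᶠ ε : ℝ in nhds 0, MeasureTheory.AEStronglyMeasurable
          (fun t => f i t (xE t + ε * η t) (v t + ε * w t))
          (MeasureTheory.volume.restrict (Set.uIoc a b)) := by
        refine Filter.Eventually.of_forall (fun ε => ?_)
        rw [Set.uIoc_of_le hab']
        exact ((hGc i ε).mono hIoc).aestronglyMeasurable measurableSet_Ioc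
      have harg2 : IntervalIntegrable (fun t => f i t (xE t + 0 * η t) (v t + 0 * w t))
          MeasureTheory.volume a b := hii (hGc i 0)
      have harg3 : MeasureTheory.AEStronglyMeasurable
          (fun t => η t * fy i t (xE t + 0 * η t) (v t + 0 * w t)
            + w t * fv i t (xE t + 0 * η t) (v t + 0 * w t))
          (MeasureTheory.volume.restrict (Set.uIoc a b)) := by
        rw [Set.uIoc_of_le hab']
        exact ((hG'c i 0).mono hIoc).aestronglyMeasurable measurableSet_Ioc
      have harg4 : ∀ᵐ t ∂(MeasureTheory.volume : MeasureTheory.Measure ℝ), t ∈ Set.uIoc a b →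
          ∀ ε ∈ Metric.ball (0 : ℝ) 1,
            ‖η t * fy i t (xE t + ε * η t) (v t + ε * w t)
              + w t * fv i t (xE t + ε * η t) (v t + ε * w t)‖ ≤ Bη * Cy + Bw * Cv := by
        refine Filter.Eventually.of_forall (fun t ht ε hε => ?_)
        rw [Set.uIoc_of_le hab'] at ht
        have htI : t ∈ I := hIoc ht
        have hεI : ε ∈ Set.Icc (-1 : ℝ) 1 := by
          have h1 : |ε| ≤ 1 := le_of_lt (by simpa [Real.norm_eq_abs] using mem_ball_zero_iff.1 hε)
          exact Set.mem_Icc.2 (abs_le.1 h1)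
        have hKmem : ((t, ε) : ℝ × ℝ) ∈ I ×ˢ Set.Icc (-1 : ℝ) 1 := ⟨htI, hεI⟩
        have hCy' : ‖fy i t (xE t + ε * η t) (v t + ε * w t)‖ ≤ Cy := by
          simpa [hΦ2def, Function.comp] using hCy (t, ε) hKmem
        have hCv' : ‖fv i t (xE t + ε * η t) (v t + ε * w t)‖ ≤ Cv := by
          simpa [hΦ2def, Function.comp] using hCv (t, ε) hKmem
        calc ‖η t * fy i t (xE t + ε * η t) (v t + ε * w t)
              + w t * fv i t (xE t + ε * η t) (v t + ε * w t)‖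
            ≤ ‖η t * fy i t (xE t + ε * η t) (v t + ε * w t)‖
              + ‖w t * fv i t (xE t + ε * η t) (v t + ε * w t)‖ := norm_add_le _ _
          _ = ‖η t‖ * ‖fy i t (xE t + ε * η t) (v t + ε * w t)‖
              + ‖w t‖ * ‖fv i t (xE t + ε * η t) (v t + ε * w t)‖ := by rw [norm_mul, norm_mul]
          _ ≤ Bη * Cy + Bw * Cv :=
            add_le_add (mul_le_mul (hBη t htI) hCy' (norm_nonneg _) hBηnn)
              (mul_le_mul (hBw t htI) hCv' (norm_nonneg _) hBwnn)
      have harg5 : IntervalIntegrable (fun _ : ℝ => Bη * Cy + Bw * Cv)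
          MeasureTheory.volume a b := intervalIntegrable_const
      have harg6 : ∀ᵐ t ∂(MeasureTheory.volume : MeasureTheory.Measure ℝ), t ∈ Set.uIoc a b →
          ∀ ε ∈ Metric.ball (0 : ℝ) 1,
            HasDerivAt (fun ε' => f i t (xE t + ε' * η t) (v t + ε' * w t))
              (η t * fy i t (xE t + ε * η t) (v t + ε * w t)
                + w t * fv i t (xE t + ε * η t) (v t + ε * w t)) ε := by
        refine Filter.Eventually.of_forall (fun t ht ε hε => ?_)
        rw [Set.uIoc_of_le hab'] at ht
        have htI : t ∈ I := hIoc ht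
        have hgyc2 : Continuous (fun z : ℝ × ℝ => fy i t z.1 z.2) := by
          have := (hfy_cont i).comp_continuous
            (f := fun z : ℝ × ℝ => ((t, z.1, z.2) : ℝ × ℝ × ℝ))
            (continuous_const.prodMk (continuous_fst.prodMk continuous_snd))
            (fun z => ⟨htI, trivial, trivial⟩)
          simpa [Function.comp_def] using this
        exact hasDerivAt_line (hfy i t htI) (hfv i t htI) hgyc2 (xE t) (v t) (η t) (w t) ε
      have hres := intervalIntegral.hasDerivAt_integral_of_dominated_loc_of_deriv_le
        (F := fun ε t => f i t (xE t + ε * η t) (v t + ε * w t))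
        (F' := fun ε t => η t * fy i t (xE t + ε * η t) (v t + ε * w t)
          + w t * fv i t (xE t + ε * η t) (v t + ε * w t))
        (x₀ := (0 : ℝ)) (a := a) (b := b) (μ := MeasureTheory.volume)
        (bound := fun _ => Bη * Cy + Bw * Cv) (Metric.ball_mem_nhds (0 : ℝ) one_pos)
        harg1 harg2 harg3 harg4 harg5 harg6
      have heq0 : (∫ t in a..b, (η t * fy i t (xE t + 0 * η t) (v t + 0 * w t)
          + w t * fv i t (xE t + 0 * η t) (v t + 0 * w t)))
          = ∫ t in a..b, (η t * P i t + w t * Q i t) := by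
        apply intervalIntegral.integral_congr
        intro t ht
        simp only [hP, hQ, zero_mul, add_zero]
      rw [← heq0]
      exact hres.2
    set A : Fin n → ℝ := fun i => ∫ t in a..b, (η t * P i t + w t * Q i t) with hA
    have hX0 : (fun u => xE u + (0 : ℝ) * η u) = xE := by funext u; simp
    have hΨ : HasDerivAt (fun ε => F (fun u => xE u + ε * η u)) A 0 := by
      rw [hasDerivAt_pi]
      intro i
      have hrw : (fun ε => F (fun u => xE u + ε * η u) i)
          = fun ε => ∫ t in a..b, f i t (xE t + ε * η t) (v t + ε * w t) :=
        funext fun ε => hFX ε i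
      rw [hrw]
      exact hcomp i
    have hFX0 : F (fun u => xE u + (0 : ℝ) * η u) = F xE := by rw [hX0]
    have hHd' : HasFDerivAt H (fderiv ℝ H (F xE)) (F (fun u => xE u + (0 : ℝ) * η u)) := by
      rw [hFX0]
      exact (hH.differentiable one_ne_zero (F xE)).hasFDerivAt
    have hφH : HasDerivAt (fun ε => H (F (fun u => xE u + ε * η u))) (fderiv ℝ H (F xE) A) 0 :=
      hHd'.comp_hasDerivAt 0 hΨ
    have hφL : HasDerivAt (fun ε => L (fun u => xE u + ε * η u)) (fderiv ℝ H (F xE) A) 0 := by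
      have he : (fun ε => L (fun u => xE u + ε * η u))
          = fun ε => H (F (fun u => xE u + ε * η u)) := funext fun ε => hL _
      rw [he]
      exact hφH
    have hXadm : ∀ ε : ℝ, ContDiffOn ℝ 1 (fun u => xE u + ε * η u) I :=
      fun ε => hxE.add (contDiffOn_const.mul hη)
    have hXa : ∀ ε : ℝ, xE a + ε * η a = xa := by intro ε; simp [hηa, hxEa]
    have hXb : ∀ ε : ℝ, xE b + ε * η b = xb := by intro ε; simp [hηb, hxEb]
    have hnorm : ∀ δ : ℝ, 0 < δ → ∀ ε : ℝ, |ε| < δ / (Bη + Bw + 1) →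
        C1Norm a b (fun t => (xE t + ε * η t) - xE t) < δ := by
      intro δ hδ ε hε
      haveI : Nonempty (Set.Icc a b) := Set.nonempty_Icc_subtype hab'
      have hfun : (fun t => (xE t + ε * η t) - xE t) = fun t => ε * η t := by funext t; ring
      rw [hfun]
      unfold C1Norm
      have h1 : (⨆ t : Set.Icc a b, |ε * η t|) ≤ |ε| * Bη := by
        apply ciSup_le
        intro t
        have htI : (t : ℝ) ∈ I := by rw [hI]; exact t.2
        rw [abs_mul]
        exact mul_le_mul_of_nonneg_left
          (by simpa [Real.norm_eq_abs] using hBη t htI) (abs_nonneg ε)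
      have h2 : (⨆ t : Set.Icc a b, |derivWithin (fun u => ε * η u) (Set.Icc a b) t|)
          ≤ |ε| * Bw := by
        apply ciSup_le
        rintro ⟨u, hu⟩
        have huI : u ∈ I := by rw [hI]; exact hu
        show |derivWithin (fun u' => ε * η u') (Set.Icc a b) u| ≤ |ε| * Bw
        have hdw : derivWithin (fun u' => ε * η u') I u = ε * derivWithin η I u :=
          derivWithin_const_mul ε (hηd u huI)
        rw [hI] at hdw
        rw [hdw, abs_mul]
        refine mul_le_mul_of_nonneg_left ?_ (abs_nonneg ε)
        have := hBw u huI
        rw [hw, hI] at this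
        simpa [Real.norm_eq_abs] using this
      have h3 : |ε| * Bη + |ε| * Bw ≤ |ε| * (Bη + Bw + 1) := by nlinarith [abs_nonneg ε]
      have h4 : |ε| * (Bη + Bw + 1) < (δ / (Bη + Bw + 1)) * (Bη + Bw + 1) :=
        mul_lt_mul_of_pos_right hε (by positivity)
      have h5 : (δ / (Bη + Bw + 1)) * (Bη + Bw + 1) = δ := by field_simp
      have h6 := add_le_add h1 h2
      linarith
    have hD0 : fderiv ℝ H (F xE) A = 0 := by
      have hL0 : L (fun u => xE u + (0 : ℝ) * η u) = L xE := by rw [hX0]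
      rcases hext with ⟨δ, hδ, hmin⟩ | ⟨δ, hδ, hmax⟩
      · have hloc : IsLocalMin (fun ε => L (fun u => xE u + ε * η u)) 0 := by
          rw [IsLocalMin, IsMinFilter, Metric.eventually_nhds_iff]
          refine ⟨δ / (Bη + Bw + 1), by positivity, fun {ε} hd => ?_⟩
          rw [hL0]
          exact hmin _ (hXadm ε) (hXa ε) (hXb ε)
            (hnorm δ hδ ε (by simpa [Real.dist_eq] using hd))
        have h0 := hloc.deriv_eq_zero
        rwa [hφL.deriv] at h0
      · have hloc : IsLocalMax (fun ε => L (fun u => xE u + ε * η u)) 0 := by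
          rw [IsLocalMax, IsMaxFilter, Metric.eventually_nhds_iff]
          refine ⟨δ / (Bη + Bw + 1), by positivity, fun {ε} hd => ?_⟩
          rw [hL0]
          exact hmax _ (hXadm ε) (hXa ε) (hXb ε)
            (hnorm δ hδ ε (by simpa [Real.dist_eq] using hd))
        have h0 := hloc.deriv_eq_zero
        rwa [hφL.deriv] at h0
    have hAsum : fderiv ℝ H (F xE) A = ∑ i, A i * c i := by
      have hArep : A = ∑ i, A i • (Pi.single i (1 : ℝ) : Fin n → ℝ) := by
        funext j
        simp [Pi.single_apply]
      conv_lhs => rw [hArep]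
      rw [map_sum]
      simp [hc, smul_eq_mul]
    have hintsum : ∑ i, A i * c i
        = ∫ t in a..b, (gy t * η t + gv t * derivWithin η I t) := by
      have h1 : ∀ i : Fin n, A i * c i
          = ∫ t in a..b, (η t * P i t + w t * Q i t) * c i := by
        intro i
        rw [hA]
        exact (intervalIntegral.integral_mul_const (c i) _).symm
      rw [Finset.sum_congr rfl (fun i _ => h1 i), ← intervalIntegral.integral_finset_sum]
      · apply intervalIntegral.integral_congr
        intro t ht
        simp only [hgy, hgv]
        rw [Finset.sum_mul, Finset.sum_mul, ← Finset.sum_add_distrib]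
        exact Finset.sum_congr rfl fun i _ => by ring
      · intro i _
        exact hii (((hηc.mul (hPc i)).add (hwc.mul (hQc i))).mul continuousOn_const)
    rw [← hintsum, ← hAsum]
    exact hD0

  -- ### Step 2: du Bois-Reymond
  set Gg : ℝ → ℝ := fun u => ∫ x in a..u, gy x with hGgdef
  have hGgd : ∀ t ∈ I, HasDerivWithinAt Gg (gy t) I t := fun t ht =>
    ftc_within hab' hgyc ht
  have hGgc : ContinuousOn Gg I := fun t ht => (hGgd t ht).continuousWithinAt
  have hgsub : ContinuousOn (fun u => gv u - Gg u) I := hgvc.sub hGgc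
  have key2 : ∀ η : ℝ → ℝ, ContDiffOn ℝ 1 η I → η a = 0 → η b = 0 →
      (∫ t in a..b, ((gv t - Gg t) * derivWithin η I t)) = 0 := by
    intro η hη hηa hηb
    have hηc : ContinuousOn η I := hη.continuousOn
    have hηd : DifferentiableOn ℝ η I := hη.differentiableOn one_ne_zero
    have hwc : ContinuousOn (derivWithin η I) I := hη.continuousOn_derivWithin huniq le_rfl
    have hu : ContinuousOn Gg (Set.uIcc a b) := by rw [Set.uIcc_of_le hab', ← hI]; exact hGgc
    have hvv : ContinuousOn η (Set.uIcc a b) := by rw [Set.uIcc_of_le hab', ← hI]; exact hηc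
    have huu' : ∀ x ∈ Set.Ioo (min a b) (max a b), HasDerivWithinAt Gg (gy x) (Set.Ioi x) x := by
      intro x hx
      rw [min_eq_left hab', max_eq_right hab'] at hx
      have hxI : x ∈ I := by rw [hI]; exact Set.Ioo_subset_Icc_self hx
      exact ((hGgd x hxI).hasDerivAt (by rw [hI]; exact Icc_mem_nhds hx.1 hx.2)).hasDerivWithinAt
    have hvv' : ∀ x ∈ Set.Ioo (min a b) (max a b),
        HasDerivWithinAt η (derivWithin η I x) (Set.Ioi x) x := by
      intro x hx
      rw [min_eq_left hab', max_eq_right hab'] at hx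
      have hxI : x ∈ I := by rw [hI]; exact Set.Ioo_subset_Icc_self hx
      exact (((hηd x hxI).hasDerivWithinAt).hasDerivAt
        (by rw [hI]; exact Icc_mem_nhds hx.1 hx.2)).hasDerivWithinAt
    have hparts := intervalIntegral.integral_mul_deriv_eq_deriv_mul_of_hasDeriv_right
      hu hvv huu' hvv' (hii hgyc) (hii hwc)
    have hi1 : IntervalIntegrable (fun t => gy t * η t) MeasureTheory.volume a b :=
      hii (hgyc.mul hηc)
    have hi2 : IntervalIntegrable (fun t => gv t * derivWithin η I t) MeasureTheory.volume a b :=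
      hii (hgvc.mul hwc)
    have hi3 : IntervalIntegrable (fun t => Gg t * derivWithin η I t) MeasureTheory.volume a b :=
      hii (hGgc.mul hwc)
    have hksplit := key η hη hηa hηb
    have haddsplit : (∫ t in a..b, gy t * η t)
        + (∫ t in a..b, gv t * derivWithin η I t) = 0 := by
      rw [← intervalIntegral.integral_add hi1 hi2]
      exact hksplit
    have hsubsplit : (∫ t in a..b, ((gv t - Gg t) * derivWithin η I t))
        = (∫ t in a..b, gv t * derivWithin η I t)
          - ∫ t in a..b, Gg t * derivWithin η I t := by
      rw [← intervalIntegral.integral_sub hi2 hi3]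
      apply intervalIntegral.integral_congr
      intro t ht
      ring
    rw [hsubsplit, hparts, hηa, hηb]
    simp only [mul_zero]
    linarith [haddsplit]
  set K0 : ℝ := (∫ u in a..b, (gv u - Gg u)) / (b - a) with hK0
  set η₀ : ℝ → ℝ := fun t => (∫ u in a..t, (gv u - Gg u)) - (t - a) * K0 with hη₀def
  have hη₀d : ∀ t ∈ I, HasDerivWithinAt η₀ (gv t - Gg t - K0) I t := by
    intro t ht
    have h1 : HasDerivWithinAt (fun t' => ∫ u in a..t', (gv u - Gg u)) (gv t - Gg t) I t :=
      ftc_within hab' hgsub ht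
    have h2 : HasDerivAt (fun t' : ℝ => (t' - a) * K0) K0 t := by
      simpa using ((hasDerivAt_id t).sub_const a).mul_const K0
    exact h1.sub h2.hasDerivWithinAt
  have hη₀dd : DifferentiableOn ℝ η₀ I := fun t ht => (hη₀d t ht).differentiableWithinAt
  have hη₀dw : ∀ t ∈ I, derivWithin η₀ I t = gv t - Gg t - K0 := fun t ht =>
    (hη₀d t ht).derivWithin (huniq t ht)
  have hη₀C1 : ContDiffOn ℝ 1 η₀ I := by
    rw [show (1 : WithTop ℕ∞) = 0 + 1 from rfl, contDiffOn_succ_iff_derivWithin huniq]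
    refine ⟨hη₀dd, ?_, ?_⟩
    · intro h
      simp at h
    · rw [contDiffOn_zero]
      exact (hgsub.sub continuousOn_const).congr hη₀dw
  have hba : b - a ≠ 0 := sub_ne_zero.2 hab.ne'
  have hη₀a : η₀ a = 0 := by
    rw [hη₀def]
    simp
  have hη₀b : η₀ b = 0 := by
    rw [hη₀def]
    simp only [hK0]
    field_simp
    ring
  have hρ := key2 η₀ hη₀C1 hη₀a hη₀b
  have hρ' : (∫ t in a..b, ((gv t - Gg t) * (gv t - Gg t - K0))) = 0 := by
    rw [← hρ]
    apply intervalIntegral.integral_congr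
    intro t ht
    rw [Set.uIcc_of_le hab'] at ht
    show (gv t - Gg t) * (gv t - Gg t - K0) = (gv t - Gg t) * derivWithin η₀ I t
    rw [hη₀dw t (by rw [hI]; exact ht)]
  have hmean : (∫ t in a..b, (gv t - Gg t - K0)) = 0 := by
    have hint1 : IntervalIntegrable (fun t => gv t - Gg t) MeasureTheory.volume a b := hii hgsub
    rw [intervalIntegral.integral_sub hint1 intervalIntegrable_const,
      intervalIntegral.integral_const, hK0, smul_eq_mul]
    field_simp
    ring
  have hsq : (∫ t in a..b, (gv t - Gg t - K0) ^ 2) = 0 := by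
    have e : ∀ t : ℝ, (gv t - Gg t - K0) ^ 2
        = (gv t - Gg t) * (gv t - Gg t - K0) - K0 * (gv t - Gg t - K0) := fun t => by ring
    have hint2 : IntervalIntegrable (fun t => (gv t - Gg t) * (gv t - Gg t - K0))
        MeasureTheory.volume a b := hii (hgsub.mul (hgsub.sub continuousOn_const))
    have hint3 : IntervalIntegrable (fun t => K0 * (gv t - Gg t - K0))
        MeasureTheory.volume a b := hii (continuousOn_const.mul (hgsub.sub continuousOn_const))
    rw [intervalIntegral.integral_congr
        (g := fun t => (gv t - Gg t) * (gv t - Gg t - K0) - K0 * (gv t - Gg t - K0))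
        (fun t _ => e t),
      intervalIntegral.integral_sub hint2 hint3, hρ',
      intervalIntegral.integral_const_mul, hmean]
    ring
  have hsqc : ContinuousOn (fun t => (gv t - Gg t - K0) ^ 2) I :=
    (hgsub.sub continuousOn_const).pow 2
  have hρ0 := eq_zero_of_integral_nonneg_zero hab hsqc (fun t _ => sq_nonneg _) hsq
  have hgveq : ∀ t ∈ I, gv t = Gg t + K0 := by
    intro t ht
    have h2 : (gv t - Gg t - K0) ^ 2 = 0 := hρ0 t (by rw [← hI]; exact ht)
    have h3 : gv t - Gg t - K0 = 0 := by
      have := sq_eq_zero_iff.1 h2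
      exact this
    linarith
  -- ### Conclusion
  have hgvd : HasDerivWithinAt gv (gy t₀) I t₀ :=
    ((hGgd t₀ ht₀).add_const K0).congr (fun y hy => hgveq y hy) (hgveq t₀ ht₀)
  have hsum : HasDerivWithinAt (fun t => ∑ i, c i * fv i t (xE t) (v t))
      (∑ i, c i * derivWithin (fun s => fv i s (xE s) (v s)) I t₀) I t₀ :=
    HasDerivWithinAt.fun_sum (fun i _ =>
      ((hdiff i t₀ ht₀).hasDerivWithinAt).const_mul (c i))
  have e1 : derivWithin gv I t₀ = gy t₀ := hgvd.derivWithin (huniq t₀ ht₀)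
  have e2 : derivWithin gv I t₀
      = ∑ i, c i * derivWithin (fun s => fv i s (xE s) (v s)) I t₀ :=
    hsum.derivWithin (huniq t₀ ht₀)
  have final : ∑ i, c i * (fy i t₀ (xE t₀) (v t₀)
      - derivWithin (fun s => fv i s (xE s) (v s)) I t₀) = 0 := by
    have expand : ∑ i, c i * (fy i t₀ (xE t₀) (v t₀)
        - derivWithin (fun s => fv i s (xE s) (v s)) I t₀)
        = gy t₀ - ∑ i, c i * derivWithin (fun s => fv i s (xE s) (v s)) I t₀ := by
      simp only [hgy, hP]
      rw [← Finset.sum_sub_distrib]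
      exact Finset.sum_congr rfl fun i _ => by ring
    rw [expand, ← e2, e1, sub_self]
  simpa only [hc] using final
end

section
/- Let a < b be real numbers, n ≥ 1, H : ℝⁿ → ℝ be continuously differentiable with partial derivatives H'_1, …, H'_n, and for i = 1, …, n let f_i : [a,b] × ℝ × ℝ → ℝ be continuous with continuous partial derivatives f_{iy} and f_{iv} with respect to its second and third arguments. Suppose x̃ : [a,b] → ℝ is C¹ with x̃(b) = x_b (the value x(a) is not specified), and x̃ is a weak local extremizer of L[x] = H(F_1[x], …, F_n[x]): there exists δ > 0 such that L[x̃] ≤ L[x] for every C¹ function x : [a,b] → ℝ with x(b) = x_b and ‖x − x̃‖₁ < δ (or L[x̃] ≥ L[x] for all such x). Then the natural boundary condition ∑_{i=1}^{n} H'_i(F_1[x̃], …, F_n[x̃]) · f_{iv}(a, x̃(a), x̃'(a)) = 0 holds. -/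
open Set Filter MeasureTheory intervalIntegral

/-- Chain rule along a line for a function of two real variables that has partial
derivatives everywhere, the first partial being (jointly) continuous. -/
lemma hasDerivAt_line_comp (f fy fv : ℝ → ℝ → ℝ)
    (hy : ∀ y v, HasDerivAt (fun y' => f y' v) (fy y v) y)
    (hv : ∀ y v, HasDerivAt (fun v' => f y v') (fv y v) v)
    (hfyc : Continuous fun p : ℝ × ℝ => fy p.1 p.2)
    (c d A B s₀ : ℝ) :
    HasDerivAt (fun s => f (c + s * A) (d + s * B))
      (fy (c + s₀ * A) (d + s₀ * B) * A + fv (c + s₀ * A) (d + s₀ * B) * B) s₀ := by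
  have hvline : ∀ s : ℝ, HasDerivAt (fun s' => f (c + s₀ * A) (d + s' * B))
      (fv (c + s₀ * A) (d + s * B) * B) s := by
    intro s
    have hB : HasDerivAt (fun s' : ℝ => d + s' * B) B s := by
      simpa using ((hasDerivAt_id s).mul_const B).const_add d
    exact (hv (c + s₀ * A) (d + s * B)).comp s hB
  have key : HasDerivAt (fun s => f (c + s * A) (d + s * B) - f (c + s₀ * A) (d + s * B))
      (fy (c + s₀ * A) (d + s₀ * B) * A) s₀ := by
    rcases eq_or_ne A 0 with hA | hA
    · subst hA
      simpa using (hasDerivAt_const s₀ (0:ℝ))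
    rw [hasDerivAt_iff_tendsto_slope]
    rw [Metric.tendsto_nhdsWithin_nhds]
    intro ε hε
    have hAp : (0:ℝ) < |A| := abs_pos.mpr hA
    have hcont : ContinuousAt (fun p : ℝ × ℝ => fy p.1 p.2) (c + s₀ * A, d + s₀ * B) :=
      hfyc.continuousAt
    rw [Metric.continuousAt_iff] at hcont
    obtain ⟨δ₁, hδ₁, hδ₁'⟩ := hcont (ε / (|A| + 1)) (by positivity)
    refine ⟨δ₁ / (|A| + |B| + 1), by positivity, ?_⟩
    intro s hs hd
    have hsne : s ≠ s₀ := hs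
    have hds : |s - s₀| < δ₁ / (|A| + |B| + 1) := by
      simpa [Real.dist_eq] using hd
    have hsmall : ∀ C : ℝ, |C| ≤ |A| + |B| → |s - s₀| * |C| < δ₁ := by
      intro C hC
      calc |s - s₀| * |C| ≤ |s - s₀| * (|A| + |B| + 1) := by
            apply mul_le_mul_of_nonneg_left (by linarith) (abs_nonneg _)
        _ < δ₁ / (|A| + |B| + 1) * (|A| + |B| + 1) := by
            apply mul_lt_mul_of_pos_right hds (by positivity)
        _ = δ₁ := by field_simp
    set y1 := c + s₀ * A with hy1
    set y2 := c + s * A with hy2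
    set vf := d + s * B with hvf
    have hy21 : y2 - y1 = (s - s₀) * A := by rw [hy1, hy2]; ring
    have hyne : y2 ≠ y1 := by
      intro h
      apply hA
      have : (s - s₀) * A = 0 := by rw [← hy21, h, sub_self]
      rcases mul_eq_zero.1 this with h' | h'
      · exact absurd (by linarith [sub_eq_zero.1 h'] : s = s₀) hsne
      · exact h'
    have hmvt : ∃ ξ, (|ξ - y1| ≤ |y2 - y1| ∧ fy ξ vf = (f y2 vf - f y1 vf) / (y2 - y1)) := by
      rcases hyne.lt_or_gt with hlt | hlt
      · obtain ⟨ξ, hξ, hval⟩ := exists_hasDerivAt_eq_slope (fun y => f y vf) (fun y => fy y vf)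
          hlt (fun y _ => (hy y vf).continuousAt.continuousWithinAt)
          (fun y _ => hy y vf)
        refine ⟨ξ, ?_, ?_⟩
        · rw [abs_sub_comm, abs_of_pos (by linarith [hξ.1, hξ.2] : (0:ℝ) < y1 - ξ)]
          rw [abs_sub_comm, abs_of_pos (by linarith [hlt] : (0:ℝ) < y1 - y2)]
          linarith [hξ.1, hξ.2]
        · rw [hval, ← neg_sub (f y1 vf), ← neg_sub y1, neg_div_neg_eq]
      · obtain ⟨ξ, hξ, hval⟩ := exists_hasDerivAt_eq_slope (fun y => f y vf) (fun y => fy y vf)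
          hlt (fun y _ => (hy y vf).continuousAt.continuousWithinAt)
          (fun y _ => hy y vf)
        refine ⟨ξ, ?_, ?_⟩
        · rw [abs_of_pos (by linarith [hξ.1] : (0:ℝ) < ξ - y1),
            abs_of_pos (by linarith [hlt] : (0:ℝ) < y2 - y1)]
          linarith [hξ.2]
        · exact hval
    obtain ⟨ξ, hξd, hξv⟩ := hmvt
    have hsne' : s - s₀ ≠ 0 := sub_ne_zero.2 hsne
    have hslope : slope (fun s => f (c + s * A) (d + s * B) - f (c + s₀ * A) (d + s * B)) s₀ s
        = fy ξ vf * A := by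
      rw [slope_def_field, hξv, hy21]
      field_simp
      simp only [hy1, hy2, hvf]
      ring_nf
    rw [hslope]
    have hdist : dist (ξ, vf) (y1, d + s₀ * B) < δ₁ := by
      rw [Prod.dist_eq, max_lt_iff]
      constructor
      · rw [Real.dist_eq]
        calc |ξ - y1| ≤ |y2 - y1| := hξd
          _ = |s - s₀| * |A| := by rw [hy21, abs_mul]
          _ < δ₁ := hsmall A (by linarith [abs_nonneg B])
      · rw [Real.dist_eq]
        have : vf - (d + s₀ * B) = (s - s₀) * B := by rw [hvf]; ring
        rw [this, abs_mul]
        exact hsmall B (by linarith [abs_nonneg A])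
    have := hδ₁' hdist
    rw [Real.dist_eq] at this ⊢
    calc |fy ξ vf * A - fy y1 (d + s₀ * B) * A| = |fy ξ vf - fy y1 (d + s₀ * B)| * |A| := by
          rw [← abs_mul]; ring_nf
      _ < ε / (|A| + 1) * |A| := mul_lt_mul_of_pos_right this hAp
      _ < ε := by
          rw [div_mul_eq_mul_div, div_lt_iff₀ (by positivity)]
          nlinarith [hε]
  have := key.add (hvline s₀)
  simpa [Pi.add_def] using this

lemma first_variation
    (a b : ℝ) (hab : a < b) (n : ℕ)
    (H : (Fin n → ℝ) → ℝ) (hH : ContDiff ℝ 1 H)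
    (f fy fv : Fin n → ℝ → ℝ → ℝ → ℝ)
    (hf_cont : ∀ i, ContinuousOn (fun p : ℝ × ℝ × ℝ => f i p.1 p.2.1 p.2.2)
      (Set.Icc a b ×ˢ (Set.univ : Set ℝ) ×ˢ (Set.univ : Set ℝ)))
    (hfy : ∀ i, ∀ t ∈ Set.Icc a b, ∀ y v : ℝ,
      HasDerivAt (fun y' => f i t y' v) (fy i t y v) y)
    (hfv : ∀ i, ∀ t ∈ Set.Icc a b, ∀ y v : ℝ,
      HasDerivAt (fun v' => f i t y v') (fv i t y v) v)
    (hfy_cont : ∀ i, ContinuousOn (fun p : ℝ × ℝ × ℝ => fy i p.1 p.2.1 p.2.2)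
      (Set.Icc a b ×ˢ (Set.univ : Set ℝ) ×ˢ (Set.univ : Set ℝ)))
    (hfv_cont : ∀ i, ContinuousOn (fun p : ℝ × ℝ × ℝ => fv i p.1 p.2.1 p.2.2)
      (Set.Icc a b ×ˢ (Set.univ : Set ℝ) ×ˢ (Set.univ : Set ℝ)))
    (xb : ℝ) (xE : ℝ → ℝ)
    (hxE : ContDiffOn ℝ 1 xE (Set.Icc a b))
    (hxEb : xE b = xb)
    (F : (ℝ → ℝ) → Fin n → ℝ)
    (hF : ∀ x i, F x i = ∫ t in a..b, f i t (x t) (derivWithin x (Set.Icc a b) t))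
    (L : (ℝ → ℝ) → ℝ)
    (hL : ∀ x, L x = H (F x))
    (hext :
      (∃ δ > 0, ∀ x : ℝ → ℝ, ContDiffOn ℝ 1 x (Set.Icc a b) →
        x b = xb → C1Norm a b (fun t => x t - xE t) < δ → L xE ≤ L x) ∨
      (∃ δ > 0, ∀ x : ℝ → ℝ, ContDiffOn ℝ 1 x (Set.Icc a b) →
        x b = xb → C1Norm a b (fun t => x t - xE t) < δ → L x ≤ L xE))
    (η : ℝ → ℝ) (hη : ContDiff ℝ 1 η) (hηb : η b = 0) :
    ∫ t in a..b,
      ((∑ i, fderiv ℝ H (F xE) (Pi.single i 1) *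
          fy i t (xE t) (derivWithin xE (Set.Icc a b) t)) * η t +
       (∑ i, fderiv ℝ H (F xE) (Pi.single i 1) *
          fv i t (xE t) (derivWithin xE (Set.Icc a b) t)) * deriv η t) = 0 := by
  set S := Set.Icc a b with hSdef
  have hS : UniqueDiffOn ℝ S := uniqueDiffOn_Icc hab
  have hIccIcc : uIcc a b = S := uIcc_of_le hab.le
  have hIocS : Set.uIoc a b ⊆ S := by
    rw [uIoc_of_le hab.le]; exact Ioc_subset_Icc_self
  set p := fun t => derivWithin xE S t with hpdef
  have hp_cont : ContinuousOn p S := hxE.continuousOn_derivWithin hS le_rfl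
  have hxc : ContinuousOn xE S := hxE.continuousOn
  have hηd : Differentiable ℝ η := hη.differentiable one_ne_zero
  have hη'c : Continuous (deriv η) := (contDiff_one_iff_deriv.1 hη).2
  have hηc : Continuous η := hη.continuous
  set c : Fin n → ℝ := fun i => fderiv ℝ H (F xE) (Pi.single i 1) with hcdef
  -- the varied curves
  set xv : ℝ → ℝ → ℝ := fun ε t => xE t + ε * η t with hxvdef
  have hxv_cd : ∀ ε, ContDiffOn ℝ 1 (xv ε) S :=
    fun ε => hxE.add ((contDiff_const.mul hη).contDiffOn)
  have hxvb : ∀ ε, xv ε b = xb := by intro ε; simp [hxvdef, hηb, hxEb]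
  have hder : ∀ ε, ∀ t ∈ S, derivWithin (xv ε) S t = p t + ε * deriv η t := by
    intro ε t ht
    have h1 : HasDerivWithinAt xE (p t) S t :=
      (hxE.differentiableOn one_ne_zero t ht).hasDerivWithinAt
    have h2 : HasDerivAt (fun t => ε * η t) (ε * deriv η t) t :=
      ((hηd t).hasDerivAt).const_mul ε
    exact (h1.add h2.hasDerivWithinAt).derivWithin (hS t ht)
  -- rewrite F of varied curve as parametric integral
  set G : Fin n → ℝ → ℝ → ℝ :=
    fun i ε t => f i t (xE t + ε * η t) (p t + ε * deriv η t) with hGdef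
  set G' : Fin n → ℝ → ℝ → ℝ := fun i ε t =>
    fy i t (xE t + ε * η t) (p t + ε * deriv η t) * η t +
    fv i t (xE t + ε * η t) (p t + ε * deriv η t) * deriv η t with hG'def
  have hFx : ∀ ε i, F (xv ε) i = ∫ t in a..b, G i ε t := by
    intro ε i
    rw [hF]
    apply intervalIntegral.integral_congr
    intro t ht
    rw [hIccIcc] at ht
    show f i t (xv ε t) (derivWithin (xv ε) S t) = G i ε t
    rw [hder ε t ht]
  -- continuity facts
  have htriple : ∀ ε, ContinuousOn (fun t => (t, xE t + ε * η t, p t + ε * deriv η t))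
      (S : Set ℝ) := by
    intro ε
    exact continuousOn_id.prodMk ((hxc.add (continuous_const.mul hηc).continuousOn).prodMk
      (hp_cont.add (continuous_const.mul hη'c).continuousOn))
  have hmemS : ∀ (t : ℝ), t ∈ S → ∀ y v : ℝ,
      (t, y, v) ∈ (Set.Icc a b ×ˢ (Set.univ : Set ℝ) ×ˢ (Set.univ : Set ℝ)) := by
    intro t ht y v; exact ⟨ht, trivial, trivial⟩
  have hG_cont : ∀ i ε, ContinuousOn (G i ε) S := by
    intro i ε
    exact (hf_cont i).comp (htriple ε) (fun t ht => hmemS t ht _ _)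
  -- joint continuity of G' on [-1,1] × S
  have hW : ContinuousOn (fun q : ℝ × ℝ => (q.2, xE q.2 + q.1 * η q.2, p q.2 + q.1 * deriv η q.2))
      ((Set.univ : Set ℝ) ×ˢ S) := by
    have hs : ContinuousOn (fun q : ℝ × ℝ => q.2) ((Set.univ : Set ℝ) ×ˢ S) :=
      continuous_snd.continuousOn
    have hsS : ∀ q : ℝ × ℝ, q ∈ (Set.univ : Set ℝ) ×ˢ S → q.2 ∈ S := fun q hq => hq.2
    refine hs.prodMk (ContinuousOn.prodMk ?_ ?_)
    · exact ((hxc.comp hs hsS).add (continuous_fst.continuousOn.mul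
        ((hηc.comp continuous_snd).continuousOn)))
    · exact ((hp_cont.comp hs hsS).add (continuous_fst.continuousOn.mul
        ((hη'c.comp continuous_snd).continuousOn)))
  have hG'_joint : ∀ i, ContinuousOn (fun q : ℝ × ℝ => G' i q.1 q.2)
      ((Set.univ : Set ℝ) ×ˢ S) := by
    intro i
    have h1 : ContinuousOn (fun q : ℝ × ℝ =>
        fy i q.2 (xE q.2 + q.1 * η q.2) (p q.2 + q.1 * deriv η q.2)) ((Set.univ : Set ℝ) ×ˢ S) :=
      (hfy_cont i).comp hW (fun q hq => hmemS q.2 hq.2 _ _)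
    have h2 : ContinuousOn (fun q : ℝ × ℝ =>
        fv i q.2 (xE q.2 + q.1 * η q.2) (p q.2 + q.1 * deriv η q.2)) ((Set.univ : Set ℝ) ×ˢ S) :=
      (hfv_cont i).comp hW (fun q hq => hmemS q.2 hq.2 _ _)
    exact (h1.mul ((hηc.comp continuous_snd).continuousOn)).add
      (h2.mul ((hη'c.comp continuous_snd).continuousOn))
  have hG'_cont : ∀ i ε, ContinuousOn (G' i ε) S := by
    intro i ε
    have hmap : ContinuousOn (fun t : ℝ => ((ε, t) : ℝ × ℝ)) S :=
      (continuous_const.prodMk continuous_id).continuousOn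
    exact (hG'_joint i).comp hmap (fun t ht => ⟨trivial, ht⟩)
  -- derivative of each component functional
  have hAder : ∀ i, HasDerivAt (fun ε => F (xv ε) i) (∫ t in a..b, G' i 0 t) 0 := by
    intro i
    have hK : IsCompact ((Set.Icc (-1:ℝ) 1) ×ˢ S) := isCompact_Icc.prod isCompact_Icc
    obtain ⟨C, hC⟩ := hK.exists_bound_of_continuousOn
      ((hG'_joint i).mono (prod_mono_left (subset_univ _)))
    have main := intervalIntegral.hasDerivAt_integral_of_dominated_loc_of_deriv_le
      (F := G i) (F' := G' i) (x₀ := (0:ℝ)) (a := a) (b := b) (μ := volume)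
      (bound := fun _ => C) (s := Metric.ball (0:ℝ) 1) (Metric.ball_mem_nhds _ one_pos)
      (Eventually.of_forall (fun ε =>
        (((hG_cont i ε).mono hIocS).aestronglyMeasurable measurableSet_uIoc)))
      (((hG_cont i 0).mono (hIccIcc ▸ subset_rfl)).intervalIntegrable)
      (((hG'_cont i 0).mono hIocS).aestronglyMeasurable measurableSet_uIoc)
      (ae_of_all _ (fun t ht ε hε => by
        have : (ε, t) ∈ (Set.Icc (-1:ℝ) 1) ×ˢ S := by
          constructor
          · have : |ε| < 1 := by simpa [Real.dist_eq] using hε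
            exact ⟨by linarith [abs_lt.1 this], by linarith [abs_lt.1 this]⟩
          · exact hIocS ht
        simpa using hC (ε, t) this))
      intervalIntegrable_const
      (ae_of_all _ (fun t ht ε hε => by
        have htS : t ∈ S := hIocS ht
        have hline := hasDerivAt_line_comp (fun y v => f i t y v)
          (fun y v => fy i t y v) (fun y v => fv i t y v)
          (fun y v => hfy i t htS y v) (fun y v => hfv i t htS y v)
          (((hfy_cont i).comp_continuous
            ((continuous_const.prodMk (continuous_fst.prodMk continuous_snd)) : Continuous
              (fun yv : ℝ × ℝ => (t, yv.1, yv.2)))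
            (fun yv => hmemS t htS yv.1 yv.2)))
          (xE t) (p t) (η t) (deriv η t) ε
        exact hline))
    have h2 := main.2
    have heq : (fun ε => ∫ t in a..b, G i ε t) = (fun ε => F (xv ε) i) := by
      funext ε; rw [hFx]
    rwa [heq] at h2
  -- package the derivatives
  set A : Fin n → ℝ := fun i => ∫ t in a..b, G' i 0 t with hAdef
  have hx0 : xv 0 = xE := by funext t; simp [hxvdef]
  have hFvec : HasDerivAt (fun ε => F (xv ε)) A 0 := hasDerivAt_pi.2 (fun i => hAder i)
  have hHd : HasFDerivAt H (fderiv ℝ H (F xE)) (F xE) :=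
    (hH.differentiable one_ne_zero (F xE)).hasFDerivAt
  have hΦ : HasDerivAt (fun ε => L (xv ε)) (fderiv ℝ H (F xE) A) 0 := by
    have hHd' : HasFDerivAt H (fderiv ℝ H (F xE)) (F (xv 0)) := by rw [hx0]; exact hHd
    have h1 := hHd'.comp_hasDerivAt 0 hFvec
    have heq : (H ∘ fun ε => F (xv ε)) = fun ε => L (xv ε) := by
      funext ε; simp [Function.comp, hL]
    rwa [heq] at h1
  -- bounds for η and its derivative
  obtain ⟨M, hM⟩ := (isCompact_Icc (a := a) (b := b)).exists_bound_of_continuousOn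
    hηc.continuousOn
  obtain ⟨M', hM'⟩ := (isCompact_Icc (a := a) (b := b)).exists_bound_of_continuousOn
    hη'c.continuousOn
  have haS : a ∈ S := ⟨le_rfl, hab.le⟩
  haveI : Nonempty (Set.Icc a b) := ⟨⟨a, haS⟩⟩
  have hMnn : 0 ≤ M := le_trans (norm_nonneg _) (hM a haS)
  have hM'nn : 0 ≤ M' := le_trans (norm_nonneg _) (hM' a haS)
  have hC1 : ∀ ε : ℝ, C1Norm a b (fun t => xv ε t - xE t) ≤ |ε| * (M + M') := by
    intro ε
    have h1 : (fun t => xv ε t - xE t) = fun t => ε * η t := by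
      funext t; simp [hxvdef]
    rw [h1]
    unfold C1Norm
    have hsup1 : (⨆ t : Set.Icc a b, |ε * η t|) ≤ |ε| * M := by
      apply ciSup_le
      intro t
      rw [abs_mul]
      exact mul_le_mul_of_nonneg_left (by simpa [Real.norm_eq_abs] using hM t t.2)
        (abs_nonneg ε)
    have hder2 : ∀ t : Set.Icc a b,
        derivWithin (fun t => ε * η t) (Set.Icc a b) (t : ℝ) = ε * deriv η (t : ℝ) :=
      fun t => (((hηd (t : ℝ)).hasDerivAt.const_mul ε).hasDerivWithinAt).derivWithin
        (hS (t : ℝ) t.2)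
    have hsup2 : (⨆ t : Set.Icc a b,
        |derivWithin (fun t => ε * η t) (Set.Icc a b) (t : ℝ)|) ≤ |ε| * M' := by
      apply ciSup_le
      intro t
      rw [hder2 t, abs_mul]
      exact mul_le_mul_of_nonneg_left (by simpa [Real.norm_eq_abs] using hM' t t.2)
        (abs_nonneg ε)
    calc _ ≤ |ε| * M + |ε| * M' := add_le_add hsup1 hsup2
      _ = |ε| * (M + M') := by ring
  -- extremality kills the derivative
  have hzero : fderiv ℝ H (F xE) A = 0 := by
    have hball : ∀ δ : ℝ, 0 < δ → ∀ ε ∈ Metric.ball (0:ℝ) (δ / (M + M' + 1)),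
        C1Norm a b (fun t => xv ε t - xE t) < δ := by
      intro δ hδ ε hε
      have hεb : |ε| < δ / (M + M' + 1) := by simpa [Real.dist_eq] using hε
      calc C1Norm a b (fun t => xv ε t - xE t) ≤ |ε| * (M + M') := hC1 ε
        _ ≤ |ε| * (M + M' + 1) := by
            apply mul_le_mul_of_nonneg_left (by linarith) (abs_nonneg ε)
        _ < δ / (M + M' + 1) * (M + M' + 1) := by
            apply mul_lt_mul_of_pos_right hεb (by positivity)
        _ = δ := by field_simp
    rcases hext with ⟨δ, hδ, hmin⟩ | ⟨δ, hδ, hmax⟩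
    · refine IsLocalMin.hasDerivAt_eq_zero ?_ hΦ
      apply Filter.eventually_of_mem (Metric.ball_mem_nhds (0:ℝ) (by positivity :
        (0:ℝ) < δ / (M + M' + 1)))
      intro ε hε
      have := hmin (xv ε) (hxv_cd ε) (hxvb ε) (hball δ hδ ε hε)
      simpa [hx0] using this
    · refine IsLocalMax.hasDerivAt_eq_zero ?_ hΦ
      apply Filter.eventually_of_mem (Metric.ball_mem_nhds (0:ℝ) (by positivity :
        (0:ℝ) < δ / (M + M' + 1)))
      intro ε hε
      have := hmax (xv ε) (hxv_cd ε) (hxvb ε) (hball δ hδ ε hε)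
      simpa [hx0] using this
  -- expand the Fréchet derivative on the basis
  have hsum : ∑ i, c i * A i = 0 := by
    have hA_eq : A = ∑ i, A i • (Pi.single i (1:ℝ) : Fin n → ℝ) := by
      funext j
      rw [Finset.sum_apply]
      simp [Pi.single_apply]
    have hexp : (fderiv ℝ H (F xE)) A = ∑ i, c i * A i := by
      conv_lhs => rw [hA_eq]
      rw [map_sum (fderiv ℝ H (F xE)) (fun i => A i • (Pi.single i (1:ℝ) : Fin n → ℝ))
        Finset.univ]
      apply Finset.sum_congr rfl
      intro i _
      rw [map_smul (fderiv ℝ H (F xE)) (A i) (Pi.single i (1:ℝ) : Fin n → ℝ), smul_eq_mul]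
      simp [hcdef, mul_comm]
    rw [← hexp]
    exact hzero
  -- turn the sum of integrals into the integral in the statement
  have hint : ∀ i : Fin n, IntervalIntegrable (fun t => c i * G' i 0 t) volume a b := by
    intro i
    apply ContinuousOn.intervalIntegrable
    rw [hIccIcc]
    exact continuousOn_const.mul (hG'_cont i 0)
  have hswap : ∑ i, c i * A i = ∫ t in a..b, ∑ i, c i * G' i 0 t := by
    rw [intervalIntegral.integral_finset_sum (fun i _ => hint i)]
    apply Finset.sum_congr rfl
    intro i _
    rw [hAdef, intervalIntegral.integral_const_mul]
  have hptw : (fun t => ∑ i, c i * G' i 0 t) = fun t =>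
      ((∑ i, c i * fy i t (xE t) (p t)) * η t + (∑ i, c i * fv i t (xE t) (p t)) * deriv η t) := by
    funext t
    rw [Finset.sum_mul, Finset.sum_mul, ← Finset.sum_add_distrib]
    apply Finset.sum_congr rfl
    intro i _
    simp only [hG'def, zero_mul, add_zero]
    ring
  rw [show (fun t => derivWithin xE (Set.Icc a b) t) = p from rfl] at *
  calc ∫ t in a..b, ((∑ i, fderiv ℝ H (F xE) (Pi.single i 1) * fy i t (xE t) (p t)) * η t +
        (∑ i, fderiv ℝ H (F xE) (Pi.single i 1) * fv i t (xE t) (p t)) * deriv η t)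
      = ∫ t in a..b, ∑ i, c i * G' i 0 t := by rw [hptw]
    _ = ∑ i, c i * A i := hswap.symm
    _ = 0 := hsum

/-- Natural boundary condition at `a` for the composite functional
`L[x] = H(F₁[x], …, F_n[x])` when `x(a)` is free and `x(b) = x_b` is fixed. -/
theorem composite_natural_boundary_left
    (a b : ℝ) (hab : a < b) (n : ℕ) (hn : 1 ≤ n)
    (H : (Fin n → ℝ) → ℝ) (hH : ContDiff ℝ 1 H)
    (f fy fv : Fin n → ℝ → ℝ → ℝ → ℝ)
    (hf_cont : ∀ i, ContinuousOn (fun p : ℝ × ℝ × ℝ => f i p.1 p.2.1 p.2.2)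
      (Set.Icc a b ×ˢ (Set.univ : Set ℝ) ×ˢ (Set.univ : Set ℝ)))
    (hfy : ∀ i, ∀ t ∈ Set.Icc a b, ∀ y v : ℝ,
      HasDerivAt (fun y' => f i t y' v) (fy i t y v) y)
    (hfv : ∀ i, ∀ t ∈ Set.Icc a b, ∀ y v : ℝ,
      HasDerivAt (fun v' => f i t y v') (fv i t y v) v)
    (hfy_cont : ∀ i, ContinuousOn (fun p : ℝ × ℝ × ℝ => fy i p.1 p.2.1 p.2.2)
      (Set.Icc a b ×ˢ (Set.univ : Set ℝ) ×ˢ (Set.univ : Set ℝ)))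
    (hfv_cont : ∀ i, ContinuousOn (fun p : ℝ × ℝ × ℝ => fv i p.1 p.2.1 p.2.2)
      (Set.Icc a b ×ˢ (Set.univ : Set ℝ) ×ˢ (Set.univ : Set ℝ)))
    (xb : ℝ) (xE : ℝ → ℝ)
    (hxE : ContDiffOn ℝ 1 xE (Set.Icc a b))
    (hxEb : xE b = xb)
    (F : (ℝ → ℝ) → Fin n → ℝ)
    (hF : ∀ x i, F x i = ∫ t in a..b, f i t (x t) (derivWithin x (Set.Icc a b) t))
    (L : (ℝ → ℝ) → ℝ)
    (hL : ∀ x, L x = H (F x))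
    (hext :
      (∃ δ > 0, ∀ x : ℝ → ℝ, ContDiffOn ℝ 1 x (Set.Icc a b) →
        x b = xb → C1Norm a b (fun t => x t - xE t) < δ → L xE ≤ L x) ∨
      (∃ δ > 0, ∀ x : ℝ → ℝ, ContDiffOn ℝ 1 x (Set.Icc a b) →
        x b = xb → C1Norm a b (fun t => x t - xE t) < δ → L x ≤ L xE)) :
    ∑ i, fderiv ℝ H (F xE) (Pi.single i 1) *
      fv i a (xE a) (derivWithin xE (Set.Icc a b) a) = 0 := by
  have hfirst := first_variation a b hab n H hH f fy fv hf_cont hfy hfv hfy_cont hfv_cont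
    xb xE hxE hxEb F hF L hL hext
  set S := Set.Icc a b with hSdef
  have hS : UniqueDiffOn ℝ S := uniqueDiffOn_Icc hab
  have hIccIcc : uIcc a b = S := uIcc_of_le hab.le
  set p := fun t => derivWithin xE S t with hpdef
  have hp_cont : ContinuousOn p S := hxE.continuousOn_derivWithin hS le_rfl
  have hxc : ContinuousOn xE S := hxE.continuousOn
  set c : Fin n → ℝ := fun i => fderiv ℝ H (F xE) (Pi.single i 1) with hcdef
  -- clamping map
  set e : ℝ → ℝ := fun t => max a (min b t) with hedef
  have he_cont : Continuous e := continuous_const.max (continuous_const.min continuous_id)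
  have heS : ∀ t, e t ∈ S := fun t =>
    ⟨le_max_left _ _, max_le hab.le (min_le_left _ _)⟩
  have het : ∀ t ∈ S, e t = t := by
    intro t ht
    rw [hedef]
    simp only [min_eq_right ht.2, max_eq_right ht.1]
  -- extended g and h
  have htriple : Continuous (fun t => ((e t, xE (e t), p (e t)) : ℝ × ℝ × ℝ)) :=
    he_cont.prodMk ((hxc.comp_continuous he_cont heS).prodMk
      (hp_cont.comp_continuous he_cont heS))
  set gg : ℝ → ℝ := fun t => ∑ i, c i * fy i (e t) (xE (e t)) (p (e t)) with hggdef
  set hh : ℝ → ℝ := fun t => ∑ i, c i * fv i (e t) (xE (e t)) (p (e t)) with hhhdef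
  have hggc : Continuous gg := by
    apply continuous_finset_sum
    intro i _
    exact continuous_const.mul ((hfy_cont i).comp_continuous htriple
      (fun t => ⟨heS t, trivial, trivial⟩))
  have hhhc : Continuous hh := by
    apply continuous_finset_sum
    intro i _
    exact continuous_const.mul ((hfv_cont i).comp_continuous htriple
      (fun t => ⟨heS t, trivial, trivial⟩))
  -- primitive of gg
  set Gf : ℝ → ℝ := fun t => ∫ s in a..t, gg s with hGfdef
  have hGd : ∀ t, HasDerivAt Gf (gg t) t := fun t =>
    intervalIntegral.integral_hasDerivAt_right (hggc.intervalIntegrable a t)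
      (hggc.stronglyMeasurableAtFilter volume (nhds t)) hggc.continuousAt
  have hGc : Continuous Gf := by
    rw [continuous_iff_continuousAt]
    exact fun t => (hGd t).differentiableAt.continuousAt
  have hGa : Gf a = 0 := intervalIntegral.integral_same
  -- the test variation
  set ψ : ℝ → ℝ := fun t => hh t - Gf t with hψdef
  have hψc : Continuous ψ := hhhc.sub hGc
  set η : ℝ → ℝ := fun t => ∫ s in b..t, ψ s with hηdef
  have hηd : ∀ t, HasDerivAt η (ψ t) t := fun t =>
    intervalIntegral.integral_hasDerivAt_right (hψc.intervalIntegrable b t)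
      (hψc.stronglyMeasurableAtFilter volume (nhds t)) hψc.continuousAt
  have hηderiv : deriv η = ψ := funext fun t => (hηd t).deriv
  have hη : ContDiff ℝ 1 η := by
    rw [contDiff_one_iff_deriv]
    exact ⟨fun t => (hηd t).differentiableAt, by rw [hηderiv]; exact hψc⟩
  have hηb : η b = 0 := intervalIntegral.integral_same
  have hkey := hfirst η hη hηb
  -- rewrite the integrand via the extensions
  have hmain : ∫ t in a..b, (gg t * η t + hh t * ψ t) = 0 := by
    rw [← hkey]
    apply intervalIntegral.integral_congr
    intro t ht
    rw [hIccIcc] at ht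
    simp only [hggdef, hhhdef, het t ht, hηderiv, hcdef, hpdef]
  -- integration by parts
  have hηc : Continuous η := hη.continuous
  have hibp := intervalIntegral.integral_mul_deriv_eq_deriv_mul
    (u := Gf) (v := η) (u' := gg) (v' := ψ) (a := a) (b := b)
    (fun x _ => hGd x) (fun x _ => hηd x)
    (hggc.intervalIntegrable a b) (hψc.intervalIntegrable a b)
  rw [hηb, hGa] at hibp
  -- split the main integral
  have hint1 : IntervalIntegrable (fun t => gg t * η t) volume a b :=
    (hggc.mul hηc).intervalIntegrable a b
  have hint2 : IntervalIntegrable (fun t => hh t * ψ t) volume a b :=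
    (hhhc.mul hψc).intervalIntegrable a b
  rw [intervalIntegral.integral_add hint1 hint2] at hmain
  -- deduce ∫ ψ² = 0
  have hsq : ∫ t in a..b, ψ t ^ 2 = 0 := by
    have h1 : ∫ t in a..b, gg t * η t = - ∫ t in a..b, Gf t * ψ t := by
      rw [hibp]; ring
    have h2 : (∫ t in a..b, hh t * ψ t) - (∫ t in a..b, Gf t * ψ t) = ∫ t in a..b, ψ t ^ 2 := by
      rw [← intervalIntegral.integral_sub (f := fun t => hh t * ψ t) (g := fun t => Gf t * ψ t) ((hhhc.mul hψc).intervalIntegrable a b)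
        ((hGc.mul hψc).intervalIntegrable a b)]
      apply intervalIntegral.integral_congr
      intro t _
      simp only [hψdef]
      ring
    linarith [hmain, h1, h2]
  -- positivity argument: ψ = 0 at a
  have hψa : ψ a = 0 := by
    by_contra hne
    have hpos : 0 < ψ a ^ 2 := by positivity
    have hcont : ContinuousAt (fun t => ψ t ^ 2) a := (hψc.pow 2).continuousAt
    rw [Metric.continuousAt_iff] at hcont
    obtain ⟨r, hr, hr'⟩ := hcont (ψ a ^ 2 / 2) (by positivity)
    set b' : ℝ := min b (a + r / 2) with hb'def
    have hab' : a < b' := lt_min hab (by linarith)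
    have hb'b : b' ≤ b := min_le_left _ _
    have hposon : ∀ t ∈ Set.Ioo a b', 0 < ψ t ^ 2 := by
      intro t ht
      have hd : dist t a < r := by
        rw [Real.dist_eq, abs_of_pos (by linarith [ht.1])]
        have := lt_of_lt_of_le ht.2 (min_le_right b (a + r / 2))
        linarith
      have := hr' hd
      simp only [Real.dist_eq, abs_sub_lt_iff] at this
      have h3 : ψ a ^ 2 / 2 < ψ t ^ 2 := by linarith [this.2, hpos]
      exact lt_trans (half_pos hpos) h3
    have hsplit : (∫ t in a..b', ψ t ^ 2) + ∫ t in b'..b, ψ t ^ 2 = ∫ t in a..b, ψ t ^ 2 :=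
      intervalIntegral.integral_add_adjacent_intervals
        ((hψc.pow 2).intervalIntegrable a b') ((hψc.pow 2).intervalIntegrable b' b)
    have hp1 : 0 < ∫ t in a..b', ψ t ^ 2 :=
      intervalIntegral.intervalIntegral_pos_of_pos_on
        ((hψc.pow 2).intervalIntegrable a b') hposon hab'
    have hp2 : 0 ≤ ∫ t in b'..b, ψ t ^ 2 :=
      intervalIntegral.integral_nonneg hb'b (fun u _ => by positivity)
    rw [hsq] at hsplit
    linarith
  -- conclude
  have hha : hh a = 0 := by
    have : ψ a = hh a - Gf a := rfl
    rw [this, hGa, sub_zero] at hψa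
    exact hψa
  have hea : e a = a := het a ⟨le_rfl, hab.le⟩
  calc ∑ i, fderiv ℝ H (F xE) (Pi.single i 1) * fv i a (xE a) (derivWithin xE S a)
      = hh a := by simp only [hhhdef, hcdef, hpdef, hea]
    _ = 0 := hha
end

section
/- Let a < b be real numbers, n ≥ 1, H : ℝⁿ → ℝ be continuously differentiable with partial derivatives H'_1, …, H'_n, and for i = 1, …, n let f_i : [a,b] × ℝ × ℝ → ℝ be continuous with continuous partial derivatives f_{iy} and f_{iv} with respect to its second and third arguments. Suppose x̃ : [a,b] → ℝ is C¹ with x̃(a) = x_a (the value x(b) is not specified), and x̃ is a weak local extremizer of L[x] = H(F_1[x], …, F_n[x]): there exists δ > 0 such that L[x̃] ≤ L[x] for every C¹ function x : [a,b] → ℝ with x(a) = x_a and ‖x − x̃‖₁ < δ (or L[x̃] ≥ L[x] for all such x). Then the natural boundary condition ∑_{i=1}^{n} H'_i(F_1[x̃], …, F_n[x̃]) · f_{iv}(b, x̃(b), x̃'(b)) = 0 holds. -/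
open Set intervalIntegral MeasureTheory Metric
open scoped Interval

/-- MVT helper. -/
lemma mvt' (F F' : ℝ → ℝ) (hF : ∀ x, HasDerivAt F (F' x) x) (u w : ℝ) :
    ∃ c, |c - u| ≤ |w - u| ∧ F w - F u = F' c * (w - u) := by
  rcases lt_trichotomy u w with h | h | h
  · obtain ⟨c, hc, hc2⟩ := exists_hasDerivAt_eq_slope F F' h
      (fun x _ => (hF x).continuousAt.continuousWithinAt) (fun x _ => hF x)
    refine ⟨c, ?_, ?_⟩
    · rw [abs_of_pos (sub_pos.2 hc.1), abs_of_pos (sub_pos.2 h)]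
      linarith [hc.2]
    · rw [hc2, div_mul_cancel₀ _ (by linarith : w - u ≠ 0)]
  · exact ⟨u, by simp [h], by simp [h]⟩
  · obtain ⟨c, hc, hc2⟩ := exists_hasDerivAt_eq_slope F F' h
      (fun x _ => (hF x).continuousAt.continuousWithinAt) (fun x _ => hF x)
    refine ⟨c, ?_, ?_⟩
    · rw [abs_of_neg (by linarith [hc.2] : c - u < 0), abs_of_neg (by linarith : w - u < 0)]
      linarith [hc.1]
    · rw [hc2, div_mul_eq_mul_div, eq_comm, div_eq_iff (by linarith : u - w ≠ 0)]
      ring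

lemma key0 (g gy gv : ℝ → ℝ → ℝ)
    (hy : ∀ y v, HasDerivAt (fun y' => g y' v) (gy y v) y)
    (hv : ∀ y v, HasDerivAt (fun v' => g y v') (gv y v) v)
    (hcy : Continuous (fun r : ℝ × ℝ => gy r.1 r.2))
    (hcv : Continuous (fun r : ℝ × ℝ => gv r.1 r.2))
    (Y V p q : ℝ) :
    HasDerivAt (fun h => g (Y + h * p) (V + h * q)) (gy Y V * p + gv Y V * q) 0 := by
  rw [hasDerivAt_iff_isLittleO_nhds_zero, Asymptotics.isLittleO_iff]
  intro c hc
  have hS : (0:ℝ) < |p| + |q| + 1 := by positivity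
  set c' : ℝ := c / (|p| + |q| + 1) with hc'def
  have hc' : 0 < c' := div_pos hc hS
  obtain ⟨δ₁, hδ₁, h1⟩ := Metric.continuousAt_iff.1 (hcy.continuousAt (x := (Y, V))) c' hc'
  obtain ⟨δ₂, hδ₂, h2⟩ := Metric.continuousAt_iff.1 (hcv.continuousAt (x := (Y, V))) c' hc'
  set δ : ℝ := min δ₁ δ₂ with hδdef
  have hδ : 0 < δ := lt_min hδ₁ hδ₂
  have hev : ∀ᶠ h : ℝ in nhds 0, |h| < δ / (|p| + |q| + 1) := by
    have := Metric.ball_mem_nhds (0:ℝ) (div_pos hδ hS)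
    filter_upwards [this] with h hh
    simpa [Real.dist_eq] using hh
  filter_upwards [hev] with h hh
  obtain ⟨c₁, hc₁, e₁⟩ := mvt' (fun y' => g y' (V + h*q)) (fun y' => gy y' (V + h*q))
    (fun x => hy x (V + h*q)) Y (Y + h*p)
  obtain ⟨c₂, hc₂, e₂⟩ := mvt' (g Y) (gv Y) (fun x => hv Y x) V (V + h*q)
  have hb1 : |c₁ - Y| ≤ |h| * |p| := by
    simpa [abs_mul, add_sub_cancel_left] using hc₁
  have hb2 : |c₂ - V| ≤ |h| * |q| := by
    simpa [abs_mul, add_sub_cancel_left] using hc₂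
  have hsmall : |h| * (|p| + |q| + 1) < δ := by
    rw [← lt_div_iff₀ hS]; exact hh
  have hd1 : dist (c₁, V + h*q) (Y, V) < δ₁ := by
    rw [Prod.dist_eq]
    have i1 : dist c₁ Y < δ₁ := by
      rw [Real.dist_eq]
      calc |c₁ - Y| ≤ |h| * |p| := hb1
        _ ≤ |h| * (|p| + |q| + 1) := by nlinarith [abs_nonneg h, abs_nonneg q]
        _ < δ := hsmall
        _ ≤ δ₁ := min_le_left _ _
    have i2 : dist (V + h*q) V < δ₁ := by
      rw [Real.dist_eq]
      calc |V + h*q - V| = |h| * |q| := by rw [add_sub_cancel_left, abs_mul]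
        _ ≤ |h| * (|p| + |q| + 1) := by nlinarith [abs_nonneg h, abs_nonneg p]
        _ < δ := hsmall
        _ ≤ δ₁ := min_le_left _ _
    exact max_lt i1 i2
  have hd2 : dist (Y, c₂) (Y, V) < δ₂ := by
    rw [Prod.dist_eq]
    have i2 : dist c₂ V < δ₂ := by
      rw [Real.dist_eq]
      calc |c₂ - V| ≤ |h| * |q| := hb2
        _ ≤ |h| * (|p| + |q| + 1) := by nlinarith [abs_nonneg h, abs_nonneg p]
        _ < δ := hsmall
        _ ≤ δ₂ := min_le_right _ _
    simpa [Real.dist_eq] using i2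
  have g1 : |gy c₁ (V + h*q) - gy Y V| < c' := by
    simpa [Real.dist_eq] using h1 hd1
  have g2 : |gv Y c₂ - gv Y V| < c' := by
    simpa [Real.dist_eq] using h2 hd2
  have key : g (Y + h*p) (V + h*q) - g (Y + 0*p) (V + 0*q) - h • (gy Y V * p + gv Y V * q)
      = (gy c₁ (V + h*q) - gy Y V) * (h * p) + (gv Y c₂ - gv Y V) * (h * q) := by
    simp only [smul_eq_mul, zero_mul, add_zero]
    linear_combination e₁ + e₂
  simp only [zero_add]
  rw [key]
  calc ‖(gy c₁ (V + h*q) - gy Y V) * (h * p) + (gv Y c₂ - gv Y V) * (h * q)‖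
      ≤ |(gy c₁ (V + h*q) - gy Y V) * (h * p)| + |(gv Y c₂ - gv Y V) * (h * q)| :=
        abs_add_le _ _
    _ ≤ c' * (|h| * |p|) + c' * (|h| * |q|) := by
        rw [abs_mul, abs_mul, abs_mul, abs_mul]
        have A := mul_le_mul_of_nonneg_right g1.le (by positivity : (0:ℝ) ≤ |h| * |p|)
        have B := mul_le_mul_of_nonneg_right g2.le (by positivity : (0:ℝ) ≤ |h| * |q|)
        linarith
    _ ≤ c' * (|p| + |q| + 1) * |h| := by nlinarith [abs_nonneg h, hc'.le]
    _ = c * |h| := by rw [hc'def, div_mul_cancel₀ _ hS.ne']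
    _ = c * ‖h‖ := rfl

lemma key1 (g gy gv : ℝ → ℝ → ℝ)
    (hy : ∀ y v, HasDerivAt (fun y' => g y' v) (gy y v) y)
    (hv : ∀ y v, HasDerivAt (fun v' => g y v') (gv y v) v)
    (hcy : Continuous (fun r : ℝ × ℝ => gy r.1 r.2))
    (hcv : Continuous (fun r : ℝ × ℝ => gv r.1 r.2))
    (y v p q ε : ℝ) :
    HasDerivAt (fun e => g (y + e * p) (v + e * q))
      (gy (y + ε * p) (v + ε * q) * p + gv (y + ε * p) (v + ε * q) * q) ε := by
  have h0 := key0 g gy gv hy hv hcy hcv (y + ε * p) (v + ε * q) p q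
  have hsub : HasDerivAt (fun e : ℝ => e - ε) 1 ε := (hasDerivAt_id ε).sub_const ε
  have hcomp := HasDerivAt.comp ε (by simpa using h0) hsub
  have heq : ((fun h => g (y + ε * p + h * p) (v + ε * q + h * q)) ∘ fun e => e - ε)
      = fun e => g (y + e * p) (v + e * q) := by
    funext e
    show g (y + ε * p + (e - ε) * p) (v + ε * q + (e - ε) * q) = _
    rw [show y + ε * p + (e - ε) * p = y + e * p from by ring,
      show v + ε * q + (e - ε) * q = v + e * q from by ring]
  rw [heq] at hcomp
  simpa using hcomp

lemma sqmax_hasDerivAt (z : ℝ) :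
    HasDerivAt (fun w : ℝ => (max w 0)^2) (2 * max z 0) z := by
  rcases lt_trichotomy z 0 with h | h | h
  · have hz : HasDerivAt (fun _ : ℝ => (0:ℝ)) 0 z := hasDerivAt_const z 0
    rw [max_eq_right h.le, mul_zero]
    refine hz.congr_of_eventuallyEq ?_
    filter_upwards [IsOpen.mem_nhds isOpen_Iio h] with w hw
    rw [max_eq_right (le_of_lt hw)]
    norm_num
  · subst h
    rw [hasDerivAt_iff_isLittleO_nhds_zero, Asymptotics.isLittleO_iff]
    intro c hc
    have hev : ∀ᶠ h : ℝ in nhds 0, |h| < c := by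
      filter_upwards [Metric.ball_mem_nhds (0:ℝ) hc] with h hh
      simpa [Real.dist_eq] using hh
    filter_upwards [hev] with h hh
    simp only [zero_add, max_self, mul_zero, smul_zero, sub_zero]
    rw [Real.norm_eq_abs, Real.norm_eq_abs]
    have h2 : (0:ℝ) ≤ (max h 0)^2 := by positivity
    have h1 : (max h 0)^2 ≤ h^2 := by
      rcases le_or_gt h 0 with h' | h'
      · rw [max_eq_right h']
        simpa using sq_nonneg h
      · rw [max_eq_left h'.le]
    have habs : |(max h 0) ^ 2 - 0 ^ 2| = (max h 0)^2 := by
      simpa using abs_of_nonneg h2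
    rw [habs]
    calc (max h 0)^2 ≤ h^2 := h1
      _ = |h| * |h| := by rw [← sq_abs, sq]
      _ ≤ c * |h| := mul_le_mul_of_nonneg_right hh.le (abs_nonneg h)
  · have hz : HasDerivAt (fun w : ℝ => w^2) (2 * z) z := by
      simpa using hasDerivAt_pow 2 z
    rw [max_eq_left h.le]
    refine hz.congr_of_eventuallyEq ?_
    filter_upwards [IsOpen.mem_nhds isOpen_Ioi h] with w hw
    rw [max_eq_left (le_of_lt hw)]




set_option maxHeartbeats 2000000 in
/-- Natural boundary condition at `b` for the composite functional
`L[x] = H(F₁[x], …, F_n[x])` when `x(b)` is free and `x(a) = x_a` is fixed. -/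
theorem composite_natural_boundary_right
    (a b : ℝ) (hab : a < b) (n : ℕ) (hn : 1 ≤ n)
    (H : (Fin n → ℝ) → ℝ) (hH : ContDiff ℝ 1 H)
    (f fy fv : Fin n → ℝ → ℝ → ℝ → ℝ)
    (hf_cont : ∀ i, ContinuousOn (fun p : ℝ × ℝ × ℝ => f i p.1 p.2.1 p.2.2)
      (Set.Icc a b ×ˢ (Set.univ : Set ℝ) ×ˢ (Set.univ : Set ℝ)))
    (hfy : ∀ i, ∀ t ∈ Set.Icc a b, ∀ y v : ℝ,
      HasDerivAt (fun y' => f i t y' v) (fy i t y v) y)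
    (hfv : ∀ i, ∀ t ∈ Set.Icc a b, ∀ y v : ℝ,
      HasDerivAt (fun v' => f i t y v') (fv i t y v) v)
    (hfy_cont : ∀ i, ContinuousOn (fun p : ℝ × ℝ × ℝ => fy i p.1 p.2.1 p.2.2)
      (Set.Icc a b ×ˢ (Set.univ : Set ℝ) ×ˢ (Set.univ : Set ℝ)))
    (hfv_cont : ∀ i, ContinuousOn (fun p : ℝ × ℝ × ℝ => fv i p.1 p.2.1 p.2.2)
      (Set.Icc a b ×ˢ (Set.univ : Set ℝ) ×ˢ (Set.univ : Set ℝ)))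
    (xa : ℝ) (xE : ℝ → ℝ)
    (hxE : ContDiffOn ℝ 1 xE (Set.Icc a b))
    (hxEa : xE a = xa)
    (F : (ℝ → ℝ) → Fin n → ℝ)
    (hF : ∀ x i, F x i = ∫ t in a..b, f i t (x t) (derivWithin x (Set.Icc a b) t))
    (L : (ℝ → ℝ) → ℝ)
    (hL : ∀ x, L x = H (F x))
    (hext :
      (∃ δ > 0, ∀ x : ℝ → ℝ, ContDiffOn ℝ 1 x (Set.Icc a b) →
        x a = xa → C1Norm a b (fun t => x t - xE t) < δ → L xE ≤ L x) ∨
      (∃ δ > 0, ∀ x : ℝ → ℝ, ContDiffOn ℝ 1 x (Set.Icc a b) →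
        x a = xa → C1Norm a b (fun t => x t - xE t) < δ → L x ≤ L xE)) :
    ∑ i, fderiv ℝ H (F xE) (Pi.single i 1) *
      fv i b (xE b) (derivWithin xE (Set.Icc a b) b) = 0 := by
  have hUD : UniqueDiffOn ℝ (Set.Icc a b) := uniqueDiffOn_Icc hab
  have hA : a ∈ Set.Icc a b := ⟨le_rfl, hab.le⟩
  have hB : b ∈ Set.Icc a b := ⟨hab.le, le_rfl⟩
  set x' : ℝ → ℝ := derivWithin xE (Set.Icc a b) with hx'def
  have hx'c : ContinuousOn x' (Set.Icc a b) := hxE.continuousOn_derivWithin hUD le_rfl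
  have hxc : ContinuousOn xE (Set.Icc a b) := hxE.continuousOn
  set c : Fin n → ℝ := fun i => fderiv ℝ H (F xE) (Pi.single i 1) with hcdef
  -- slice continuity
  have hslice : ∀ G : Fin n → ℝ → ℝ → ℝ → ℝ,
      (∀ i, ContinuousOn (fun p : ℝ × ℝ × ℝ => G i p.1 p.2.1 p.2.2)
        (Set.Icc a b ×ˢ (Set.univ : Set ℝ) ×ˢ (Set.univ : Set ℝ))) →
      ∀ i, ∀ t ∈ Set.Icc a b, Continuous (fun r : ℝ × ℝ => G i t r.1 r.2) := by
    intro G hG i t ht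
    have hmap : Continuous (fun r : ℝ × ℝ => ((t, r.1, r.2) : ℝ × ℝ × ℝ)) := by continuity
    exact (hG i).comp_continuous hmap (fun r => ⟨ht, trivial, trivial⟩)
  -- composed continuity on Icc
  have hcomp : ∀ G : Fin n → ℝ → ℝ → ℝ → ℝ,
      (∀ i, ContinuousOn (fun p : ℝ × ℝ × ℝ => G i p.1 p.2.1 p.2.2)
        (Set.Icc a b ×ˢ (Set.univ : Set ℝ) ×ˢ (Set.univ : Set ℝ))) →
      ∀ i (u w : ℝ → ℝ), ContinuousOn u (Set.Icc a b) → ContinuousOn w (Set.Icc a b) →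
      ContinuousOn (fun t => G i t (u t) (w t)) (Set.Icc a b) := by
    intro G hG i u w hu hw
    exact (hG i).comp (continuousOn_id.prodMk (hu.prodMk hw)) (fun t ht => ⟨ht, trivial, trivial⟩)
  set ψ : ℝ → ℝ := fun t => ∑ i, c i * fy i t (xE t) (x' t) with hψdef
  set φ : ℝ → ℝ := fun t => ∑ i, c i * fv i t (xE t) (x' t) with hφdef
  have hψc : ContinuousOn ψ (Set.Icc a b) := by
    apply continuousOn_finset_sum
    intro i _
    exact ((hcomp fy hfy_cont i xE x' hxc hx'c).const_smul (c i))
  have hφc : ContinuousOn φ (Set.Icc a b) := by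
    apply continuousOn_finset_sum
    intro i _
    exact ((hcomp fv hfv_cont i xE x' hxc hx'c).const_smul (c i))
  -- the weak Euler-Lagrange identity
  have aux : ∀ η η' : ℝ → ℝ, (∀ t, HasDerivAt η (η' t) t) → Continuous η' → η a = 0 →
      ∫ t in a..b, (ψ t * η t + φ t * η' t) = 0 := by
    intro η η' hη hη'c hηa
    have hηc : Continuous η := by
      rw [continuous_iff_continuousAt]; exact fun t => (hη t).continuousAt
    obtain ⟨Mη, hMη⟩ := isCompact_Icc.exists_bound_of_continuousOn hηc.continuousOn
    obtain ⟨Mη', hMη'⟩ := isCompact_Icc.exists_bound_of_continuousOn hη'c.continuousOn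
    obtain ⟨MxE, hMxE⟩ := isCompact_Icc.exists_bound_of_continuousOn hxc
    obtain ⟨Mx', hMx'⟩ := isCompact_Icc.exists_bound_of_continuousOn hx'c
    have hMη0 : 0 ≤ Mη := le_trans (norm_nonneg _) (hMη a hA)
    have hMη'0 : 0 ≤ Mη' := le_trans (norm_nonneg _) (hMη' a hA)
    have hMxE0 : 0 ≤ MxE := le_trans (norm_nonneg _) (hMxE a hA)
    have hMx'0 : 0 ≤ Mx' := le_trans (norm_nonneg _) (hMx' a hA)
    set R : ℝ := MxE + Mη + Mx' + Mη' with hRdef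
    have hR0 : 0 ≤ R := by positivity
    have hu : ∀ ε : ℝ, ContinuousOn (fun t => xE t + ε * η t) (Set.Icc a b) :=
      fun ε => hxc.add (continuous_const.mul hηc).continuousOn
    have hw : ∀ ε : ℝ, ContinuousOn (fun t => x' t + ε * η' t) (Set.Icc a b) :=
      fun ε => hx'c.add (continuous_const.mul hη'c).continuousOn
    have hΦi : ∀ i, HasDerivAt
        (fun ε => ∫ t in a..b, f i t (xE t + ε * η t) (x' t + ε * η' t))
        (∫ t in a..b, (fy i t (xE t) (x' t) * η t + fv i t (xE t) (x' t) * η' t)) 0 := by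
      intro i
      have hKsub : (Set.Icc a b ×ˢ Set.Icc (-R) R ×ˢ Set.Icc (-R) R)
          ⊆ (Set.Icc a b ×ˢ (Set.univ : Set ℝ) ×ˢ (Set.univ : Set ℝ)) :=
        fun p hp => ⟨hp.1, trivial, trivial⟩
      obtain ⟨M1, hM1⟩ := (isCompact_Icc.prod (isCompact_Icc.prod isCompact_Icc)).exists_bound_of_continuousOn
        ((hfy_cont i).mono hKsub)
      obtain ⟨M2, hM2⟩ := (isCompact_Icc.prod (isCompact_Icc.prod isCompact_Icc)).exists_bound_of_continuousOn
        ((hfv_cont i).mono hKsub)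
      have h00 : (0:ℝ) ∈ Set.Icc (-R) R := Set.mem_Icc.2 ⟨by linarith, hR0⟩
      have hM10 : 0 ≤ M1 := le_trans (norm_nonneg _) (hM1 (a, 0, 0) ⟨hA, h00, h00⟩)
      have hM20 : 0 ≤ M2 := le_trans (norm_nonneg _) (hM2 (a, 0, 0) ⟨hA, h00, h00⟩)
      have hFcont : ∀ ε : ℝ, ContinuousOn
          (fun t => f i t (xE t + ε * η t) (x' t + ε * η' t)) (Set.Icc a b) :=
        fun ε => hcomp f hf_cont i _ _ (hu ε) (hw ε)
      have hF'cont : ∀ ε : ℝ, ContinuousOn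
          (fun t => fy i t (xE t + ε * η t) (x' t + ε * η' t) * η t
            + fv i t (xE t + ε * η t) (x' t + ε * η' t) * η' t) (Set.Icc a b) :=
        fun ε => ((hcomp fy hfy_cont i _ _ (hu ε) (hw ε)).mul hηc.continuousOn).add
          ((hcomp fv hfv_cont i _ _ (hu ε) (hw ε)).mul hη'c.continuousOn)
      have hmeas : ∀ᶠ ε in nhds (0:ℝ), AEStronglyMeasurable
          (fun t => f i t (xE t + ε * η t) (x' t + ε * η' t)) (volume.restrict (Ι a b)) := by
        refine Filter.Eventually.of_forall (fun ε => ?_)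
        rw [Set.uIoc_of_le hab.le]
        exact ((hFcont ε).mono Set.Ioc_subset_Icc_self).aestronglyMeasurable measurableSet_Ioc
      have hint : IntervalIntegrable
          (fun t => f i t (xE t + 0 * η t) (x' t + 0 * η' t)) volume a b :=
        ContinuousOn.intervalIntegrable (by rw [Set.uIcc_of_le hab.le]; exact hFcont 0)
      have hmeas' : AEStronglyMeasurable
          (fun t => fy i t (xE t + 0 * η t) (x' t + 0 * η' t) * η t
            + fv i t (xE t + 0 * η t) (x' t + 0 * η' t) * η' t) (volume.restrict (Ι a b)) := by
        rw [Set.uIoc_of_le hab.le]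
        exact ((hF'cont 0).mono Set.Ioc_subset_Icc_self).aestronglyMeasurable measurableSet_Ioc
      have hmem : ∀ t ∈ Set.Icc a b, ∀ ε ∈ ball (0:ℝ) 1,
          (xE t + ε * η t ∈ Set.Icc (-R) R) ∧ (x' t + ε * η' t ∈ Set.Icc (-R) R) := by
        intro t ht ε hε
        have hε1 : |ε| ≤ 1 := le_of_lt (by simpa [Real.dist_eq] using hε)
        have h1 : |xE t| ≤ MxE := by simpa [Real.norm_eq_abs] using hMxE t ht
        have h2 : |η t| ≤ Mη := by simpa [Real.norm_eq_abs] using hMη t ht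
        have h3 : |x' t| ≤ Mx' := by simpa [Real.norm_eq_abs] using hMx' t ht
        have h4 : |η' t| ≤ Mη' := by simpa [Real.norm_eq_abs] using hMη' t ht
        constructor
        · rw [Set.mem_Icc, ← abs_le]
          calc |xE t + ε * η t| ≤ |xE t| + |ε| * |η t| := by
                rw [← abs_mul]; exact abs_add_le _ _
            _ ≤ MxE + 1 * Mη := by
                have := mul_le_mul hε1 h2 (abs_nonneg _) (by norm_num)
                linarith
            _ ≤ R := by rw [hRdef]; linarith
        · rw [Set.mem_Icc, ← abs_le]
          calc |x' t + ε * η' t| ≤ |x' t| + |ε| * |η' t| := by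
                rw [← abs_mul]; exact abs_add_le _ _
            _ ≤ Mx' + 1 * Mη' := by
                have := mul_le_mul hε1 h4 (abs_nonneg _) (by norm_num)
                linarith
            _ ≤ R := by rw [hRdef]; linarith
      have hbnd : ∀ᵐ t ∂(volume : Measure ℝ), t ∈ Ι a b → ∀ ε ∈ ball (0:ℝ) 1,
          ‖fy i t (xE t + ε * η t) (x' t + ε * η' t) * η t
            + fv i t (xE t + ε * η t) (x' t + ε * η' t) * η' t‖ ≤ M1 * Mη + M2 * Mη' := by
        refine MeasureTheory.ae_of_all _ (fun t ht ε hε => ?_)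
        rw [Set.uIoc_of_le hab.le] at ht
        have ht' : t ∈ Set.Icc a b := Set.Ioc_subset_Icc_self ht
        obtain ⟨hY, hV⟩ := hmem t ht' ε hε
        have hfyb : ‖fy i t (xE t + ε * η t) (x' t + ε * η' t)‖ ≤ M1 :=
          hM1 (t, xE t + ε * η t, x' t + ε * η' t) ⟨ht', hY, hV⟩
        have hfvb : ‖fv i t (xE t + ε * η t) (x' t + ε * η' t)‖ ≤ M2 :=
          hM2 (t, xE t + ε * η t, x' t + ε * η' t) ⟨ht', hY, hV⟩
        have h2 : |η t| ≤ Mη := by simpa [Real.norm_eq_abs] using hMη t ht'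
        have h4 : |η' t| ≤ Mη' := by simpa [Real.norm_eq_abs] using hMη' t ht'
        rw [Real.norm_eq_abs] at hfyb hfvb ⊢
        calc |fy i t (xE t + ε * η t) (x' t + ε * η' t) * η t
            + fv i t (xE t + ε * η t) (x' t + ε * η' t) * η' t|
            ≤ |fy i t (xE t + ε * η t) (x' t + ε * η' t)| * |η t|
              + |fv i t (xE t + ε * η t) (x' t + ε * η' t)| * |η' t| := by
              rw [← abs_mul, ← abs_mul]; exact abs_add_le _ _
          _ ≤ M1 * Mη + M2 * Mη' := by
              have A := mul_le_mul hfyb h2 (abs_nonneg _) hM10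
              have B := mul_le_mul hfvb h4 (abs_nonneg _) hM20
              linarith
      have hdiff : ∀ᵐ t ∂(volume : Measure ℝ), t ∈ Ι a b → ∀ ε ∈ ball (0:ℝ) 1,
          HasDerivAt (fun ε => f i t (xE t + ε * η t) (x' t + ε * η' t))
            (fy i t (xE t + ε * η t) (x' t + ε * η' t) * η t
              + fv i t (xE t + ε * η t) (x' t + ε * η' t) * η' t) ε := by
        refine MeasureTheory.ae_of_all _ (fun t ht ε hε => ?_)
        rw [Set.uIoc_of_le hab.le] at ht
        have ht' : t ∈ Set.Icc a b := Set.Ioc_subset_Icc_self ht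
        exact key1 (f i t) (fy i t) (fv i t) (hfy i t ht') (hfv i t ht')
          (hslice fy hfy_cont i t ht') (hslice fv hfv_cont i t ht')
          (xE t) (x' t) (η t) (η' t) ε
      have hmain := (intervalIntegral.hasDerivAt_integral_of_dominated_loc_of_deriv_le
        (μ := volume) (x₀ := (0:ℝ)) (s := ball (0:ℝ) 1)
        (F := fun ε t => f i t (xE t + ε * η t) (x' t + ε * η' t))
        (F' := fun ε t => fy i t (xE t + ε * η t) (x' t + ε * η' t) * η t
          + fv i t (xE t + ε * η t) (x' t + ε * η' t) * η' t)
        (bound := fun _ => M1 * Mη + M2 * Mη')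
        (ball_mem_nhds (0:ℝ) one_pos) hmeas hint hmeas' hbnd intervalIntegrable_const hdiff).2
      simpa using hmain
    have hΦ : HasDerivAt
        (fun ε => fun i : Fin n => ∫ t in a..b, f i t (xE t + ε * η t) (x' t + ε * η' t))
        (fun i : Fin n => ∫ t in a..b,
          (fy i t (xE t) (x' t) * η t + fv i t (xE t) (x' t) * η' t)) 0 :=
      hasDerivAt_pi.2 hΦi
    have hΦ0 : (fun i : Fin n => ∫ t in a..b, f i t (xE t + 0 * η t) (x' t + 0 * η' t))
        = F xE := by
      funext i
      rw [hF xE i]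
      simp only [zero_mul, add_zero, ← hx'def]
    set W : Fin n → ℝ := fun i => ∫ t in a..b,
      (fy i t (xE t) (x' t) * η t + fv i t (xE t) (x' t) * η' t) with hWdef
    have hchain : HasDerivAt
        (fun ε => H (fun i : Fin n => ∫ t in a..b, f i t (xE t + ε * η t) (x' t + ε * η' t)))
        ((fderiv ℝ H (F xE)) W) 0 := by
      have hHd := (hH.differentiable one_ne_zero
        ((fun i : Fin n => ∫ t in a..b, f i t (xE t + 0 * η t) (x' t + 0 * η' t)))).hasFDerivAt
      have hcmp := hHd.comp_hasDerivAt 0 hΦ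
      rw [hΦ0] at hcmp
      exact hcmp
    -- identification of L along the variation
    have hgual : ∀ ε : ℝ, L (fun t => xE t + ε * η t)
        = H (fun i : Fin n => ∫ t in a..b, f i t (xE t + ε * η t) (x' t + ε * η' t)) := by
      intro ε
      rw [hL]
      congr 1
      funext i
      rw [hF]
      apply intervalIntegral.integral_congr
      intro t ht
      rw [Set.uIcc_of_le hab.le] at ht
      have h1 : HasDerivWithinAt xE (x' t) (Set.Icc a b) t :=
        (hxE.differentiableOn one_ne_zero t ht).hasDerivWithinAt
      have h2 : HasDerivWithinAt (fun t => ε * η t) (ε * η' t) (Set.Icc a b) t :=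
        ((hη t).const_mul ε).hasDerivWithinAt
      have hdw : derivWithin (fun t => xE t + ε * η t) (Set.Icc a b) t = x' t + ε * η' t :=
        (h1.add h2).derivWithin (hUD t ht)
      simp only [hdw]
    have hηC1 : ContDiff ℝ 1 η := by
      refine contDiff_one_iff_deriv.2 ⟨fun t => (hη t).differentiableAt, ?_⟩
      have : deriv η = η' := funext fun t => (hη t).deriv
      rw [this]; exact hη'c
    have hxεC1 : ∀ ε : ℝ, ContDiffOn ℝ 1 (fun t => xE t + ε * η t) (Set.Icc a b) :=
      fun ε => hxE.add ((contDiff_const.mul hηC1).contDiffOn)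
    haveI : Nonempty (Set.Icc a b) := ⟨⟨a, hA⟩⟩
    have hC1 : ∀ ε : ℝ,
        C1Norm a b (fun t => (xE t + ε * η t) - xE t) ≤ |ε| * (Mη + Mη') := by
      intro ε
      have hfun : (fun t => (xE t + ε * η t) - xE t) = fun t => ε * η t := by
        funext t; ring
      rw [hfun]
      unfold C1Norm
      have b1 : (⨆ t : Set.Icc a b, |ε * η t|) ≤ |ε| * Mη := by
        refine ciSup_le fun t => ?_
        rw [abs_mul]
        exact mul_le_mul_of_nonneg_left
          (by simpa [Real.norm_eq_abs] using hMη t t.2) (abs_nonneg ε)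
      have b2 : (⨆ t : Set.Icc a b, |derivWithin (fun t => ε * η t) (Set.Icc a b) t|)
          ≤ |ε| * Mη' := by
        refine ciSup_le fun t => ?_
        have hdw : derivWithin (fun u => ε * η u) (Set.Icc a b) t = ε * η' t :=
          (((hη t).const_mul ε).hasDerivWithinAt).derivWithin (hUD t t.2)
        rw [hdw, abs_mul]
        exact mul_le_mul_of_nonneg_left
          (by simpa [Real.norm_eq_abs] using hMη' t t.2) (abs_nonneg ε)
      calc _ ≤ |ε| * Mη + |ε| * Mη' := add_le_add b1 b2
        _ = |ε| * (Mη + Mη') := by ring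
    have hD : (fderiv ℝ H (F xE)) W = 0 := by
      rcases hext with ⟨δ, hδ, hmin⟩ | ⟨δ, hδ, hmax⟩
      · refine IsLocalMin.hasDerivAt_eq_zero ?_ hchain
        have hev : ∀ᶠ ε : ℝ in nhds 0, |ε| < δ / (Mη + Mη' + 1) := by
          have := Metric.ball_mem_nhds (0:ℝ)
            (show (0:ℝ) < δ / (Mη + Mη' + 1) from div_pos hδ (by linarith))
          filter_upwards [this] with ε hε
          simpa [Real.dist_eq] using hε
        filter_upwards [hev] with ε hε
        have hC1lt : C1Norm a b (fun t => (xE t + ε * η t) - xE t) < δ := by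
          refine lt_of_le_of_lt (hC1 ε) ?_
          have h1 : |ε| * (Mη + Mη') ≤ |ε| * (Mη + Mη' + 1) :=
            mul_le_mul_of_nonneg_left (by linarith) (abs_nonneg ε)
          have h2 : |ε| * (Mη + Mη' + 1) < δ := by
            rw [← lt_div_iff₀ (by linarith : (0:ℝ) < Mη + Mη' + 1)]
            exact hε
          linarith
        have hle := hmin (fun t => xE t + ε * η t) (hxεC1 ε)
          (by simp [hxEa, hηa]) hC1lt
        calc (fun ε => H (fun i : Fin n =>
              ∫ t in a..b, f i t (xE t + ε * η t) (x' t + ε * η' t))) 0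
            = H (F xE) := by rw [← hΦ0]
          _ = L xE := (hL xE).symm
          _ ≤ L (fun t => xE t + ε * η t) := hle
          _ = _ := hgual ε
      · refine IsLocalMax.hasDerivAt_eq_zero ?_ hchain
        have hev : ∀ᶠ ε : ℝ in nhds 0, |ε| < δ / (Mη + Mη' + 1) := by
          have := Metric.ball_mem_nhds (0:ℝ)
            (show (0:ℝ) < δ / (Mη + Mη' + 1) from div_pos hδ (by linarith))
          filter_upwards [this] with ε hε
          simpa [Real.dist_eq] using hε
        filter_upwards [hev] with ε hε
        have hC1lt : C1Norm a b (fun t => (xE t + ε * η t) - xE t) < δ := by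
          refine lt_of_le_of_lt (hC1 ε) ?_
          have h1 : |ε| * (Mη + Mη') ≤ |ε| * (Mη + Mη' + 1) :=
            mul_le_mul_of_nonneg_left (by linarith) (abs_nonneg ε)
          have h2 : |ε| * (Mη + Mη' + 1) < δ := by
            rw [← lt_div_iff₀ (by linarith : (0:ℝ) < Mη + Mη' + 1)]
            exact hε
          linarith
        have hle := hmax (fun t => xE t + ε * η t) (hxεC1 ε)
          (by simp [hxEa, hηa]) hC1lt
        calc (fun ε => H (fun i : Fin n =>
              ∫ t in a..b, f i t (xE t + ε * η t) (x' t + ε * η' t))) ε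
            = L (fun t => xE t + ε * η t) := (hgual ε).symm
          _ ≤ L xE := hle
          _ = H (F xE) := hL xE
          _ = _ := by rw [← hΦ0]
    -- decompose the derivative over the basis
    have hWdec : W = ∑ i, W i • (Pi.single i 1 : Fin n → ℝ) := by
      funext j
      rw [Finset.sum_apply]
      simp [Pi.single_apply]
    have hsum : ∑ i, c i * W i = 0 := by
      have step : (fderiv ℝ H (F xE)) W
          = ∑ i, W i • (fderiv ℝ H (F xE)) ((Pi.single i 1 : Fin n → ℝ)) := by
        conv_lhs => rw [hWdec]
        rw [map_sum]
        simp only [_root_.map_smul]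
      rw [step] at hD
      rw [← hD]
      apply Finset.sum_congr rfl
      intro i _
      rw [hcdef]
      simp [smul_eq_mul, mul_comm]
    -- convert to integral form
    have hInt : ∀ i : Fin n, IntervalIntegrable
        (fun t => fy i t (xE t) (x' t) * η t + fv i t (xE t) (x' t) * η' t) volume a b := by
      intro i
      apply ContinuousOn.intervalIntegrable
      rw [Set.uIcc_of_le hab.le]
      exact ((hcomp fy hfy_cont i xE x' hxc hx'c).mul hηc.continuousOn).add
        ((hcomp fv hfv_cont i xE x' hxc hx'c).mul hη'c.continuousOn)
    calc ∫ t in a..b, (ψ t * η t + φ t * η' t)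
        = ∫ t in a..b, ∑ i, c i *
            (fy i t (xE t) (x' t) * η t + fv i t (xE t) (x' t) * η' t) := by
          apply intervalIntegral.integral_congr
          intro t _
          simp only [hψdef, hφdef]
          rw [Finset.sum_mul, Finset.sum_mul, ← Finset.sum_add_distrib]
          exact Finset.sum_congr rfl fun i _ => by ring
      _ = ∑ i, ∫ t in a..b, c i *
            (fy i t (xE t) (x' t) * η t + fv i t (xE t) (x' t) * η' t) :=
          (intervalIntegral.integral_finset_sum (fun i _ => (hInt i).const_mul (c i)))
      _ = ∑ i, c i * W i := by
          apply Finset.sum_congr rfl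
          intro i _
          rw [hWdef]
          exact intervalIntegral.integral_const_mul _ _
      _ = 0 := hsum
  -- final limiting argument
  suffices hφb : φ b = 0 by
    have : (∑ i, c i * fv i b (xE b) (x' b)) = φ b := by rw [hφdef]
    rw [hcdef] at this
    simpa using this.trans hφb
  have hmain : ∀ ε : ℝ, 0 < ε → |φ b| ≤ ε := by
    intro ε hε
    obtain ⟨Mψ, hMψ⟩ := isCompact_Icc.exists_bound_of_continuousOn hψc
    have hMψ0 : 0 ≤ Mψ := le_trans (norm_nonneg _) (hMψ a hA)
    obtain ⟨δ₁, hδ₁, hδ₁'⟩ := Metric.continuousWithinAt_iff.1 (hφc b hB) (ε/4) (by linarith)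
    set s : ℝ := min (b - a) (min δ₁ (ε / (4 * (Mψ + 1)))) with hsdef
    have hs0 : 0 < s := lt_min (by linarith) (lt_min hδ₁ (by positivity))
    have hs1 : s ≤ b - a := min_le_left _ _
    have hs2 : s ≤ δ₁ := le_trans (min_le_right _ _) (min_le_left _ _)
    have hs3 : s ≤ ε / (4 * (Mψ + 1)) := le_trans (min_le_right _ _) (min_le_right _ _)
    have hbs1 : a ≤ b - s := by linarith
    have hbs2 : b - s ≤ b := by linarith
    set η : ℝ → ℝ := fun t => (max (t - (b - s)) 0)^2 / s^2 with hηdef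
    set η' : ℝ → ℝ := fun t => (2 * max (t - (b - s)) 0) / s^2 with hη'def
    have hηd : ∀ t, HasDerivAt η (η' t) t := by
      intro t
      have h1 : HasDerivAt (fun t : ℝ => t - (b - s)) 1 t := (hasDerivAt_id t).sub_const _
      have h2 := (sqmax_hasDerivAt (t - (b - s))).comp t h1
      have h3 := h2.div_const (s^2)
      have heq : ((fun w : ℝ => (max w 0)^2) ∘ fun t : ℝ => t - (b - s))
          = fun t : ℝ => (max (t - (b - s)) 0)^2 := rfl
      rw [heq] at h3
      simpa [hηdef, hη'def, mul_one] using h3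
    have hη'c : Continuous η' := by
      apply Continuous.div_const
      exact continuous_const.mul ((continuous_id.sub continuous_const).max continuous_const)
    have hηc : Continuous η := by
      rw [continuous_iff_continuousAt]; exact fun t => (hηd t).continuousAt
    have hηa : η a = 0 := by
      simp only [hηdef]
      rw [max_eq_right (by linarith : a - (b - s) ≤ 0)]
      norm_num
    have h0 := aux η η' hηd hη'c hηa
    have hii : ∀ u v : ℝ, a ≤ u → u ≤ v → v ≤ b → ∀ {g : ℝ → ℝ},
        ContinuousOn g (Set.Icc a b) → IntervalIntegrable g volume u v := by
      intro u v hu huv hv g hg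
      apply ContinuousOn.intervalIntegrable
      rw [Set.uIcc_of_le huv]
      exact hg.mono (Set.Icc_subset_Icc hu hv)
    have hψη : ContinuousOn (fun t => ψ t * η t) (Set.Icc a b) := hψc.mul hηc.continuousOn
    have hφη' : ContinuousOn (fun t => φ t * η' t) (Set.Icc a b) := hφc.mul hη'c.continuousOn
    have hsumc : ContinuousOn (fun t => ψ t * η t + φ t * η' t) (Set.Icc a b) := hψη.add hφη'
    have hsplit : (∫ t in a..(b-s), (ψ t * η t + φ t * η' t))
        + (∫ t in (b-s)..b, (ψ t * η t + φ t * η' t)) = 0 := by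
      rw [intervalIntegral.integral_add_adjacent_intervals
        (hii a (b-s) le_rfl hbs1 hbs2 hsumc) (hii (b-s) b hbs1 hbs2 le_rfl hsumc)]
      exact h0
    have hzero1 : (∫ t in a..(b-s), (ψ t * η t + φ t * η' t)) = 0 := by
      have heq : Set.EqOn (fun t => ψ t * η t + φ t * η' t) (fun _ => (0:ℝ))
          (Set.uIcc a (b-s)) := by
        rw [Set.uIcc_of_le hbs1]
        intro t ht
        have hmax : max (t - (b - s)) 0 = 0 := max_eq_right (by linarith [ht.2])
        simp only [hηdef, hη'def, hmax]
        norm_num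
      rw [intervalIntegral.integral_congr heq]
      simp
    have h2int : (∫ t in (b-s)..b, (ψ t * η t + φ t * η' t)) = 0 := by linarith
    have hsplit2 : (∫ t in (b-s)..b, ψ t * η t) + (∫ t in (b-s)..b, φ t * η' t) = 0 := by
      rw [← intervalIntegral.integral_add
        (hii (b-s) b hbs1 hbs2 le_rfl hψη) (hii (b-s) b hbs1 hbs2 le_rfl hφη')]
      exact h2int
    have hFTC : (∫ t in (b-s)..b, η' t) = 1 := by
      rw [intervalIntegral.integral_eq_sub_of_hasDerivAt (fun t _ => hηd t)
        (hη'c.intervalIntegrable _ _)]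
      simp only [hηdef]
      rw [show b - (b - s) = s from by ring, show (b - s) - (b - s) = 0 from by ring]
      rw [max_eq_left hs0.le, max_self]
      field_simp
      ring
    have hb1 : |∫ t in (b-s)..b, ψ t * η t| ≤ Mψ * s := by
      have hle : ∀ t ∈ Ι (b-s) b, ‖ψ t * η t‖ ≤ Mψ := by
        intro t ht
        rw [Set.uIoc_of_le hbs2] at ht
        have ht' : t ∈ Set.Icc a b := ⟨by linarith [ht.1], ht.2⟩
        have hψt : |ψ t| ≤ Mψ := by simpa [Real.norm_eq_abs] using hMψ t ht'
        have hη0 : 0 ≤ η t := by simp only [hηdef]; positivity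
        have hη1 : η t ≤ 1 := by
          simp only [hηdef]
          rw [div_le_one (by positivity)]
          have hm : max (t - (b - s)) 0 ≤ s := max_le (by linarith [ht.2]) hs0.le
          have hm0 : 0 ≤ max (t - (b - s)) 0 := le_max_right _ _
          nlinarith
        rw [Real.norm_eq_abs, abs_mul, abs_of_nonneg hη0]
        calc |ψ t| * η t ≤ Mψ * 1 := mul_le_mul hψt hη1 hη0 hMψ0
          _ = Mψ := mul_one _
      have hn := intervalIntegral.norm_integral_le_of_norm_le_const hle
      rw [Real.norm_eq_abs] at hn
      calc |∫ t in (b-s)..b, ψ t * η t| ≤ Mψ * |b - (b - s)| := hn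
        _ = Mψ * s := by rw [show b - (b - s) = s from by ring, abs_of_pos hs0]
    have hb1' : |∫ t in (b-s)..b, ψ t * η t| ≤ ε/4 := by
      refine le_trans hb1 ?_
      have h1 : Mψ * s ≤ Mψ * (ε / (4 * (Mψ + 1))) := mul_le_mul_of_nonneg_left hs3 hMψ0
      have h2 : Mψ * (ε / (4 * (Mψ + 1))) ≤ ε / 4 := by
        rw [← mul_div_assoc, div_le_div_iff₀ (by positivity) (by norm_num : (0:ℝ) < 4)]
        nlinarith
      linarith
    have hconst : (∫ t in (b-s)..b, φ b * η' t) = φ b := by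
      rw [intervalIntegral.integral_const_mul, hFTC, mul_one]
    have hdiffint : (∫ t in (b-s)..b, (φ t - φ b) * η' t)
        = (∫ t in (b-s)..b, φ t * η' t) - φ b := by
      have step : (∫ t in (b-s)..b, (φ t - φ b) * η' t)
          = (∫ t in (b-s)..b, φ t * η' t) - (∫ t in (b-s)..b, φ b * η' t) := by
        rw [← intervalIntegral.integral_sub
          (hii (b-s) b hbs1 hbs2 le_rfl hφη')
          (((hη'c.intervalIntegrable (b-s) b)).const_mul (φ b))]
        apply intervalIntegral.integral_congr
        intro t _
        ring
      rw [step, hconst]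
    have hb2 : |(∫ t in (b-s)..b, φ t * η' t) - φ b| ≤ ε/2 := by
      rw [← hdiffint]
      have hle : ∀ t ∈ Ι (b-s) b, ‖(φ t - φ b) * η' t‖ ≤ (ε/4) * (2/s) := by
        intro t ht
        rw [Set.uIoc_of_le hbs2] at ht
        have ht' : t ∈ Set.Icc a b := ⟨by linarith [ht.1], ht.2⟩
        have hdist : dist t b < δ₁ := by
          rw [Real.dist_eq, abs_of_nonpos (by linarith [ht.2] : t - b ≤ 0)]
          linarith [ht.1]
        have hφd : |φ t - φ b| ≤ ε/4 := le_of_lt (by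
          have := hδ₁' ht' hdist
          simpa [Real.dist_eq] using this)
        have hη'b : |η' t| ≤ 2/s := by
          simp only [hη'def]
          rw [abs_div, abs_of_nonneg (by positivity : (0:ℝ) ≤ 2 * max (t - (b - s)) 0),
            abs_of_pos (by positivity : (0:ℝ) < s^2),
            div_le_div_iff₀ (by positivity) hs0]
          have hm : max (t - (b - s)) 0 ≤ s := max_le (by linarith [ht.2]) hs0.le
          nlinarith
        rw [Real.norm_eq_abs, abs_mul]
        exact mul_le_mul hφd hη'b (abs_nonneg _) (by positivity)
      have hn := intervalIntegral.norm_integral_le_of_norm_le_const hle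
      rw [Real.norm_eq_abs] at hn
      calc |∫ t in (b-s)..b, (φ t - φ b) * η' t| ≤ (ε/4) * (2/s) * |b - (b - s)| := hn
        _ = ε/2 := by
            rw [show b - (b - s) = s from by ring, abs_of_pos hs0]
            field_simp
            ring
    have hφbeq : φ b = -((∫ t in (b-s)..b, φ t * η' t) - φ b)
        - (∫ t in (b-s)..b, ψ t * η t) := by linarith
    rw [hφbeq]
    calc |-((∫ t in (b-s)..b, φ t * η' t) - φ b) - (∫ t in (b-s)..b, ψ t * η t)|
        ≤ |-((∫ t in (b-s)..b, φ t * η' t) - φ b)| + |∫ t in (b-s)..b, ψ t * η t| :=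
          abs_sub _ _
      _ = |(∫ t in (b-s)..b, φ t * η' t) - φ b| + |∫ t in (b-s)..b, ψ t * η t| := by
          rw [abs_neg]
      _ ≤ ε/2 + ε/4 := add_le_add hb2 hb1'
      _ ≤ ε := by linarith
  by_contra hcon
  have h1 : 0 < |φ b| := abs_pos.2 hcon
  have := hmain (|φ b| / 2) (by linarith)
  linarith
end

section
/- Let a < b be real numbers and let f_1, f_2 : [a,b] × ℝ × ℝ → ℝ be continuous with continuous partial derivatives f_{1y}, f_{1v}, f_{2y}, f_{2v} with respect to their second and third arguments. Suppose x̃ : [a,b] → ℝ is C¹ with x̃(a) = x_a and x̃(b) = x_b, that the maps t ↦ f_{1v}(t, x̃(t), x̃'(t)) and t ↦ f_{2v}(t, x̃(t), x̃'(t)) are differentiable on [a,b], and that x̃ is a weak local extremizer of the product functional L[x] = F_1[x] · F_2[x] among admissible functions: there exists δ > 0 such that L[x̃] ≤ L[x] for every C¹ function x with x(a) = x_a, x(b) = x_b and ‖x − x̃‖₁ < δ (or L[x̃] ≥ L[x] for all such x). Then for all t ∈ [a,b]: F_2[x̃] · ( f_{1y}(t, x̃(t), x̃'(t)) − (d/dt)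 f_{1v}(t, x̃(t), x̃'(t)) ) + F_1[x̃] · ( f_{2y}(t, x̃(t), x̃'(t)) − (d/dt) f_{2v}(t, x̃(t), x̃'(t)) ) = 0. -/
open Set MeasureTheory intervalIntegral Asymptotics


/-- Joint differentiability from partial derivatives, one of which is continuous. -/
lemma hasFDerivAt_of_partials (g gy gv : ℝ → ℝ → ℝ)
    (hgy : ∀ y v, HasDerivAt (fun y' => g y' v) (gy y v) y)
    (hgv : ∀ y v, HasDerivAt (fun v' => g y v') (gv y v) v)
    (hgyc : Continuous (fun p : ℝ × ℝ => gy p.1 p.2)) (y v : ℝ) :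
    HasFDerivAt (fun p : ℝ × ℝ => g p.1 p.2)
      ((gy y v) • ContinuousLinearMap.fst ℝ ℝ ℝ + (gv y v) • ContinuousLinearMap.snd ℝ ℝ ℝ)
      (y, v) := by
  rw [hasFDerivAt_iff_isLittleO_nhds_zero]
  have key : (fun h : ℝ × ℝ => g (y + h.1) (v + h.2) - g (y, v).1 (y, v).2 -
      (gy y v * h.1 + gv y v * h.2)) =
      (fun h : ℝ × ℝ => g (y + h.1) (v + h.2) - g y (v + h.2) - gy y v * h.1) +
      (fun h : ℝ × ℝ => g y (v + h.2) - g y v - gv y v * h.2) := by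
    funext h; simp; ring
  have h2 : (fun h : ℝ × ℝ => g y (v + h.2) - g y v - gv y v * h.2)
      =o[nhds (0 : ℝ × ℝ)] (fun h : ℝ × ℝ => h) := by
    have := (hasDerivAt_iff_isLittleO (f := fun v' => g y v') (x := v)).1 (hgv y v)
    have comp := this.comp_tendsto (k := fun h : ℝ × ℝ => v + h.2)
      (by
        have : Filter.Tendsto (fun h : ℝ × ℝ => v + h.2) (nhds 0) (nhds (v + 0)) := by
          exact (continuous_const.add continuous_snd).tendsto 0
        simpa using this)
    simp only [Function.comp_def] at comp
    have h2' : (fun h : ℝ × ℝ => g y (v + h.2) - g y v - gv y v * h.2)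
        =o[nhds (0 : ℝ × ℝ)] (fun h : ℝ × ℝ => h.2) :=
      comp.congr (fun h => by simp [smul_eq_mul]; ring) (fun h => by simp)
    exact h2'.trans_isBigO (isBigO_of_le _ fun h => by
      simpa using norm_snd_le h)
  have h1 : (fun h : ℝ × ℝ => g (y + h.1) (v + h.2) - g y (v + h.2) - gy y v * h.1)
      =o[nhds (0 : ℝ × ℝ)] (fun h : ℝ × ℝ => h) := by
    rw [isLittleO_iff]
    intro c hc
    obtain ⟨δ, hδ, hball⟩ := Metric.continuousAt_iff.1 (hgyc.continuousAt
      (x := (y, v))) c hc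
    have hev : ∀ᶠ h : ℝ × ℝ in nhds 0, ‖h‖ < δ := by
      have : Metric.ball (0 : ℝ × ℝ) δ ∈ nhds (0 : ℝ × ℝ) := Metric.ball_mem_nhds _ hδ
      exact Filter.eventually_iff_exists_mem.2 ⟨_, this, fun h hh => by
        simpa [dist_eq_norm] using hh⟩
    filter_upwards [hev] with h hh
    have hh1 : |h.1| < δ := lt_of_le_of_lt (by simpa using norm_fst_le h) hh
    have hh2 : |h.2| < δ := lt_of_le_of_lt (by simpa using norm_snd_le h) hh
    -- mean value bound on the ball
    have hbound : ∀ x ∈ Metric.ball y δ,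
        ‖gy x (v + h.2) - gy y v‖ ≤ c := by
      intro x hx
      have : dist ((x, v + h.2) : ℝ × ℝ) (y, v) < δ := by
        rw [Prod.dist_eq]
        simp only [max_lt_iff]
        constructor
        · simpa [Real.dist_eq] using hx
        · simpa [Real.dist_eq] using hh2
      exact (le_of_lt (hball this))
    have hderiv : ∀ x ∈ Metric.ball y δ,
        HasDerivWithinAt (fun x => g x (v + h.2) - gy y v * x)
          (gy x (v + h.2) - gy y v) (Metric.ball y δ) x := by
      intro x _
      simpa using ((hgy x (v + h.2)).fun_sub ((hasDerivAt_id x).const_mul (gy y v))).hasDerivWithinAt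
    have := (convex_ball y δ).norm_image_sub_le_of_norm_hasDerivWithin_le
      hderiv hbound (Metric.mem_ball_self hδ)
      (by simpa [Real.dist_eq] using hh1 : y + h.1 ∈ Metric.ball y δ)
    calc ‖g (y + h.1) (v + h.2) - g y (v + h.2) - gy y v * h.1‖
        = ‖(g (y + h.1) (v + h.2) - gy y v * (y + h.1)) - (g y (v + h.2) - gy y v * y)‖ := by
          ring_nf
      _ ≤ c * ‖y + h.1 - y‖ := this
      _ = c * |h.1| := by norm_num
      _ ≤ c * ‖h‖ := by
          apply mul_le_mul_of_nonneg_left _ hc.le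
          simpa using norm_fst_le h
  exact (h1.add h2).congr (fun h => by simp [smul_eq_mul]; ring) (fun h => rfl)

/-- Continuity of a composite `t ↦ f t (u t) (w t)`. -/
lemma comp_contOn {a b : ℝ} {f : ℝ → ℝ → ℝ → ℝ}
    (hf : ContinuousOn (fun p : ℝ × ℝ × ℝ => f p.1 p.2.1 p.2.2)
      (Icc a b ×ˢ (univ : Set ℝ) ×ˢ (univ : Set ℝ)))
    {u w : ℝ → ℝ} (hu : ContinuousOn u (Icc a b)) (hw : ContinuousOn w (Icc a b)) :
    ContinuousOn (fun t => f t (u t) (w t)) (Icc a b) :=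
  hf.comp (continuousOn_id.prodMk (hu.prodMk hw)) (fun t ht => ⟨ht, ⟨trivial, trivial⟩⟩)

/-- First variation: differentiation under the integral sign at `ε = 0`. -/
lemma first_variation_s3 (a b : ℝ) (hab : a < b) (f fy fv : ℝ → ℝ → ℝ → ℝ)
    (hf_cont : ContinuousOn (fun p : ℝ × ℝ × ℝ => f p.1 p.2.1 p.2.2)
      (Icc a b ×ˢ (univ : Set ℝ) ×ˢ (univ : Set ℝ)))
    (hfy : ∀ t ∈ Icc a b, ∀ y v : ℝ, HasDerivAt (fun y' => f t y' v) (fy t y v) y)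
    (hfv : ∀ t ∈ Icc a b, ∀ y v : ℝ, HasDerivAt (fun v' => f t y v') (fv t y v) v)
    (hfy_cont : ContinuousOn (fun p : ℝ × ℝ × ℝ => fy p.1 p.2.1 p.2.2)
      (Icc a b ×ˢ (univ : Set ℝ) ×ˢ (univ : Set ℝ)))
    (hfv_cont : ContinuousOn (fun p : ℝ × ℝ × ℝ => fv p.1 p.2.1 p.2.2)
      (Icc a b ×ˢ (univ : Set ℝ) ×ˢ (univ : Set ℝ)))
    (y v η ηd : ℝ → ℝ) (hy : ContinuousOn y (Icc a b)) (hv : ContinuousOn v (Icc a b))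
    (hη : ContinuousOn η (Icc a b)) (hηd : ContinuousOn ηd (Icc a b)) :
    HasDerivAt (fun ε => ∫ t in a..b, f t (y t + ε * η t) (v t + ε * ηd t))
      (∫ t in a..b, (fy t (y t) (v t) * η t + fv t (y t) (v t) * ηd t)) 0 := by
  have hIoc : Set.uIoc a b ⊆ Icc a b := by
    rw [Set.uIoc_of_le hab.le]; exact Ioc_subset_Icc_self
  -- the integrand family and its ε-derivative
  set F : ℝ → ℝ → ℝ := fun x t => f t (y t + x * η t) (v t + x * ηd t) with hF
  set F' : ℝ → ℝ → ℝ := fun x t =>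
    fy t (y t + x * η t) (v t + x * ηd t) * η t +
    fv t (y t + x * η t) (v t + x * ηd t) * ηd t with hF'
  -- continuity in t of F x and F' x
  have hyx : ∀ x : ℝ, ContinuousOn (fun t => y t + x * η t) (Icc a b) := fun x =>
    hy.add (continuousOn_const.mul hη)
  have hvx : ∀ x : ℝ, ContinuousOn (fun t => v t + x * ηd t) (Icc a b) := fun x =>
    hv.add (continuousOn_const.mul hηd)
  have hFc : ∀ x : ℝ, ContinuousOn (F x) (Icc a b) := fun x =>
    comp_contOn hf_cont (hyx x) (hvx x)
  have hF'c : ∀ x : ℝ, ContinuousOn (F' x) (Icc a b) := fun x =>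
    ((comp_contOn hfy_cont (hyx x) (hvx x)).mul hη).add
      ((comp_contOn hfv_cont (hyx x) (hvx x)).mul hηd)
  -- uniform bound on the compact set Icc (-1) 1 ×ˢ Icc a b
  have hΦ : ContinuousOn (fun p : ℝ × ℝ => F' p.1 p.2) (Icc (-1 : ℝ) 1 ×ˢ Icc a b) := by
    have hsnd : ContinuousOn (fun p : ℝ × ℝ => p.2) (Icc (-1 : ℝ) 1 ×ˢ Icc a b) :=
      continuous_snd.continuousOn
    have hmem : ∀ p : ℝ × ℝ, p ∈ Icc (-1 : ℝ) 1 ×ˢ Icc a b → p.2 ∈ Icc a b := fun p hp => hp.2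
    have hY : ContinuousOn (fun p : ℝ × ℝ => y p.2 + p.1 * η p.2) (Icc (-1 : ℝ) 1 ×ˢ Icc a b) :=
      (hy.comp hsnd hmem).add (continuous_fst.continuousOn.mul (hη.comp hsnd hmem))
    have hV : ContinuousOn (fun p : ℝ × ℝ => v p.2 + p.1 * ηd p.2) (Icc (-1 : ℝ) 1 ×ˢ Icc a b) :=
      (hv.comp hsnd hmem).add (continuous_fst.continuousOn.mul (hηd.comp hsnd hmem))
    exact ((hfy_cont.comp (hsnd.prodMk (hY.prodMk hV)) (fun p hp => ⟨hp.2, ⟨trivial, trivial⟩⟩)).mul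
        (hη.comp hsnd hmem)).add
      ((hfv_cont.comp (hsnd.prodMk (hY.prodMk hV)) (fun p hp => ⟨hp.2, ⟨trivial, trivial⟩⟩)).mul
        (hηd.comp hsnd hmem))
  obtain ⟨C, hC⟩ := ((isCompact_Icc (a := (-1:ℝ)) (b := 1)).prod
    (isCompact_Icc (a := a) (b := b))).exists_bound_of_continuousOn hΦ
  -- apply the dominated differentiation theorem
  have main := intervalIntegral.hasDerivAt_integral_of_dominated_loc_of_deriv_le
    (μ := volume) (F := F) (F' := F') (x₀ := (0:ℝ)) (a := a) (b := b)
    (bound := fun _ => C) (s := Metric.ball 0 1) (Metric.ball_mem_nhds 0 one_pos)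
    (Filter.Eventually.of_forall fun x =>
      ((hFc x).mono hIoc).aestronglyMeasurable measurableSet_uIoc)
    (((hFc 0).mono (by rw [Set.uIcc_of_le hab.le])).intervalIntegrable)
    (((hF'c 0).mono hIoc).aestronglyMeasurable measurableSet_uIoc)
    (Filter.Eventually.of_forall fun t ht x hx => by
      have hx1 : x ∈ Icc (-1 : ℝ) 1 := by
        have := Metric.mem_ball.1 hx
        rw [Real.dist_eq, sub_zero] at this
        exact ⟨neg_le_of_abs_le this.le |>.trans_eq rfl |>.trans_eq rfl, (abs_le.1 this.le).2⟩
      exact hC (x, t) ⟨hx1, hIoc ht⟩)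
    intervalIntegrable_const
    (Filter.Eventually.of_forall fun t ht x _ => by
      have htI := hIoc ht
      have hfd := hasFDerivAt_of_partials (fun y' v' => f t y' v') (fy t) (fv t)
        (fun y' v' => hfy t htI y' v') (fun y' v' => hfv t htI y' v')
        (hfy_cont.comp_continuous
          (Continuous.prodMk continuous_const
            (continuous_fst.prodMk continuous_snd))
          (fun p => ⟨htI, ⟨trivial, trivial⟩⟩))
        (y t + x * η t) (v t + x * ηd t)
      have hc : HasDerivAt (fun x : ℝ => ((y t + x * η t, v t + x * ηd t) : ℝ × ℝ))
          (η t, ηd t) x :=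
        ((hasDerivAt_mul_const (η t)).const_add (y t)).prodMk
          ((hasDerivAt_mul_const (ηd t)).const_add (v t))
      have := hfd.comp_hasDerivAt x hc
      simpa [hF', Function.comp_def, smul_eq_mul] using this)
  have h0 : (F' 0) = fun t => fy t (y t) (v t) * η t + fv t (y t) (v t) * ηd t := by
    funext t; simp [hF']
  rw [← h0]
  exact main.2

/-- Euler–Lagrange equation for the product functional
`L[x] = F₁[x] · F₂[x]` with both endpoints fixed. -/
theorem product_euler_lagrange
    (a b : ℝ) (hab : a < b)
    (f1 f1y f1v f2 f2y f2v : ℝ → ℝ → ℝ → ℝ)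
    (hf1_cont : ContinuousOn (fun p : ℝ × ℝ × ℝ => f1 p.1 p.2.1 p.2.2)
      (Set.Icc a b ×ˢ (Set.univ : Set ℝ) ×ˢ (Set.univ : Set ℝ)))
    (hf2_cont : ContinuousOn (fun p : ℝ × ℝ × ℝ => f2 p.1 p.2.1 p.2.2)
      (Set.Icc a b ×ˢ (Set.univ : Set ℝ) ×ˢ (Set.univ : Set ℝ)))
    (hf1y : ∀ t ∈ Set.Icc a b, ∀ y v : ℝ,
      HasDerivAt (fun y' => f1 t y' v) (f1y t y v) y)
    (hf1v : ∀ t ∈ Set.Icc a b, ∀ y v : ℝ,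
      HasDerivAt (fun v' => f1 t y v') (f1v t y v) v)
    (hf2y : ∀ t ∈ Set.Icc a b, ∀ y v : ℝ,
      HasDerivAt (fun y' => f2 t y' v) (f2y t y v) y)
    (hf2v : ∀ t ∈ Set.Icc a b, ∀ y v : ℝ,
      HasDerivAt (fun v' => f2 t y v') (f2v t y v) v)
    (hf1y_cont : ContinuousOn (fun p : ℝ × ℝ × ℝ => f1y p.1 p.2.1 p.2.2)
      (Set.Icc a b ×ˢ (Set.univ : Set ℝ) ×ˢ (Set.univ : Set ℝ)))
    (hf1v_cont : ContinuousOn (fun p : ℝ × ℝ × ℝ => f1v p.1 p.2.1 p.2.2)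
      (Set.Icc a b ×ˢ (Set.univ : Set ℝ) ×ˢ (Set.univ : Set ℝ)))
    (hf2y_cont : ContinuousOn (fun p : ℝ × ℝ × ℝ => f2y p.1 p.2.1 p.2.2)
      (Set.Icc a b ×ˢ (Set.univ : Set ℝ) ×ˢ (Set.univ : Set ℝ)))
    (hf2v_cont : ContinuousOn (fun p : ℝ × ℝ × ℝ => f2v p.1 p.2.1 p.2.2)
      (Set.Icc a b ×ˢ (Set.univ : Set ℝ) ×ˢ (Set.univ : Set ℝ)))
    (xa xb : ℝ) (xE : ℝ → ℝ)
    (hxE : ContDiffOn ℝ 1 xE (Set.Icc a b))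
    (hxEa : xE a = xa) (hxEb : xE b = xb)
    (hdiff1 : ∀ t ∈ Set.Icc a b,
      DifferentiableWithinAt ℝ
        (fun s => f1v s (xE s) (derivWithin xE (Set.Icc a b) s)) (Set.Icc a b) t)
    (hdiff2 : ∀ t ∈ Set.Icc a b,
      DifferentiableWithinAt ℝ
        (fun s => f2v s (xE s) (derivWithin xE (Set.Icc a b) s)) (Set.Icc a b) t)
    (F1 F2 : (ℝ → ℝ) → ℝ)
    (hF1 : ∀ x, F1 x = ∫ t in a..b, f1 t (x t) (derivWithin x (Set.Icc a b) t))
    (hF2 : ∀ x, F2 x = ∫ t in a..b, f2 t (x t) (derivWithin x (Set.Icc a b) t))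
    (L : (ℝ → ℝ) → ℝ)
    (hL : ∀ x, L x = F1 x * F2 x)
    (hext :
      (∃ δ > 0, ∀ x : ℝ → ℝ, ContDiffOn ℝ 1 x (Set.Icc a b) →
        x a = xa → x b = xb → C1Norm a b (fun t => x t - xE t) < δ → L xE ≤ L x) ∨
      (∃ δ > 0, ∀ x : ℝ → ℝ, ContDiffOn ℝ 1 x (Set.Icc a b) →
        x a = xa → x b = xb → C1Norm a b (fun t => x t - xE t) < δ → L x ≤ L xE)) :
    ∀ t ∈ Set.Icc a b,
      F2 xE * (f1y t (xE t) (derivWithin xE (Set.Icc a b) t) -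
          derivWithin (fun s => f1v s (xE s) (derivWithin xE (Set.Icc a b) s))
            (Set.Icc a b) t) +
      F1 xE * (f2y t (xE t) (derivWithin xE (Set.Icc a b) t) -
          derivWithin (fun s => f2v s (xE s) (derivWithin xE (Set.Icc a b) s))
            (Set.Icc a b) t) = 0 := by
  have hI : UniqueDiffOn ℝ (Icc a b) := uniqueDiffOn_Icc hab
  set e : ℝ → ℝ := derivWithin xE (Icc a b) with he_def
  have hxEc : ContinuousOn xE (Icc a b) := hxE.continuousOn
  have hec : ContinuousOn e (Icc a b) := hxE.continuousOn_derivWithin hI le_rfl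
  have hxEd : ∀ t ∈ Icc a b, HasDerivWithinAt xE (e t) (Icc a b) t := fun t ht =>
    (hxE.differentiableOn one_ne_zero t ht).hasDerivWithinAt
  have hne : Set.Nonempty (Icc a b) := nonempty_Icc.2 hab.le
  haveI : Nonempty (Icc a b) := hne.to_subtype
  set F1E := F1 xE with hF1E
  set F2E := F2 xE with hF2E
  set P : ℝ → ℝ := fun t => F2E * f1y t (xE t) (e t) + F1E * f2y t (xE t) (e t) with hP
  set Q : ℝ → ℝ := fun t => F2E * f1v t (xE t) (e t) + F1E * f2v t (xE t) (e t) with hQ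
  have hPc : ContinuousOn P (Icc a b) :=
    (continuousOn_const.mul (comp_contOn hf1y_cont hxEc hec)).add
      (continuousOn_const.mul (comp_contOn hf2y_cont hxEc hec))
  have hQc : ContinuousOn Q (Icc a b) :=
    (continuousOn_const.mul (comp_contOn hf1v_cont hxEc hec)).add
      (continuousOn_const.mul (comp_contOn hf2v_cont hxEc hec))
  -- ### Step 1: the first variation vanishes
  have step1 : ∀ η : ℝ → ℝ, ContDiffOn ℝ 1 η (Icc a b) → η a = 0 → η b = 0 →
      ∫ t in a..b, (P t * η t + Q t * derivWithin η (Icc a b) t) = 0 := by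
    intro η hη hηa hηb
    set ηd : ℝ → ℝ := derivWithin η (Icc a b) with hηd_def
    have hηc : ContinuousOn η (Icc a b) := hη.continuousOn
    have hηdc : ContinuousOn ηd (Icc a b) := hη.continuousOn_derivWithin hI le_rfl
    have hηdiff : ∀ t ∈ Icc a b, HasDerivWithinAt η (ηd t) (Icc a b) t := fun t ht =>
      (hη.differentiableOn one_ne_zero t ht).hasDerivWithinAt
    set G1 : ℝ → ℝ := fun ε => ∫ t in a..b, f1 t (xE t + ε * η t) (e t + ε * ηd t) with hG1def
    set G2 : ℝ → ℝ := fun ε => ∫ t in a..b, f2 t (xE t + ε * η t) (e t + ε * ηd t) with hG2def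
    set D1 : ℝ := ∫ t in a..b, (f1y t (xE t) (e t) * η t + f1v t (xE t) (e t) * ηd t) with hD1def
    set D2 : ℝ := ∫ t in a..b, (f2y t (xE t) (e t) * η t + f2v t (xE t) (e t) * ηd t) with hD2def
    have hG1 : HasDerivAt G1 D1 0 :=
      first_variation_s3 a b hab f1 f1y f1v hf1_cont hf1y hf1v hf1y_cont hf1v_cont
        xE e η ηd hxEc hec hηc hηdc
    have hG2 : HasDerivAt G2 D2 0 :=
      first_variation_s3 a b hab f2 f2y f2v hf2_cont hf2y hf2v hf2y_cont hf2v_cont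
        xE e η ηd hxEc hec hηc hηdc
    set x : ℝ → ℝ → ℝ := fun ε t => xE t + ε * η t with hxdef
    have hxc : ∀ ε : ℝ, ContDiffOn ℝ 1 (x ε) (Icc a b) := fun ε =>
      hxE.add (contDiffOn_const.mul hη)
    have hxd : ∀ ε : ℝ, ∀ t ∈ Icc a b, derivWithin (x ε) (Icc a b) t = e t + ε * ηd t := by
      intro ε t ht
      exact ((hxEd t ht).add ((hηdiff t ht).const_mul ε)).derivWithin (hI t ht)
    have hFeq1 : ∀ ε : ℝ, F1 (x ε) = G1 ε := by
      intro ε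
      rw [hF1]
      apply intervalIntegral.integral_congr
      intro t ht
      rw [uIcc_of_le hab.le] at ht
      simp only []
      rw [hxd ε t ht]
    have hFeq2 : ∀ ε : ℝ, F2 (x ε) = G2 ε := by
      intro ε
      rw [hF2]
      apply intervalIntegral.integral_congr
      intro t ht
      rw [uIcc_of_le hab.le] at ht
      simp only []
      rw [hxd ε t ht]
    have hLx : ∀ ε : ℝ, L (x ε) = G1 ε * G2 ε := fun ε => by
      rw [hL, hFeq1, hFeq2]
    have hx0 : x 0 = xE := by funext t; simp [hxdef]
    have hLxE : L xE = G1 0 * G2 0 := by rw [← hx0, hLx]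
    -- smallness of the C¹ norm of the variation
    obtain ⟨Mη, hMη⟩ := isCompact_Icc.exists_bound_of_continuousOn hηc
    obtain ⟨Mηd, hMηd⟩ := isCompact_Icc.exists_bound_of_continuousOn hηdc
    have hMs : 0 < Mη + Mηd + 1 := by
      have h1 := (norm_nonneg (η a)).trans (hMη a (left_mem_Icc.2 hab.le))
      have h2 := (norm_nonneg (ηd a)).trans (hMηd a (left_mem_Icc.2 hab.le))
      linarith
    have hnorm : ∀ ε : ℝ, C1Norm a b (fun t => x ε t - xE t) ≤ |ε| * (Mη + Mηd + 1) := by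
      intro ε
      have hfun : (fun t => x ε t - xE t) = fun t => ε * η t := by
        funext t; show xE t + ε * η t - xE t = ε * η t; ring
      rw [hfun, C1Norm]
      have hb1 : (⨆ t : Icc a b, |ε * η t|) ≤ |ε| * Mη := by
        apply ciSup_le
        intro t
        rw [abs_mul]
        exact mul_le_mul_of_nonneg_left (hMη t.1 t.2) (abs_nonneg ε)
      have hb2 : (⨆ t : Icc a b, |derivWithin (fun s => ε * η s) (Icc a b) t|) ≤ |ε| * Mηd := by
        apply ciSup_le
        intro t
        have : derivWithin (fun s => ε * η s) (Icc a b) t.1 = ε * ηd t.1 :=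
          ((hηdiff t.1 t.2).const_mul ε).derivWithin (hI t.1 t.2)
        rw [this, abs_mul]
        exact mul_le_mul_of_nonneg_left (hMηd t.1 t.2) (abs_nonneg ε)
      have : |ε| * Mη + |ε| * Mηd ≤ |ε| * (Mη + Mηd + 1) := by
        have := abs_nonneg ε; nlinarith
      linarith [add_le_add hb1 hb2]
    -- the real function g ε := G1 ε * G2 ε has a local extremum at 0
    have hg : HasDerivAt (fun ε => G1 ε * G2 ε) (D1 * G2 0 + G1 0 * D2) 0 := hG1.mul hG2
    have hcrit : D1 * G2 0 + G1 0 * D2 = 0 := by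
      have hev : ∀ δ : ℝ, 0 < δ → ∀ᶠ ε : ℝ in nhds 0,
          (ContDiffOn ℝ 1 (x ε) (Icc a b) ∧ x ε a = xa ∧ x ε b = xb ∧
            C1Norm a b (fun t => x ε t - xE t) < δ) := by
        intro δ hδ
        have hr : 0 < δ / (Mη + Mηd + 1) := div_pos hδ (by linarith)
        filter_upwards [Metric.ball_mem_nhds (0 : ℝ) hr] with ε hε
        rw [Metric.mem_ball, Real.dist_eq, sub_zero] at hε
        refine ⟨hxc ε, by simp [hxdef, hηa, hxEa], by simp [hxdef, hηb, hxEb], ?_⟩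
        calc C1Norm a b (fun t => x ε t - xE t) ≤ |ε| * (Mη + Mηd + 1) := hnorm ε
          _ < (δ / (Mη + Mηd + 1)) * (Mη + Mηd + 1) :=
            mul_lt_mul_of_pos_right hε (by linarith)
          _ = δ := div_mul_cancel₀ δ (by linarith)
      rcases hext with ⟨δ, hδ, hmin⟩ | ⟨δ, hδ, hmax⟩
      · have : IsLocalMin (fun ε => G1 ε * G2 ε) 0 := by
          filter_upwards [hev δ hδ] with ε ⟨h1, h2, h3, h4⟩
          have := hmin (x ε) h1 h2 h3 h4
          rwa [hLxE, hLx ε] at this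
        have := this.deriv_eq_zero
        rwa [hg.deriv] at this
      · have : IsLocalMax (fun ε => G1 ε * G2 ε) 0 := by
          filter_upwards [hev δ hδ] with ε ⟨h1, h2, h3, h4⟩
          have := hmax (x ε) h1 h2 h3 h4
          rwa [hLxE, hLx ε] at this
        have := this.deriv_eq_zero
        rwa [hg.deriv] at this
    -- identify G1 0, G2 0 with F1E, F2E
    have hG10 : G1 0 = F1E := by rw [hF1E, ← hx0, hFeq1 0]
    have hG20 : G2 0 = F2E := by rw [hF2E, ← hx0, hFeq2 0]
    -- convert the vanishing derivative to the claimed integral identity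
    have hg1c : ContinuousOn (fun t => f1y t (xE t) (e t) * η t + f1v t (xE t) (e t) * ηd t)
        (Icc a b) :=
      ((comp_contOn hf1y_cont hxEc hec).mul hηc).add ((comp_contOn hf1v_cont hxEc hec).mul hηdc)
    have hg2c : ContinuousOn (fun t => f2y t (xE t) (e t) * η t + f2v t (xE t) (e t) * ηd t)
        (Icc a b) :=
      ((comp_contOn hf2y_cont hxEc hec).mul hηc).add ((comp_contOn hf2v_cont hxEc hec).mul hηdc)
    have hint1 : IntervalIntegrable
        (fun t => f1y t (xE t) (e t) * η t + f1v t (xE t) (e t) * ηd t) volume a b :=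
      ContinuousOn.intervalIntegrable (by rw [uIcc_of_le hab.le]; exact hg1c)
    have hint2 : IntervalIntegrable
        (fun t => f2y t (xE t) (e t) * η t + f2v t (xE t) (e t) * ηd t) volume a b :=
      ContinuousOn.intervalIntegrable (by rw [uIcc_of_le hab.le]; exact hg2c)
    have key : ∫ t in a..b, (P t * η t + Q t * ηd t) = F2E * D1 + F1E * D2 := by
      rw [hD1def, hD2def, ← intervalIntegral.integral_const_mul,
        ← intervalIntegral.integral_const_mul,
        ← intervalIntegral.integral_add (hint1.const_mul F2E) (hint2.const_mul F1E)]
      apply intervalIntegral.integral_congr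
      intro t ht
      simp only [hP, hQ]
      ring
    rw [hG10, hG20] at hcrit
    rw [key]
    linear_combination hcrit
  -- ### Step 2: the primitive of a continuous function on [a, b]
  have hprim : ∀ g : ℝ → ℝ, ContinuousOn g (Icc a b) → ∀ t ∈ Icc a b,
      HasDerivWithinAt (fun u => ∫ s in a..u, g s) (g t) (Icc a b) t := by
    intro g hg t ht
    haveI : Fact (t ∈ Icc a b) := ⟨ht⟩
    have hint : IntervalIntegrable g volume a t :=
      ContinuousOn.intervalIntegrable (by
        rw [uIcc_of_le ht.1]
        exact hg.mono (Icc_subset_Icc le_rfl ht.2))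
    exact intervalIntegral.integral_hasDerivWithinAt_right hint
      (hg.stronglyMeasurableAtFilter_nhdsWithin measurableSet_Icc t)
      (hg t ht)
  set A : ℝ → ℝ := fun t => ∫ s in a..t, P s with hAdef
  have hA : ∀ t ∈ Icc a b, HasDerivWithinAt A (P t) (Icc a b) t := hprim P hPc
  have hAc : ContinuousOn A (Icc a b) := fun t ht => (hA t ht).continuousWithinAt
  have hAa : A a = 0 := intervalIntegral.integral_same
  -- ### Step 3: `∫ (Q - A) η' = 0` for all admissible `η`
  have step3 : ∀ η : ℝ → ℝ, ContDiffOn ℝ 1 η (Icc a b) → η a = 0 → η b = 0 →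
      ∫ t in a..b, ((Q t - A t) * derivWithin η (Icc a b) t) = 0 := by
    intro η hη hηa hηb
    set ηd : ℝ → ℝ := derivWithin η (Icc a b) with hηd_def
    have hηc : ContinuousOn η (Icc a b) := hη.continuousOn
    have hηdc : ContinuousOn ηd (Icc a b) := hη.continuousOn_derivWithin hI le_rfl
    have hηdiff : ∀ t ∈ Icc a b, HasDerivWithinAt η (ηd t) (Icc a b) t := fun t ht =>
      (hη.differentiableOn one_ne_zero t ht).hasDerivWithinAt
    have hPη : IntervalIntegrable (fun t => P t * η t) volume a b :=
      ContinuousOn.intervalIntegrable (by rw [uIcc_of_le hab.le]; exact hPc.mul hηc)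
    have hAηd : IntervalIntegrable (fun t => A t * ηd t) volume a b :=
      ContinuousOn.intervalIntegrable (by rw [uIcc_of_le hab.le]; exact hAc.mul hηdc)
    have hQηd : IntervalIntegrable (fun t => Q t * ηd t) volume a b :=
      ContinuousOn.intervalIntegrable (by rw [uIcc_of_le hab.le]; exact hQc.mul hηdc)
    have hftc : ∫ t in a..b, (P t * η t + A t * ηd t) = A b * η b - A a * η a := by
      apply intervalIntegral.integral_eq_sub_of_hasDeriv_right_of_le hab.le
        (hAc.mul hηc) (fun t ht => ?_) (hPη.add hAηd)
      have hIcc : Icc a b ∈ nhds t := Icc_mem_nhds ht.1 ht.2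
      have h1 : HasDerivAt A (P t) t := (hA t (Ioo_subset_Icc_self ht)).hasDerivAt hIcc
      have h2 : HasDerivAt η (ηd t) t := (hηdiff t (Ioo_subset_Icc_self ht)).hasDerivAt hIcc
      exact (h1.mul h2).hasDerivWithinAt
    have hftc0 : ∫ t in a..b, (P t * η t + A t * ηd t) = 0 := by
      rw [hftc, hηa, hηb]; ring
    have h1 := step1 η hη hηa hηb
    rw [← hηd_def] at h1
    have e1 : ∫ t in a..b, (P t * η t + Q t * ηd t) =
        (∫ t in a..b, P t * η t) + ∫ t in a..b, Q t * ηd t :=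
      intervalIntegral.integral_add hPη hQηd
    have e2 : ∫ t in a..b, (P t * η t + A t * ηd t) =
        (∫ t in a..b, P t * η t) + ∫ t in a..b, A t * ηd t :=
      intervalIntegral.integral_add hPη hAηd
    have e3 : ∫ t in a..b, ((Q t - A t) * ηd t) =
        (∫ t in a..b, Q t * ηd t) - ∫ t in a..b, A t * ηd t := by
      rw [← intervalIntegral.integral_sub hQηd hAηd]
      apply intervalIntegral.integral_congr
      intro t ht
      simp only []
      ring
    rw [e3]
    rw [e1] at h1
    rw [e2] at hftc0
    linarith
  -- ### Step 4: du Bois-Reymond lemma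
  set h : ℝ → ℝ := fun t => Q t - A t with hhdef
  have hhc : ContinuousOn h (Icc a b) := hQc.sub hAc
  have hhint : IntervalIntegrable h volume a b :=
    ContinuousOn.intervalIntegrable (by rw [uIcc_of_le hab.le]; exact hhc)
  set c : ℝ := (∫ t in a..b, h t) / (b - a) with hcdef
  have hbna : b - a ≠ 0 := sub_ne_zero.2 hab.ne'
  have hηint : ∫ t in a..b, (h t - c) = 0 := by
    rw [intervalIntegral.integral_sub hhint intervalIntegrable_const,
      intervalIntegral.integral_const, hcdef, smul_eq_mul]
    field_simp
    ring
  have hhcc : ContinuousOn (fun t => h t - c) (Icc a b) := hhc.sub continuousOn_const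
  set η₀ : ℝ → ℝ := fun t => ∫ s in a..t, (h s - c) with hη₀def
  have hη₀d : ∀ t ∈ Icc a b, HasDerivWithinAt η₀ (h t - c) (Icc a b) t :=
    hprim (fun t => h t - c) hhcc
  have hη₀deriv : ∀ t ∈ Icc a b, derivWithin η₀ (Icc a b) t = h t - c := fun t ht =>
    (hη₀d t ht).derivWithin (hI t ht)
  have hη₀cd : ContDiffOn ℝ 1 η₀ (Icc a b) := by
    have h01 : (1 : WithTop ℕ∞) = 0 + 1 := by norm_num
    rw [h01, contDiffOn_succ_iff_derivWithin hI]
    refine ⟨fun t ht => (hη₀d t ht).differentiableWithinAt, by simp, ?_⟩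
    rw [contDiffOn_zero]
    exact hhcc.congr hη₀deriv
  have hη₀a : η₀ a = 0 := intervalIntegral.integral_same
  have hη₀b : η₀ b = 0 := hηint
  have key := step3 η₀ hη₀cd hη₀a hη₀b
  have hint_h_hc : IntervalIntegrable (fun t => h t * (h t - c)) volume a b :=
    ContinuousOn.intervalIntegrable (by rw [uIcc_of_le hab.le]; exact hhc.mul hhcc)
  have hint_c_hc : IntervalIntegrable (fun t => c * (h t - c)) volume a b :=
    ContinuousOn.intervalIntegrable
      (by rw [uIcc_of_le hab.le]; exact continuousOn_const.mul hhcc)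
  have key2 : ∫ t in a..b, (h t * (h t - c)) = 0 := by
    rw [← key]
    apply intervalIntegral.integral_congr
    intro t ht
    rw [uIcc_of_le hab.le] at ht
    simp only []
    rw [hη₀deriv t ht]
  have hc0 : ∫ t in a..b, (c * (h t - c)) = 0 := by
    rw [intervalIntegral.integral_const_mul, hηint, mul_zero]
  have hsq : ∫ t in a..b, ((h t - c) ^ 2) = 0 := by
    have e : ∫ t in a..b, ((h t - c) ^ 2) =
        (∫ t in a..b, (h t * (h t - c))) - ∫ t in a..b, (c * (h t - c)) := by
      rw [← intervalIntegral.integral_sub hint_h_hc hint_c_hc]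
      apply intervalIntegral.integral_congr
      intro t ht
      simp only []
      ring
    rw [e, key2, hc0, sub_zero]
  have hsqc : ContinuousOn (fun t => (h t - c) ^ 2) (Icc a b) := hhcc.pow 2
  have hsqIcc : ∫ t in Icc a b, ((h t - c) ^ 2) = 0 := by
    rw [MeasureTheory.integral_Icc_eq_integral_Ioc,
      ← intervalIntegral.integral_of_le hab.le]
    exact hsq
  have hae := (MeasureTheory.setIntegral_eq_zero_iff_of_nonneg_ae
    (Filter.Eventually.of_forall fun t => sq_nonneg _)
    (hsqc.integrableOn_compact isCompact_Icc)).1 hsqIcc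
  have hEqsq : EqOn (fun t => (h t - c) ^ 2) 0 (Icc a b) :=
    MeasureTheory.Measure.eqOn_Icc_of_ae_eq volume hab.ne hae hsqc continuousOn_const
  have hEq : ∀ t ∈ Icc a b, h t = c := by
    intro t ht
    have := hEqsq ht
    simp only [Pi.zero_apply] at this
    have := pow_eq_zero_iff (n := 2) (by norm_num) |>.1 this
    linarith [sub_eq_zero.1 this]
  -- ### Step 5: conclusion
  intro t ht
  have hQA : HasDerivWithinAt Q (P t) (Icc a b) t := by
    have h1 : HasDerivWithinAt (fun s => A s + c) (P t) (Icc a b) t := (hA t ht).add_const c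
    refine h1.congr (fun s hs => ?_) ?_
    · have := hEq s hs
      simp only [hhdef] at this
      linarith
    · have := hEq t ht
      simp only [hhdef] at this
      linarith
  have hq1 : HasDerivWithinAt (fun s => f1v s (xE s) (e s))
      (derivWithin (fun s => f1v s (xE s) (e s)) (Icc a b) t) (Icc a b) t :=
    (hdiff1 t ht).hasDerivWithinAt
  have hq2 : HasDerivWithinAt (fun s => f2v s (xE s) (e s))
      (derivWithin (fun s => f2v s (xE s) (e s)) (Icc a b) t) (Icc a b) t :=
    (hdiff2 t ht).hasDerivWithinAt
  have hQ2 : HasDerivWithinAt Q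
      (F2E * derivWithin (fun s => f1v s (xE s) (e s)) (Icc a b) t +
        F1E * derivWithin (fun s => f2v s (xE s) (e s)) (Icc a b) t) (Icc a b) t :=
    (hq1.const_mul F2E).add (hq2.const_mul F1E)
  have huniq : P t = F2E * derivWithin (fun s => f1v s (xE s) (e s)) (Icc a b) t +
      F1E * derivWithin (fun s => f2v s (xE s) (e s)) (Icc a b) t := by
    rw [← hQA.derivWithin (hI t ht), hQ2.derivWithin (hI t ht)]
  simp only [hP] at huniq
  linear_combination huniq
end

section
/- Let a < b be real numbers and let f_1, f_2 : [a,b] × ℝ × ℝ → ℝ be continuous with continuous partial derivatives f_{1y}, f_{1v}, f_{2y}, f_{2v} with respect to their second and third arguments. Suppose x̃ : [a,b] → ℝ is C¹ with x̃(b) = x_b (the value x(a) is not specified), and x̃ is a weak local extremizer of the product functional L[x] = F_1[x] · F_2[x]: there exists δ > 0 such that L[x̃] ≤ L[x] for every C¹ function x with x(b) = x_b and ‖x − x̃‖₁ < δ (or L[x̃] ≥ L[x] for all such x). Then the natural boundary condition F_2[x̃] · f_{1v}(a, x̃(a), x̃'(a)) + F_1[x̃] · f_{2v}(a, x̃(a),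 x̃'(a)) = 0 holds. -/
open Set MeasureTheory intervalIntegral Filter

lemma hasDerivAt_line_aux0 {f fy fv : ℝ → ℝ → ℝ}
    (hy : ∀ y v, HasDerivAt (fun y' => f y' v) (fy y v) y)
    (hv : ∀ y v, HasDerivAt (fun v' => f y v') (fv y v) v)
    (hfy : Continuous fun p : ℝ × ℝ => fy p.1 p.2)
    (y0 v0 p q : ℝ) :
    HasDerivAt (fun ε => f (y0 + ε * p) (v0 + ε * q))
      (fy y0 v0 * p + fv y0 v0 * q) 0 := by
  have hN : ∀ ε : ℝ, f (y0 + ε * p) (v0 + ε * q)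
      = (∫ s in y0..(y0 + ε * p), fy s (v0 + ε * q)) + f y0 (v0 + ε * q) := by
    intro ε
    have := intervalIntegral.integral_eq_sub_of_hasDerivAt
      (f := fun s => f s (v0 + ε * q)) (f' := fun s => fy s (v0 + ε * q))
      (a := y0) (b := y0 + ε * p)
      (fun s _ => hy s (v0 + ε * q))
      (((hfy.comp (continuous_id.prodMk continuous_const)).continuousOn).intervalIntegrable)
    rw [this]; ring
  have h2 : HasDerivAt (fun ε : ℝ => f y0 (v0 + ε * q)) (fv y0 v0 * q) 0 := by
    have haff : HasDerivAt (fun ε : ℝ => v0 + ε * q) q 0 := by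
      simpa using ((hasDerivAt_id (0:ℝ)).mul_const q).const_add v0
    have hbase : HasDerivAt (fun v' => f y0 v') (fv y0 v0) ((fun ε : ℝ => v0 + ε * q) 0) := by
      simpa using hv y0 v0
    simpa [Function.comp_def] using HasDerivAt.comp (x := (0:ℝ)) hbase haff
  have h1 : HasDerivAt (fun ε : ℝ => ∫ s in y0..(y0 + ε * p), fy s (v0 + ε * q))
      (fy y0 v0 * p) 0 := by
    rw [hasDerivAt_iff_isLittleO, Asymptotics.isLittleO_iff]
    intro c hc
    have hcont := hfy.continuousAt (x := (y0, v0))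
    rw [Metric.continuousAt_iff] at hcont
    obtain ⟨δ, hδ, hball⟩ := hcont (c / (|p| + 1)) (by positivity)
    have hev : ∀ᶠ ε : ℝ in nhds 0, |ε| < δ / (|p| + |q| + 1) := by
      have := eventually_abs_sub_lt (0:ℝ) (show 0 < δ / (|p| + |q| + 1) by positivity)
      simpa using this
    filter_upwards [hev] with ε hε
    have hint : IntervalIntegrable (fun s => fy s (v0 + ε * q)) volume y0 (y0 + ε * p) :=
      ((hfy.comp (continuous_id.prodMk continuous_const)).continuousOn).intervalIntegrable
    have key : (∫ s in y0..(y0 + ε * p), fy s (v0 + ε * q)) - ε * (fy y0 v0 * p)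
        = ∫ s in y0..(y0 + ε * p), (fy s (v0 + ε * q) - fy y0 v0) := by
      rw [intervalIntegral.integral_sub hint intervalIntegrable_const,
        intervalIntegral.integral_const, smul_eq_mul]
      ring
    have hbound : ∀ s ∈ Set.uIoc y0 (y0 + ε * p), ‖fy s (v0 + ε * q) - fy y0 v0‖ ≤ c / (|p| + 1) := by
      intro s hs
      have hs' : |s - y0| ≤ |ε * p| := by
        rw [Set.mem_uIoc] at hs
        have l1 := le_abs_self (ε * p)
        have l2 := neg_abs_le (ε * p)
        have l3 := abs_nonneg (ε * p)
        rcases hs with ⟨h1, h2⟩ | ⟨h1, h2⟩ <;> rw [abs_sub_le_iff] <;>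
          constructor <;> linarith
      have hd : dist (s, v0 + ε * q) (y0, v0) < δ := by
        rw [Prod.dist_eq]
        have h1 : dist s y0 < δ := by
          rw [Real.dist_eq]
          calc |s - y0| ≤ |ε * p| := hs'
            _ ≤ |ε| * (|p| + |q| + 1) := by rw [abs_mul]; nlinarith [abs_nonneg ε, abs_nonneg q]
            _ < δ := by
                rw [lt_div_iff₀ (by positivity)] at hε
                linarith
        have h2 : dist (v0 + ε * q) v0 < δ := by
          rw [Real.dist_eq]
          have : |v0 + ε * q - v0| = |ε * q| := by ring_nf
          rw [this, abs_mul]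
          calc |ε| * |q| ≤ |ε| * (|p| + |q| + 1) := by nlinarith [abs_nonneg ε, abs_nonneg p]
            _ < δ := by rw [lt_div_iff₀ (by positivity)] at hε; linarith
        exact max_lt h1 h2
      have := hball hd
      rw [Real.dist_eq] at this
      exact le_of_lt this
    calc ‖(∫ s in y0..(y0 + ε * p), fy s (v0 + ε * q)) - (∫ s in y0..(y0+0*p), fy s (v0+0*q))
          - (ε - 0) • (fy y0 v0 * p)‖
        = ‖∫ s in y0..(y0 + ε * p), (fy s (v0 + ε * q) - fy y0 v0)‖ := by
          rw [show (∫ s in y0..(y0+0*p), fy s (v0+0*q)) = 0 by simp, smul_eq_mul]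
          rw [sub_zero, sub_zero, ← key]
      _ ≤ c / (|p| + 1) * |y0 + ε * p - y0| :=
          intervalIntegral.norm_integral_le_of_norm_le_const hbound
      _ ≤ c * ‖ε - 0‖ := by
          rw [show y0 + ε * p - y0 = ε * p by ring, abs_mul, sub_zero, Real.norm_eq_abs]
          rw [div_mul_eq_mul_div, div_le_iff₀ (by positivity)]
          nlinarith [abs_nonneg ε, abs_nonneg p, mul_nonneg (abs_nonneg ε) (abs_nonneg p),
            hc.le, mul_nonneg hc.le (mul_nonneg (abs_nonneg ε) (abs_nonneg p))]
  have := h1.add h2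
  have heq : (fun ε : ℝ => (∫ s in y0..(y0 + ε * p), fy s (v0 + ε * q)) + f y0 (v0 + ε * q))
      = fun ε => f (y0 + ε * p) (v0 + ε * q) := by
    funext ε; rw [hN ε]
  rw [← heq]; exact this

lemma hasDerivAt_line_aux {f fy fv : ℝ → ℝ → ℝ}
    (hy : ∀ y v, HasDerivAt (fun y' => f y' v) (fy y v) y)
    (hv : ∀ y v, HasDerivAt (fun v' => f y v') (fv y v) v)
    (hfy : Continuous fun p : ℝ × ℝ => fy p.1 p.2)
    (y0 v0 p q ε0 : ℝ) :
    HasDerivAt (fun ε => f (y0 + ε * p) (v0 + ε * q))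
      (fy (y0 + ε0 * p) (v0 + ε0 * q) * p + fv (y0 + ε0 * p) (v0 + ε0 * q) * q) ε0 := by
  have h0 := hasDerivAt_line_aux0 hy hv hfy (y0 + ε0 * p) (v0 + ε0 * q) p q
  have hshift : HasDerivAt (fun ε : ℝ => ε - ε0) 1 ε0 := (hasDerivAt_id ε0).sub_const ε0
  have e : (0:ℝ) = (fun ε : ℝ => ε - ε0) ε0 := by simp
  have hbase := e ▸ h0
  have h := HasDerivAt.comp (h := fun ε : ℝ => ε - ε0) (x := ε0) hbase hshift
  have heq : ((fun ε => f ((y0 + ε0 * p) + ε * p) ((v0 + ε0 * q) + ε * q)) ∘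
      fun ε : ℝ => ε - ε0) = fun ε => f (y0 + ε * p) (v0 + ε * q) := by
    funext ε
    simp only [Function.comp]
    ring_nf
  rw [heq] at h
  simpa using h

open Set MeasureTheory intervalIntegral Filter Metric

lemma first_variation_aux (a b : ℝ) (hab : a < b)
    (f fy fv : ℝ → ℝ → ℝ → ℝ)
    (hfy : ∀ t ∈ Set.Icc a b, ∀ y v : ℝ, HasDerivAt (fun y' => f t y' v) (fy t y v) y)
    (hfv : ∀ t ∈ Set.Icc a b, ∀ y v : ℝ, HasDerivAt (fun v' => f t y v') (fv t y v) v)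
    (hf_cont : ContinuousOn (fun p : ℝ × ℝ × ℝ => f p.1 p.2.1 p.2.2)
      (Set.Icc a b ×ˢ (Set.univ : Set ℝ) ×ˢ (Set.univ : Set ℝ)))
    (hfy_cont : ContinuousOn (fun p : ℝ × ℝ × ℝ => fy p.1 p.2.1 p.2.2)
      (Set.Icc a b ×ˢ (Set.univ : Set ℝ) ×ˢ (Set.univ : Set ℝ)))
    (hfv_cont : ContinuousOn (fun p : ℝ × ℝ × ℝ => fv p.1 p.2.1 p.2.2)
      (Set.Icc a b ×ˢ (Set.univ : Set ℝ) ×ˢ (Set.univ : Set ℝ)))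
    (Y V η w : ℝ → ℝ)
    (hY : ContinuousOn Y (Set.Icc a b)) (hV : ContinuousOn V (Set.Icc a b))
    (hη : Continuous η) (hw : Continuous w) :
    HasDerivAt (fun ε => ∫ t in a..b, f t (Y t + ε * η t) (V t + ε * w t))
      (∫ t in a..b, (fy t (Y t) (V t) * η t + fv t (Y t) (V t) * w t)) 0 := by
  have hsub : Set.uIoc a b ⊆ Set.Icc a b := by
    rw [Set.uIoc_of_le hab.le]; exact Set.Ioc_subset_Icc_self
  -- continuity of the composed integrand for each ε
  have hmap : ∀ ε : ℝ, ContinuousOn (fun t => f t (Y t + ε * η t) (V t + ε * w t))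
      (Set.Icc a b) := by
    intro ε
    have hg : ContinuousOn (fun t : ℝ => ((t, Y t + ε * η t, V t + ε * w t) : ℝ × ℝ × ℝ))
        (Set.Icc a b) :=
      continuousOn_id.prodMk ((hY.add ((hη.continuousOn).const_smul ε)).prodMk
        (hV.add ((hw.continuousOn).const_smul ε)))
    exact hf_cont.comp hg (fun t ht => by simp [ht])
  have hmap' : ContinuousOn
      (fun t => fy t (Y t) (V t) * η t + fv t (Y t) (V t) * w t) (Set.Icc a b) := by
    have hg : ContinuousOn (fun t : ℝ => ((t, Y t, V t) : ℝ × ℝ × ℝ)) (Set.Icc a b) :=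
      continuousOn_id.prodMk (hY.prodMk hV)
    exact ((hfy_cont.comp hg (fun t ht => by simp [ht])).mul hη.continuousOn).add
      ((hfv_cont.comp hg (fun t ht => by simp [ht])).mul hw.continuousOn)
  -- bounds
  obtain ⟨MY, hMY⟩ := isCompact_Icc.exists_bound_of_continuousOn hY
  obtain ⟨MV, hMV⟩ := isCompact_Icc.exists_bound_of_continuousOn hV
  obtain ⟨Mη, hMη⟩ := isCompact_Icc.exists_bound_of_continuousOn hη.continuousOn
  obtain ⟨Mw, hMw⟩ := isCompact_Icc.exists_bound_of_continuousOn hw.continuousOn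
  set M : ℝ := |MY| + |MV| + |Mη| + |Mw| + 1 with hM
  have hM0 : 0 < M := by positivity
  have hMb : ∀ t ∈ Set.Icc a b, |Y t| ≤ M ∧ |V t| ≤ M ∧ |η t| ≤ M ∧ |w t| ≤ M := by
    intro t ht
    have h1 := hMY t ht; have h2 := hMV t ht; have h3 := hMη t ht; have h4 := hMw t ht
    rw [Real.norm_eq_abs] at h1 h2 h3 h4
    refine ⟨?_, ?_, ?_, ?_⟩ <;>
      · simp only [hM]
        cases' abs_cases MY with hc hc <;> cases' abs_cases MV with hd hd <;>
          cases' abs_cases Mη with he he <;> cases' abs_cases Mw with hg hg <;> linarith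
  set K : Set (ℝ × ℝ × ℝ) := Set.Icc a b ×ˢ Set.Icc (-(2*M)) (2*M) ×ˢ Set.Icc (-(2*M)) (2*M)
    with hK
  have hKc : IsCompact K := isCompact_Icc.prod (isCompact_Icc.prod isCompact_Icc)
  have hKS : K ⊆ Set.Icc a b ×ˢ (Set.univ : Set ℝ) ×ˢ (Set.univ : Set ℝ) := by
    intro p hp
    simp only [hK, Set.mem_prod] at hp ⊢
    exact ⟨hp.1, trivial, trivial⟩
  obtain ⟨Cy, hCy⟩ := hKc.exists_bound_of_continuousOn (hfy_cont.mono hKS)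
  obtain ⟨Cv, hCv⟩ := hKc.exists_bound_of_continuousOn (hfv_cont.mono hKS)
  have hmem : ∀ t ∈ Set.Icc a b, ∀ ε ∈ ball (0:ℝ) 1,
      ((t, Y t + ε * η t, V t + ε * w t) : ℝ × ℝ × ℝ) ∈ K := by
    intro t ht ε hε
    rw [mem_ball, dist_zero_right, Real.norm_eq_abs] at hε
    obtain ⟨h1, h2, h3, h4⟩ := hMb t ht
    simp only [hK, Set.mem_prod, Set.mem_Icc]
    have e1 : |Y t + ε * η t| ≤ 2 * M := by
      calc |Y t + ε * η t| ≤ |Y t| + |ε| * |η t| := by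
            rw [← abs_mul]; exact abs_add_le _ _
        _ ≤ M + 1 * M := by
            have := mul_le_mul hε.le h3 (abs_nonneg _) (by norm_num)
            nlinarith [abs_nonneg (η t)]
        _ = 2 * M := by ring
    have e2 : |V t + ε * w t| ≤ 2 * M := by
      calc |V t + ε * w t| ≤ |V t| + |ε| * |w t| := by
            rw [← abs_mul]; exact abs_add_le _ _
        _ ≤ M + 1 * M := by
            have := mul_le_mul hε.le h4 (abs_nonneg _) (by norm_num)
            nlinarith [abs_nonneg (w t)]
        _ = 2 * M := by ring
    exact ⟨ht, ⟨(abs_le.mp e1).1, (abs_le.mp e1).2⟩, ⟨(abs_le.mp e2).1, (abs_le.mp e2).2⟩⟩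
  -- apply dominated differentiation
  have main := intervalIntegral.hasDerivAt_integral_of_dominated_loc_of_deriv_le
    (F := fun ε t => f t (Y t + ε * η t) (V t + ε * w t))
    (F' := fun ε t => fy t (Y t + ε * η t) (V t + ε * w t) * η t
      + fv t (Y t + ε * η t) (V t + ε * w t) * w t)
    (x₀ := (0:ℝ)) (a := a) (b := b) (μ := volume)
    (bound := fun _ => (|Cy| + |Cv|) * M) (s := ball (0:ℝ) 1) (ball_mem_nhds _ one_pos)
    (Filter.Eventually.of_forall fun ε =>
      ((hmap ε).mono hsub).aestronglyMeasurable measurableSet_uIoc)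
    (((hmap 0).mono (by rw [Set.uIcc_of_le hab.le])).intervalIntegrable)
    ?meas' ?bound ?bint ?diff
  · have : (fun t => fy t (Y t + 0 * η t) (V t + 0 * w t) * η t
        + fv t (Y t + 0 * η t) (V t + 0 * w t) * w t)
        = fun t => fy t (Y t) (V t) * η t + fv t (Y t) (V t) * w t := by
      funext t; simp
    rw [this] at main
    exact main.2
  case meas' =>
    have : ContinuousOn (fun t => fy t (Y t + 0 * η t) (V t + 0 * w t) * η t
        + fv t (Y t + 0 * η t) (V t + 0 * w t) * w t) (Set.Icc a b) := by
      simpa using hmap'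
    exact (this.mono hsub).aestronglyMeasurable measurableSet_uIoc
  case bound =>
    refine Filter.Eventually.of_forall fun t ht ε hε => ?_
    have htI := hsub ht
    have hmemK := hmem t htI ε hε
    obtain ⟨h1, h2, h3, h4⟩ := hMb t htI
    have by1 := hCy _ hmemK
    have bv1 := hCv _ hmemK
    rw [Real.norm_eq_abs] at by1 bv1 ⊢
    calc |fy t (Y t + ε * η t) (V t + ε * w t) * η t
          + fv t (Y t + ε * η t) (V t + ε * w t) * w t|
        ≤ |fy t (Y t + ε * η t) (V t + ε * w t)| * |η t|
          + |fv t (Y t + ε * η t) (V t + ε * w t)| * |w t| := by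
          rw [← abs_mul, ← abs_mul]; exact abs_add_le _ _
      _ ≤ |Cy| * M + |Cv| * M := by
          have g1 : |fy t (Y t + ε * η t) (V t + ε * w t)| * |η t| ≤ |Cy| * M :=
            mul_le_mul (le_trans by1 (le_abs_self _)) h3 (abs_nonneg _) (abs_nonneg _)
          have g2 : |fv t (Y t + ε * η t) (V t + ε * w t)| * |w t| ≤ |Cv| * M :=
            mul_le_mul (le_trans bv1 (le_abs_self _)) h4 (abs_nonneg _) (abs_nonneg _)
          linarith
      _ = (|Cy| + |Cv|) * M := by ring
  case bint => exact intervalIntegrable_const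
  case diff =>
    refine Filter.Eventually.of_forall fun t ht ε hε => ?_
    have htI := hsub ht
    have hsy : Continuous fun p : ℝ × ℝ => fy t p.1 p.2 := by
      have hg : Continuous fun p : ℝ × ℝ => ((t, p.1, p.2) : ℝ × ℝ × ℝ) :=
        continuous_const.prodMk (continuous_fst.prodMk continuous_snd)
      exact hfy_cont.comp_continuous hg (fun p => by simp [htI])
    exact hasDerivAt_line_aux (hfy t htI) (hfv t htI) hsy (Y t) (V t) (η t) (w t) ε

open Set MeasureTheory intervalIntegral Filter
open scoped ContDiff

lemma zero_at_left_aux (a b : ℝ) (hab : a < b) (ψ : ℝ → ℝ) (hψ : Continuous ψ)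
    (h : ∀ g : ℝ → ℝ, ContDiff ℝ ∞ g → HasCompactSupport g → tsupport g ⊆ Set.Ioo a b →
      ∫ t in a..b, g t * ψ t = 0) : ψ a = 0 := by
  have hloc : LocallyIntegrableOn ψ (Set.Ioo a b) volume :=
    (hψ.locallyIntegrable).locallyIntegrableOn _
  have hint : ∀ g : ℝ → ℝ, ContDiff ℝ ∞ g → HasCompactSupport g →
      tsupport g ⊆ Set.Ioo a b → ∫ x, g x • ψ x = 0 := by
    intro g hg hgc hgs
    have hsupp : ∀ x ∉ Set.Ioo a b, g x • ψ x = 0 := by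
      intro x hx
      have : g x = 0 := by
        by_contra hne
        exact hx (hgs (subset_tsupport g (by simpa [Function.mem_support] using hne)))
      simp [this]
    rw [← MeasureTheory.setIntegral_eq_integral_of_forall_compl_eq_zero hsupp,
      ← MeasureTheory.integral_Ioc_eq_integral_Ioo,
      ← intervalIntegral.integral_of_le hab.le]
    simpa [smul_eq_mul] using h g hg hgc hgs
  have hae := isOpen_Ioo.ae_eq_zero_of_integral_contDiff_smul_eq_zero (μ := volume) hloc hint
  have hz : ∀ t ∈ Set.Ioo a b, ψ t = 0 := by
    by_contra hcon
    push_neg at hcon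
    obtain ⟨t0, ht0, hne⟩ := hcon
    set U : Set ℝ := Set.Ioo a b ∩ ψ ⁻¹' ({0}ᶜ) with hU
    have hUopen : IsOpen U := isOpen_Ioo.inter (isOpen_compl_singleton.preimage hψ)
    have hUne : U.Nonempty := ⟨t0, ht0, hne⟩
    have hpos := hUopen.measure_pos volume hUne
    rw [ae_iff] at hae
    have hsub : U ⊆ {x | ¬(x ∈ Set.Ioo a b → ψ x = 0)} := by
      intro x hx
      simp only [Set.mem_setOf_eq, Classical.not_imp]
      exact ⟨hx.1, hx.2⟩
    have := measure_mono_null hsub hae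
    rw [this] at hpos
    exact lt_irrefl 0 hpos
  have hnb : (nhdsWithin a (Set.Ioo a b)).NeBot := by
    rw [← mem_closure_iff_nhdsWithin_neBot, closure_Ioo hab.ne]
    exact ⟨le_refl a, hab.le⟩
  have h1 : Filter.Tendsto ψ (nhdsWithin a (Set.Ioo a b)) (nhds (ψ a)) :=
    (hψ.continuousWithinAt).tendsto
  have h2 : Filter.Tendsto ψ (nhdsWithin a (Set.Ioo a b)) (nhds 0) := by
    apply Filter.Tendsto.congr' _ tendsto_const_nhds
    filter_upwards [self_mem_nhdsWithin] with x hx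
    exact (hz x hx).symm
  exact tendsto_nhds_unique h1 h2


open Set MeasureTheory intervalIntegral Filter Metric
open scoped ContDiff


/-- Natural boundary condition at `a` for the product functional
`L[x] = F₁[x] · F₂[x]` when `x(a)` is free and `x(b) = x_b` is fixed. -/
theorem product_natural_boundary_left
    (a b : ℝ) (hab : a < b)
    (f1 f1y f1v f2 f2y f2v : ℝ → ℝ → ℝ → ℝ)
    (hf1_cont : ContinuousOn (fun p : ℝ × ℝ × ℝ => f1 p.1 p.2.1 p.2.2)
      (Set.Icc a b ×ˢ (Set.univ : Set ℝ) ×ˢ (Set.univ : Set ℝ)))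
    (hf2_cont : ContinuousOn (fun p : ℝ × ℝ × ℝ => f2 p.1 p.2.1 p.2.2)
      (Set.Icc a b ×ˢ (Set.univ : Set ℝ) ×ˢ (Set.univ : Set ℝ)))
    (hf1y : ∀ t ∈ Set.Icc a b, ∀ y v : ℝ,
      HasDerivAt (fun y' => f1 t y' v) (f1y t y v) y)
    (hf1v : ∀ t ∈ Set.Icc a b, ∀ y v : ℝ,
      HasDerivAt (fun v' => f1 t y v') (f1v t y v) v)
    (hf2y : ∀ t ∈ Set.Icc a b, ∀ y v : ℝ,
      HasDerivAt (fun y' => f2 t y' v) (f2y t y v) y)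
    (hf2v : ∀ t ∈ Set.Icc a b, ∀ y v : ℝ,
      HasDerivAt (fun v' => f2 t y v') (f2v t y v) v)
    (hf1y_cont : ContinuousOn (fun p : ℝ × ℝ × ℝ => f1y p.1 p.2.1 p.2.2)
      (Set.Icc a b ×ˢ (Set.univ : Set ℝ) ×ˢ (Set.univ : Set ℝ)))
    (hf1v_cont : ContinuousOn (fun p : ℝ × ℝ × ℝ => f1v p.1 p.2.1 p.2.2)
      (Set.Icc a b ×ˢ (Set.univ : Set ℝ) ×ˢ (Set.univ : Set ℝ)))
    (hf2y_cont : ContinuousOn (fun p : ℝ × ℝ × ℝ => f2y p.1 p.2.1 p.2.2)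
      (Set.Icc a b ×ˢ (Set.univ : Set ℝ) ×ˢ (Set.univ : Set ℝ)))
    (hf2v_cont : ContinuousOn (fun p : ℝ × ℝ × ℝ => f2v p.1 p.2.1 p.2.2)
      (Set.Icc a b ×ˢ (Set.univ : Set ℝ) ×ˢ (Set.univ : Set ℝ)))
    (xb : ℝ) (xE : ℝ → ℝ)
    (hxE : ContDiffOn ℝ 1 xE (Set.Icc a b))
    (hxEb : xE b = xb)
    (F1 F2 : (ℝ → ℝ) → ℝ)
    (hF1 : ∀ x, F1 x = ∫ t in a..b, f1 t (x t) (derivWithin x (Set.Icc a b) t))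
    (hF2 : ∀ x, F2 x = ∫ t in a..b, f2 t (x t) (derivWithin x (Set.Icc a b) t))
    (L : (ℝ → ℝ) → ℝ)
    (hL : ∀ x, L x = F1 x * F2 x)
    (hext :
      (∃ δ > 0, ∀ x : ℝ → ℝ, ContDiffOn ℝ 1 x (Set.Icc a b) →
        x b = xb → C1Norm a b (fun t => x t - xE t) < δ → L xE ≤ L x) ∨
      (∃ δ > 0, ∀ x : ℝ → ℝ, ContDiffOn ℝ 1 x (Set.Icc a b) →
        x b = xb → C1Norm a b (fun t => x t - xE t) < δ → L x ≤ L xE)) :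
    F2 xE * f1v a (xE a) (derivWithin xE (Set.Icc a b) a) +
      F1 xE * f2v a (xE a) (derivWithin xE (Set.Icc a b) a) = 0 := by
  haveI : Nonempty ↥(Set.Icc a b) := ⟨⟨a, le_refl a, hab.le⟩⟩
  have hUD : UniqueDiffOn ℝ (Set.Icc a b) := uniqueDiffOn_Icc hab
  set X : ℝ → ℝ := fun t => derivWithin xE (Set.Icc a b) t with hX
  have hXc : ContinuousOn X (Set.Icc a b) := hxE.continuousOn_derivWithin hUD (le_refl 1)
  have hxEc : ContinuousOn xE (Set.Icc a b) := hxE.continuousOn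
  have hxEd : DifferentiableOn ℝ xE (Set.Icc a b) := hxE.differentiableOn one_ne_zero
  -- First variation vanishes for all C¹ variations vanishing at b
  have key : ∀ η : ℝ → ℝ, ContDiff ℝ 1 η → η b = 0 →
      F2 xE * (∫ t in a..b,
        (f1y t (xE t) (X t) * η t + f1v t (xE t) (X t) * deriv η t)) +
      F1 xE * (∫ t in a..b,
        (f2y t (xE t) (X t) * η t + f2v t (xE t) (X t) * deriv η t)) = 0 := by
    intro η hηC1 hηb
    have hηd : ∀ t, HasDerivAt η (deriv η t) t :=
      fun t => ((hηC1.differentiable one_ne_zero) t).hasDerivAt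
    have hηc : Continuous η := hηC1.continuous
    have hη'c : Continuous (deriv η) := (contDiff_one_iff_deriv.mp hηC1).2
    have hD1 := first_variation_aux a b hab f1 f1y f1v hf1y hf1v hf1_cont hf1y_cont hf1v_cont
      xE X η (deriv η) hxEc hXc hηc hη'c
    have hD2 := first_variation_aux a b hab f2 f2y f2v hf2y hf2v hf2_cont hf2y_cont hf2v_cont
      xE X η (deriv η) hxEc hXc hηc hη'c
    have hderivW : ∀ ε : ℝ, ∀ t ∈ Set.Icc a b,
        derivWithin (fun s => xE s + ε * η s) (Set.Icc a b) t = X t + ε * deriv η t := by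
      intro ε t ht
      have h1 : HasDerivWithinAt xE (X t) (Set.Icc a b) t := (hxEd t ht).hasDerivWithinAt
      have h2 : HasDerivWithinAt (fun s => ε * η s) (ε * deriv η t) (Set.Icc a b) t :=
        ((hηd t).const_mul ε).hasDerivWithinAt
      exact (h1.add h2).derivWithin (hUD t ht)
    have hFeq1 : ∀ ε : ℝ, F1 (fun s => xE s + ε * η s)
        = ∫ t in a..b, f1 t (xE t + ε * η t) (X t + ε * deriv η t) := by
      intro ε
      rw [hF1]
      apply intervalIntegral.integral_congr
      intro t ht
      rw [Set.uIcc_of_le hab.le] at ht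
      simp only [hderivW ε t ht]
    have hFeq2 : ∀ ε : ℝ, F2 (fun s => xE s + ε * η s)
        = ∫ t in a..b, f2 t (xE t + ε * η t) (X t + ε * deriv η t) := by
      intro ε
      rw [hF2]
      apply intervalIntegral.integral_congr
      intro t ht
      rw [Set.uIcc_of_le hab.le] at ht
      simp only [hderivW ε t ht]
    have hd1 : HasDerivAt (fun ε => F1 (fun s => xE s + ε * η s))
        (∫ t in a..b, (f1y t (xE t) (X t) * η t + f1v t (xE t) (X t) * deriv η t)) 0 := by
      have he : (fun ε => F1 (fun s => xE s + ε * η s))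
          = fun ε => ∫ t in a..b, f1 t (xE t + ε * η t) (X t + ε * deriv η t) :=
        funext hFeq1
      rw [he]; exact hD1
    have hd2 : HasDerivAt (fun ε => F2 (fun s => xE s + ε * η s))
        (∫ t in a..b, (f2y t (xE t) (X t) * η t + f2v t (xE t) (X t) * deriv η t)) 0 := by
      have he : (fun ε => F2 (fun s => xE s + ε * η s))
          = fun ε => ∫ t in a..b, f2 t (xE t + ε * η t) (X t + ε * deriv η t) :=
        funext hFeq2
      rw [he]; exact hD2
    have hx0 : (fun s => xE s + (0:ℝ) * η s) = xE := by funext s; simp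
    set I1 := ∫ t in a..b, (f1y t (xE t) (X t) * η t + f1v t (xE t) (X t) * deriv η t)
      with hI1
    set I2 := ∫ t in a..b, (f2y t (xE t) (X t) * η t + f2v t (xE t) (X t) * deriv η t)
      with hI2
    have hφd : HasDerivAt (fun ε => L (fun s => xE s + ε * η s))
        (I1 * F2 xE + F1 xE * I2) 0 := by
      have hmul := hd1.mul hd2
      have heq : (fun ε => F1 (fun s => xE s + ε * η s) * F2 (fun s => xE s + ε * η s))
          = fun ε => L (fun s => xE s + ε * η s) := by
        funext ε; rw [hL]
      rw [show ((fun ε => F1 (fun s => xE s + ε * η s)) * fun ε => F2 (fun s => xE s + ε * η s)) = fun ε => L (fun s => xE s + ε * η s) from heq] at hmul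
      have e1 : F1 (fun s => xE s + (0:ℝ) * η s) = F1 xE := by rw [hx0]
      have e2 : F2 (fun s => xE s + (0:ℝ) * η s) = F2 xE := by rw [hx0]
      simpa [e1, e2] using hmul
    have hcd : ∀ ε : ℝ, ContDiffOn ℝ 1 (fun s => xE s + ε * η s) (Set.Icc a b) :=
      fun ε => hxE.add ((contDiff_const.mul hηC1).contDiffOn)
    have hbv : ∀ ε : ℝ, (fun s => xE s + ε * η s) b = xb := by
      intro ε; simp only [hηb, hxEb]; ring
    obtain ⟨Mη, hMη⟩ := isCompact_Icc.exists_bound_of_continuousOn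
      (hηc.continuousOn (s := Set.Icc a b))
    obtain ⟨Mη', hMη'⟩ := isCompact_Icc.exists_bound_of_continuousOn
      (hη'c.continuousOn (s := Set.Icc a b))
    have hsmall : ∀ δ : ℝ, 0 < δ → ∀ᶠ ε : ℝ in nhds 0,
        C1Norm a b (fun s => (xE s + ε * η s) - xE s) < δ := by
      intro δ hδ
      set Mt : ℝ := |Mη| + |Mη'| + 1 with hMt
      have hMt0 : (0:ℝ) < Mt := by positivity
      have hev : ∀ᶠ ε : ℝ in nhds 0, |ε| < δ / (2 * Mt) := by
        have := eventually_abs_sub_lt (0:ℝ) (show 0 < δ / (2 * Mt) by positivity)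
        simpa using this
      filter_upwards [hev] with ε hε
      have hfun : (fun s => (xE s + ε * η s) - xE s) = fun s => ε * η s := by
        funext s; ring
      rw [hfun]
      have hdW : ∀ t ∈ Set.Icc a b,
          derivWithin (fun s => ε * η s) (Set.Icc a b) t = ε * deriv η t := by
        intro t ht
        exact (((hηd t).const_mul ε).hasDerivWithinAt).derivWithin (hUD t ht)
      have hb1 : (⨆ t : Set.Icc a b, |ε * η ↑t|) ≤ |ε| * Mt := by
        apply ciSup_le
        intro t
        rw [abs_mul]
        apply mul_le_mul_of_nonneg_left _ (abs_nonneg ε)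
        have h := hMη t t.2
        rw [Real.norm_eq_abs] at h
        have h2 := abs_nonneg Mη'
        calc |η ↑t| ≤ Mη := h
          _ ≤ |Mη| := le_abs_self _
          _ ≤ Mt := by simp only [hMt]; linarith
      have hb2 : (⨆ t : Set.Icc a b,
          |derivWithin (fun s => ε * η s) (Set.Icc a b) ↑t|) ≤ |ε| * Mt := by
        apply ciSup_le
        intro t
        rw [hdW t t.2, abs_mul]
        apply mul_le_mul_of_nonneg_left _ (abs_nonneg ε)
        have h := hMη' t t.2
        rw [Real.norm_eq_abs] at h
        have h2 := abs_nonneg Mη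
        calc |deriv η ↑t| ≤ Mη' := h
          _ ≤ |Mη'| := le_abs_self _
          _ ≤ Mt := by simp only [hMt]; linarith
      have hle : C1Norm a b (fun s => ε * η s) ≤ |ε| * Mt + |ε| * Mt := by
        rw [C1Norm]
        exact add_le_add hb1 hb2
      have : |ε| * Mt + |ε| * Mt = |ε| * (2 * Mt) := by ring
      rw [this] at hle
      calc C1Norm a b (fun s => ε * η s) ≤ |ε| * (2 * Mt) := hle
        _ < (δ / (2 * Mt)) * (2 * Mt) := by
            apply mul_lt_mul_of_pos_right hε (by positivity)
        _ = δ := by field_simp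
    have hder0 : I1 * F2 xE + F1 xE * I2 = 0 := by
      rcases hext with ⟨δ, hδ, hmin⟩ | ⟨δ, hδ, hmax⟩
      · have hloc : IsLocalMin (fun ε => L (fun s => xE s + ε * η s)) 0 := by
          refine Filter.Eventually.mono (hsmall δ hδ) ?_
          intro ε hε'
          show L (fun s => xE s + (0:ℝ) * η s) ≤ L (fun s => xE s + ε * η s)
          rw [hx0]
          exact hmin _ (hcd ε) (hbv ε) hε'
        exact hloc.hasDerivAt_eq_zero hφd
      · have hloc : IsLocalMax (fun ε => L (fun s => xE s + ε * η s)) 0 := by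
          refine Filter.Eventually.mono (hsmall δ hδ) ?_
          intro ε hε'
          show L (fun s => xE s + ε * η s) ≤ L (fun s => xE s + (0:ℝ) * η s)
          rw [hx0]
          exact hmax _ (hcd ε) (hbv ε) hε'
        exact hloc.hasDerivAt_eq_zero hφd
    linear_combination hder0
  -- clamp to the interval
  set c : ℝ → ℝ := fun t => max a (min t b) with hc
  have hc_cont : Continuous c := continuous_const.max (continuous_id.min continuous_const)
  have hc_mem : ∀ t, c t ∈ Set.Icc a b :=
    fun t => ⟨le_max_left _ _, max_le hab.le (min_le_right t b)⟩
  have hc_id : ∀ t ∈ Set.Icc a b, c t = t := by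
    intro t ht
    simp only [hc]
    rw [min_eq_left ht.2, max_eq_right ht.1]
  have hmapc : Continuous (fun t => ((c t, xE (c t), X (c t)) : ℝ × ℝ × ℝ)) := by
    have hZc : Continuous (fun t => xE (c t)) := hxEc.comp_continuous hc_cont hc_mem
    have hWc : Continuous (fun t => X (c t)) := hXc.comp_continuous hc_cont hc_mem
    exact hc_cont.prodMk (hZc.prodMk hWc)
  have hmemS : ∀ t : ℝ, ((c t, xE (c t), X (c t)) : ℝ × ℝ × ℝ)
      ∈ Set.Icc a b ×ˢ (Set.univ : Set ℝ) ×ˢ (Set.univ : Set ℝ) := by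
    intro t; simp [hc_mem t]
  have h1yc : Continuous (fun t => f1y (c t) (xE (c t)) (X (c t))) :=
    hf1y_cont.comp_continuous hmapc hmemS
  have h1vc : Continuous (fun t => f1v (c t) (xE (c t)) (X (c t))) :=
    hf1v_cont.comp_continuous hmapc hmemS
  have h2yc : Continuous (fun t => f2y (c t) (xE (c t)) (X (c t))) :=
    hf2y_cont.comp_continuous hmapc hmemS
  have h2vc : Continuous (fun t => f2v (c t) (xE (c t)) (X (c t))) :=
    hf2v_cont.comp_continuous hmapc hmemS
  set Gy : ℝ → ℝ := fun t =>
    F2 xE * f1y (c t) (xE (c t)) (X (c t)) + F1 xE * f2y (c t) (xE (c t)) (X (c t)) with hGy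
  set Gv : ℝ → ℝ := fun t =>
    F2 xE * f1v (c t) (xE (c t)) (X (c t)) + F1 xE * f2v (c t) (xE (c t)) (X (c t)) with hGv
  have hGyc : Continuous Gy := (continuous_const.mul h1yc).add (continuous_const.mul h2yc)
  have hGvc : Continuous Gv := (continuous_const.mul h1vc).add (continuous_const.mul h2vc)
  set A : ℝ → ℝ := fun t => ∫ s in a..t, Gy s with hA
  have hAd : ∀ t, HasDerivAt A (Gy t) t :=
    fun t => (hGyc.integral_hasStrictDerivAt a t).hasDerivAt
  have hAc : Continuous A := by
    have : Differentiable ℝ A := fun t => (hAd t).differentiableAt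
    exact this.continuous
  have hAa : A a = 0 := intervalIntegral.integral_same
  have key2 : ∀ η : ℝ → ℝ, ContDiff ℝ 1 η → η b = 0 →
      (∫ t in a..b, (Gv t - A t) * deriv η t) = 0 := by
    intro η hηC1 hηb
    have hηd : ∀ t, HasDerivAt η (deriv η t) t :=
      fun t => ((hηC1.differentiable one_ne_zero) t).hasDerivAt
    have hηc : Continuous η := hηC1.continuous
    have hη'c : Continuous (deriv η) := (contDiff_one_iff_deriv.mp hηC1).2
    have hkey := key η hηC1 hηb
    have hcongr1 : (∫ t in a..b,
          (f1y t (xE t) (X t) * η t + f1v t (xE t) (X t) * deriv η t))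
        = ∫ t in a..b, (f1y (c t) (xE (c t)) (X (c t)) * η t
          + f1v (c t) (xE (c t)) (X (c t)) * deriv η t) := by
      apply intervalIntegral.integral_congr
      intro t ht
      rw [Set.uIcc_of_le hab.le] at ht
      simp only [hc_id t ht]
    have hcongr2 : (∫ t in a..b,
          (f2y t (xE t) (X t) * η t + f2v t (xE t) (X t) * deriv η t))
        = ∫ t in a..b, (f2y (c t) (xE (c t)) (X (c t)) * η t
          + f2v (c t) (xE (c t)) (X (c t)) * deriv η t) := by
      apply intervalIntegral.integral_congr
      intro t ht
      rw [Set.uIcc_of_le hab.le] at ht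
      simp only [hc_id t ht]
    rw [hcongr1, hcongr2] at hkey
    have hint1 : IntervalIntegrable (fun t => F2 xE * (f1y (c t) (xE (c t)) (X (c t)) * η t
        + f1v (c t) (xE (c t)) (X (c t)) * deriv η t)) volume a b :=
      (continuous_const.mul ((h1yc.mul hηc).add (h1vc.mul hη'c))).intervalIntegrable a b
    have hint2 : IntervalIntegrable (fun t => F1 xE * (f2y (c t) (xE (c t)) (X (c t)) * η t
        + f2v (c t) (xE (c t)) (X (c t)) * deriv η t)) volume a b :=
      (continuous_const.mul ((h2yc.mul hηc).add (h2vc.mul hη'c))).intervalIntegrable a b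
    rw [← intervalIntegral.integral_const_mul, ← intervalIntegral.integral_const_mul,
      ← intervalIntegral.integral_add hint1 hint2] at hkey
    have hGrw : (∫ t in a..b, (F2 xE * (f1y (c t) (xE (c t)) (X (c t)) * η t
        + f1v (c t) (xE (c t)) (X (c t)) * deriv η t)
        + F1 xE * (f2y (c t) (xE (c t)) (X (c t)) * η t
        + f2v (c t) (xE (c t)) (X (c t)) * deriv η t)))
        = ∫ t in a..b, (Gy t * η t + Gv t * deriv η t) := by
      apply intervalIntegral.integral_congr
      intro t _
      simp only [hGy, hGv]
      ring
    rw [hGrw] at hkey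
    have hu : ∀ t, HasDerivAt (fun s => A s * η s) (Gy t * η t + A t * deriv η t) t :=
      fun t => (hAd t).mul (hηd t)
    have hparts := intervalIntegral.integral_eq_sub_of_hasDerivAt
      (f := fun s => A s * η s) (f' := fun t => Gy t * η t + A t * deriv η t)
      (fun t _ => hu t)
      (((hGyc.mul hηc).add (hAc.mul hη'c)).intervalIntegrable a b)
    have hzero2 : (∫ t in a..b, (Gy t * η t + A t * deriv η t)) = 0 := by
      rw [hparts]
      show A b * η b - A a * η a = 0
      rw [hηb, hAa]
      ring
    have hsplit : (∫ t in a..b, (Gv t - A t) * deriv η t)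
        = (∫ t in a..b, (Gy t * η t + Gv t * deriv η t))
          - (∫ t in a..b, (Gy t * η t + A t * deriv η t)) := by
      rw [← intervalIntegral.integral_sub (f := fun t => Gy t * η t + Gv t * deriv η t)
        (g := fun t => Gy t * η t + A t * deriv η t)
        (((hGyc.mul hηc).add (hGvc.mul hη'c)).intervalIntegrable a b)
        (((hGyc.mul hηc).add (hAc.mul hη'c)).intervalIntegrable a b)]
      apply intervalIntegral.integral_congr
      intro t _
      ring
    rw [hsplit, hkey, hzero2]
    ring
  have hψa : Gv a - A a = 0 := by
    apply zero_at_left_aux a b hab _ (hGvc.sub hAc)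
    intro g hg hgc hgs
    set η : ℝ → ℝ := fun t => ∫ s in b..t, g s with hηdef
    have hηd : ∀ t, HasDerivAt η (g t) t :=
      fun t => (hg.continuous.integral_hasStrictDerivAt b t).hasDerivAt
    have hηderiv : deriv η = g := funext fun t => (hηd t).deriv
    have hηC1 : ContDiff ℝ 1 η := by
      rw [contDiff_one_iff_deriv]
      exact ⟨fun t => (hηd t).differentiableAt, by rw [hηderiv]; exact hg.continuous⟩
    have hηb : η b = 0 := intervalIntegral.integral_same
    have hk := key2 η hηC1 hηb
    rw [hηderiv] at hk
    rw [← hk]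
    apply intervalIntegral.integral_congr
    intro t _
    simp only [Pi.sub_apply]; ring
  have hGva : Gv a = 0 := by rw [hAa] at hψa; linarith
  have hca : c a = a := hc_id a ⟨le_refl a, hab.le⟩
  rw [hGv] at hGva
  simp only [hca] at hGva
  exact hGva
end
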